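/- arXiv:1003.5087 — 12 statements merged into one kernel-verified Lean document; each statement's English description precedes it below -/
import Mathlib

section
/- If X and Y are finite metric spaces each with n points and d_GH(X,Y) < (1/2)·cdm(Y), then there exist enumerations x_1,…,x_n of X and y_1,…,y_n of Y such that (1/2)·max_{i,j} |d_X(x_i,x_j) − d_Y(y_i,y_j)| ≤ d_GH(X,Y). -/
open GromovHausdorff

/-- If `X` and `Y` are `n`-point metric spaces with `d_GH(X,Y) < (1/2) cdm(Y)`, then the points
can be enumerated so that `(1/2) max |d_X(x_i,x_j) - d_Y(y_i,y_j)| ≤ d_GH(X,Y)`. -/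
theorem exists_enumerations_of_ghDist_lt_half_codiam (n : ℕ) (X Y : Type*)
    [MetricSpace X] [MetricSpace Y] [Fintype X] [Fintype Y] [Nonempty X] [Nonempty Y]
    (hX : Fintype.card X = n) (hY : Fintype.card Y = n)
    (h : ghDist X Y < (1 / 2) * sInf {d : ℝ | ∃ y y' : Y, y ≠ y' ∧ d = dist y y'}) :
    ∃ (e₁ : Fin n ≃ X) (e₂ : Fin n ≃ Y), ∀ i j : Fin n,
      (1 / 2) * |dist (e₁ i) (e₁ j) - dist (e₂ i) (e₂ j)| ≤ ghDist X Y := by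
  classical
  set cdm := sInf {d : ℝ | ∃ y y' : Y, y ≠ y' ∧ d = dist y y'} with hcdm
  have hcdm_le : ∀ y y' : Y, y ≠ y' → cdm ≤ dist y y' := by
    intro y y' hne
    apply csInf_le
    · exact ⟨0, fun d hd => by obtain ⟨a, b, -, rfl⟩ := hd; exact dist_nonneg⟩
    · exact ⟨y, y', hne, rfl⟩
  set Φ := optimalGHInjl X Y with hΦdef
  set Ψ := optimalGHInjr X Y with hΨdef
  have hΦ := isometry_optimalGHInjl X Y
  have hΨ := isometry_optimalGHInjr X Y
  have hcΦ : IsCompact (Set.range Φ) := isCompact_range hΦ.continuous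
  have hcΨ : IsCompact (Set.range Ψ) := isCompact_range hΨ.continuous
  have hneΦ : (Set.range Φ).Nonempty := Set.range_nonempty _
  have hneΨ : (Set.range Ψ).Nonempty := Set.range_nonempty _
  have hne_top : EMetric.hausdorffEdist (Set.range Φ) (Set.range Ψ) ≠ ⊤ :=
    Metric.hausdorffEdist_ne_top_of_nonempty_of_bounded hneΦ hneΨ
      hcΦ.isBounded hcΨ.isBounded
  have hHD : Metric.hausdorffDist (Set.range Φ) (Set.range Ψ) = ghDist X Y :=
    hausdorffDist_optimal (X := X) (Y := Y)
  have hchoice : ∀ x : X, ∃ y : Y, dist (Φ x) (Ψ y) ≤ ghDist X Y := by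
    intro x
    obtain ⟨z, hz, hzd⟩ := hcΨ.exists_infDist_eq_dist hneΨ (Φ x)
    obtain ⟨y, rfl⟩ := hz
    refine ⟨y, ?_⟩
    rw [← hzd, ← hHD]
    exact Metric.infDist_le_hausdorffDist_of_mem (Set.mem_range_self x) hne_top
  choose f hf using hchoice
  have hsurj : Function.Surjective f := by
    intro y
    obtain ⟨z, hz, hzd⟩ := hcΦ.exists_infDist_eq_dist hneΦ (Ψ y)
    obtain ⟨x, rfl⟩ := hz
    have hxy : dist (Φ x) (Ψ y) ≤ ghDist X Y := by
      rw [dist_comm, ← hzd, ← hHD, Metric.hausdorffDist_comm]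
      exact Metric.infDist_le_hausdorffDist_of_mem (Set.mem_range_self y)
        (by rw [EMetric.hausdorffEdist_comm]; exact hne_top)
    refine ⟨x, ?_⟩
    by_contra hne
    have h1 : dist (f x) y ≤ ghDist X Y + ghDist X Y := by
      have := dist_triangle (Ψ (f x)) (Φ x) (Ψ y)
      rw [hΨ.dist_eq] at this
      calc dist (f x) y ≤ dist (Ψ (f x)) (Φ x) + dist (Φ x) (Ψ y) := this
        _ ≤ ghDist X Y + ghDist X Y := by
            rw [dist_comm]; exact add_le_add (hf x) hxy
    have h2 : dist (f x) y < cdm := by nlinarith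
    exact absurd (hcdm_le _ _ hne) (not_le.2 h2)
  have hbij : Function.Bijective f :=
    (Fintype.bijective_iff_surjective_and_card f).2 ⟨hsurj, hX.trans hY.symm⟩
  refine ⟨(Fintype.equivFinOfCardEq hX).symm,
    (Fintype.equivFinOfCardEq hX).symm.trans (Equiv.ofBijective f hbij), ?_⟩
  intro i j
  set x := (Fintype.equivFinOfCardEq hX).symm i
  set x' := (Fintype.equivFinOfCardEq hX).symm j
  have key : |dist x x' - dist (f x) (f x')| ≤ ghDist X Y + ghDist X Y := by
    have h1 : dist (dist (Φ x) (Φ x')) (dist (Ψ (f x)) (Ψ (f x'))) ≤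
        dist (Φ x) (Ψ (f x)) + dist (Φ x') (Ψ (f x')) := dist_dist_dist_le _ _ _ _
    rw [hΦ.dist_eq, hΨ.dist_eq, Real.dist_eq] at h1
    exact h1.trans (add_le_add (hf x) (hf x'))
  simp only [Equiv.trans_apply, Equiv.ofBijective_apply]
  linarith [key]
end

section
/- Totally anisometric compact metric spaces with no three pairwise distinct collinear points are dense in the Gromov-Hausdorff space. -/
open GromovHausdorff

/-- A metric space is totally anisometric if distinct unordered pairs of points have
distinct distances. -/
def TotallyAnisometric (X : Type*) [MetricSpace X] : Prop :=
  ∀ x y x' y' : X, dist x y = dist x' y' → 0 < dist x y →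
    (x = x' ∧ y = y') ∨ (x = y' ∧ y = x')

/-- A metric space has no collinear triple if for pairwise distinct points `x, y, z`, no
distance is the sum of the two others. -/
def NoCollinearTriple (X : Type*) [MetricSpace X] : Prop :=
  ∀ x y z : X, x ≠ y → y ≠ z → x ≠ z → dist x z + dist z y ≠ dist x y


/-- Generic perturbation: we can pick values in `Ioo a b` making `g + c` injective on `s`. -/
lemma exists_generic_perturb {ι : Type*} [DecidableEq ι] (s : Finset ι) (g : ι → ℝ)
    {a b : ℝ} (hab : a < b) :
    ∃ c : ι → ℝ, (∀ i, c i ∈ Set.Ioo a b) ∧ Set.InjOn (fun i => g i + c i) s := by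
  classical
  induction s using Finset.induction_on with
  | empty =>
      exact ⟨fun _ => (a + b) / 2, fun _ => ⟨by linarith, by linarith⟩, by simp⟩
  | @insert x s hx ih =>
      obtain ⟨c, hc, hinj⟩ := ih
      have hfin : ((fun i => g i + c i) '' ↑s).Finite := s.finite_toSet.image _
      have hfin2 : ((fun v => v - g x) '' ((fun i => g i + c i) '' ↑s)).Finite :=
        hfin.image _
      obtain ⟨v, hv, hvB⟩ := (Set.Ioo_infinite hab).exists_notMem_finite hfin2
      refine ⟨Function.update c x v, ?_, ?_⟩
      · intro i
        rcases eq_or_ne i x with rfl | h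
        · simpa using hv
        · simpa [Function.update_apply, h] using hc i
      · intro i hi j hj hij
        simp only [Finset.coe_insert, Set.mem_insert_iff, Finset.mem_coe] at hi hj
        have key : ∀ y ∈ s, ¬(g x + v = g y + c y) := by
          intro y hy h
          exact hvB ⟨g y + c y, ⟨y, by simpa using hy, rfl⟩, show g y + c y - g x = v by linarith⟩
        rcases hi with rfl | hi <;> rcases hj with rfl | hj
        · rfl
        · exfalso
          apply key j hj
          have hjx : j ≠ i := by rintro rfl; exact hx hj
          simpa [Function.update_apply, hjx] using hij
        · exfalso
          apply key i hi
          have hix : i ≠ j := by rintro rfl; exact hx hi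
          simpa [Function.update_apply, hix] using hij.symm
        · have hix : i ≠ x := by rintro rfl; exact hx hi
          have hjx : j ≠ x := by rintro rfl; exact hx hj
          simp only [Function.update_apply, hix, hjx, if_false] at hij
          exact hinj hi hj hij

lemma min_max_pair_eq {α : Type*} [LinearOrder α] {a b c d : α}
    (h1 : min a b = min c d) (h2 : max a b = max c d) :
    (a = c ∧ b = d) ∨ (a = d ∧ b = c) := by
  rcases le_total a b with hab | hab <;> rcases le_total c d with hcd | hcd <;>
    simp only [min_eq_left, min_eq_right, max_eq_right, max_eq_left, hab, hcd] at h1 h2 <;>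
    [exact Or.inl ⟨h1, h2⟩; exact Or.inr ⟨h1, h2⟩; exact Or.inr ⟨h2, h1⟩;
     exact Or.inl ⟨h2, h1⟩]

lemma totallyAnisometric_of_isometryEquiv {X Y : Type*} [MetricSpace X] [MetricSpace Y]
    (f : X ≃ᵢ Y) (h : TotallyAnisometric X) : TotallyAnisometric Y := by
  intro x y x' y' hd hpos
  have := h (f.symm x) (f.symm y) (f.symm x') (f.symm y')
    (by rwa [f.symm.isometry.dist_eq, f.symm.isometry.dist_eq])
    (by rwa [f.symm.isometry.dist_eq])
  rcases this with ⟨h1, h2⟩ | ⟨h1, h2⟩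
  · exact Or.inl ⟨f.symm.injective h1, f.symm.injective h2⟩
  · exact Or.inr ⟨f.symm.injective h1, f.symm.injective h2⟩

lemma noCollinearTriple_of_isometryEquiv {X Y : Type*} [MetricSpace X] [MetricSpace Y]
    (f : X ≃ᵢ Y) (h : NoCollinearTriple X) : NoCollinearTriple Y := by
  intro x y z hxy hyz hxz
  have := h (f.symm x) (f.symm y) (f.symm z)
    (fun e => hxy (f.symm.injective e)) (fun e => hyz (f.symm.injective e))
    (fun e => hxz (f.symm.injective e))
  simpa [f.symm.isometry.dist_eq] using this

/-- A wrapper around `Fin n` on which we can install a custom metric. -/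
def FinSpace (n : ℕ) : Type := Fin n

instance (n : ℕ) : Fintype (FinSpace n) := Fin.fintype n
instance (n : ℕ) : LinearOrder (FinSpace n) := Fin.instLinearOrder
instance (n : ℕ) : DecidableEq (FinSpace n) := instDecidableEqFin n

/-- Totally anisometric spaces without collinear triples are dense in the
Gromov-Hausdorff space. -/
theorem dense_anisometric_noCollinear :
    Dense {p : GHSpace | TotallyAnisometric p.Rep ∧ NoCollinearTriple p.Rep} := by
  classical
  rw [Metric.dense_iff]
  intro p ε hε
  have hη : (0:ℝ) < ε / 4 := by linarith
  -- a finite (ε/4)-net in `p.Rep`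
  obtain ⟨t, htfin, htcov⟩ :=
    (Metric.totallyBounded_iff.1 (isCompact_univ (X := p.Rep)).totallyBounded) (ε/4) hη
  letI := htfin.fintype
  obtain ⟨x0⟩ := (inferInstance : Nonempty p.Rep)
  obtain ⟨y0, hy0t, -⟩ := Set.mem_iUnion₂.1 (htcov (Set.mem_univ x0))
  set n := Fintype.card ↥t with hn
  have e : ↥t ≃ Fin n := Fintype.equivFin ↥t
  haveI : Nonempty (FinSpace n) := ⟨e ⟨y0, hy0t⟩⟩
  -- the base distances and their generic perturbation
  set D : Fin n → Fin n → ℝ := fun i j => dist (e.symm i : p.Rep) (e.symm j : p.Rep) with hD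
  have hDsymm : ∀ i j, D i j = D j i := fun i j => dist_comm _ _
  have hDnn : ∀ i j, 0 ≤ D i j := fun i j => dist_nonneg
  have hDtri : ∀ i j k, D i j ≤ D i k + D k j := fun i j k => dist_triangle _ _ _
  set pairs : Finset (Fin n × Fin n) := Finset.univ.filter (fun q => q.1 < q.2) with hpairs
  obtain ⟨c, hc, hinj⟩ :=
    exists_generic_perturb pairs (fun q => D q.1 q.2 / (ε/4)) (one_lt_two (α := ℝ))
  set pr : Fin n → Fin n → Fin n × Fin n := fun i j => (min i j, max i j) with hpr
  have hprmem : ∀ i j, i ≠ j → pr i j ∈ pairs := by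
    intro i j hij
    simp only [hpairs, Finset.mem_filter, Finset.mem_univ, true_and, hpr]
    exact min_lt_max.2 hij
  have hprsymm : ∀ i j, pr i j = pr j i := by
    intro i j; simp [hpr, min_comm, max_comm]
  have hDpr : ∀ i j, D (pr i j).1 (pr i j).2 = D i j := by
    intro i j
    rcases le_total i j with h | h
    · simp [hpr, min_eq_left h, max_eq_right h]
    · simp [hpr, min_eq_right h, max_eq_left h, hDsymm i j]
  set dY : Fin n → Fin n → ℝ :=
    fun i j => if i = j then 0 else D i j + (ε/4) * c (pr i j) with hdY
  have hdYval : ∀ i j, i ≠ j → dY i j = D i j + (ε/4) * c (pr i j) := by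
    intro i j h; simp [hdY, h]
  have hcpos : ∀ q, 1 < c q := fun q => (hc q).1
  have hclt : ∀ q, c q < 2 := fun q => (hc q).2
  have hdYnn : ∀ i j, 0 ≤ dY i j := by
    intro i j
    rcases eq_or_ne i j with rfl | h
    · simp [hdY]
    · rw [hdYval i j h]
      have := hcpos (pr i j)
      nlinarith [hDnn i j]
  have hdYpos : ∀ i j, i ≠ j → 0 < dY i j := by
    intro i j h
    rw [hdYval i j h]
    have := hcpos (pr i j)
    nlinarith [hDnn i j]
  have hdYsymm : ∀ i j, dY i j = dY j i := by
    intro i j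
    rcases eq_or_ne i j with rfl | h
    · rfl
    · rw [hdYval i j h, hdYval j i (Ne.symm h), hDsymm i j, hprsymm i j]
  have hdYtri_strict : ∀ i j k, i ≠ j → j ≠ k → i ≠ k → dY i j < dY i k + dY k j := by
    intro i j k hij hjk hik
    rw [hdYval i j hij, hdYval i k hik, hdYval k j (Ne.symm hjk)]
    have h1 := hcpos (pr i k)
    have h2 := hcpos (pr k j)
    have h3 := hclt (pr i j)
    have h4 := hDtri i j k
    nlinarith
  have hdYtri : ∀ i j k, dY i j ≤ dY i k + dY k j := by
    intro i j k
    rcases eq_or_ne i j with rfl | hij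
    · rw [show dY i i = 0 from by simp [hdY]]
      have := hdYnn i k; have := hdYnn k i; linarith
    rcases eq_or_ne i k with rfl | hik
    · rw [show dY i i = 0 from by simp [hdY]]; linarith
    rcases eq_or_ne j k with rfl | hjk
    · rw [show dY j j = 0 from by simp [hdY]]; linarith
    · exact le_of_lt (hdYtri_strict i j k hij hjk hik)
  -- install the metric on the wrapper type
  letI mY : MetricSpace (FinSpace n) :=
    { dist := dY
      dist_self := fun i => by simp [hdY]; exact fun h => absurd rfl h
      dist_comm := hdYsymm
      dist_triangle := fun x y z => hdYtri x z y
      eq_of_dist_eq_zero := by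
        intro i j h
        by_contra hij
        exact absurd h (ne_of_gt (hdYpos i j hij)) }
  haveI : CompactSpace (FinSpace n) := Finite.compactSpace
  have hdist : ∀ i j : FinSpace n, dist i j = dY i j := fun _ _ => rfl
  -- key properties of the perturbed space
  have hTA : TotallyAnisometric (FinSpace n) := by
    intro x y x' y' hd hpos
    have hxy : x ≠ y := by
      rintro rfl; rw [dist_self] at hpos; exact lt_irrefl _ hpos
    have hxy' : x' ≠ y' := by
      rintro rfl; rw [hd, dist_self] at hpos; exact lt_irrefl _ hpos
    rw [hdist, hdist, hdYval x y hxy, hdYval x' y' hxy'] at hd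
    have hp : pr x y = pr x' y' := by
      apply hinj (hprmem x y hxy) (hprmem x' y' hxy')
      have hne : (ε/4) ≠ 0 := ne_of_gt hη
      dsimp only
      have h1 := hDpr x y; have h2 := hDpr x' y'
      field_simp
      linarith
    have h1 : min x y = min x' y' := congrArg Prod.fst hp
    have h2 : max x y = max x' y' := congrArg Prod.snd hp
    exact min_max_pair_eq h1 h2
  have hNC : NoCollinearTriple (FinSpace n) := by
    intro x y z hxy hyz hxz
    have := hdYtri_strict x y z hxy hyz hxz
    rw [hdist, hdist, hdist]
    intro h
    rw [h] at this
    exact lt_irrefl _ this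
  -- the Gromov-Hausdorff distance bound
  set Φ : ↥t → FinSpace n := fun z => e z with hΦ
  have hs : ∀ x : p.Rep, ∃ y ∈ t, dist x y ≤ ε/4 := by
    intro x
    obtain ⟨y, hyt, hy⟩ := Set.mem_iUnion₂.1 (htcov (Set.mem_univ x))
    exact ⟨y, hyt, le_of_lt (Metric.mem_ball.1 hy)⟩
  have hs' : ∀ x : FinSpace n, ∃ z : ↥t, dist x (Φ z) ≤ 0 := by
    intro x
    refine ⟨e.symm x, ?_⟩
    simp [hΦ, Equiv.apply_symm_apply]
    exact le_of_eq ((congrArg (dist x) (e.apply_symm_apply x)).trans (dist_self x))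
  have hH : ∀ x y : ↥t, |dist x y - dist (Φ x) (Φ y)| ≤ ε/2 := by
    intro x y
    rcases eq_or_ne x y with rfl | hxy
    · simp; linarith
    have hexy : (e x : Fin n) ≠ e y := fun h => hxy (e.injective h)
    have hΦd : dist (Φ x) (Φ y) = dist (x : p.Rep) (y : p.Rep) + (ε/4) * c (pr (e x) (e y)) := by
      rw [hdist, hdYval _ _ hexy]
      simp [hD, Equiv.symm_apply_apply, Subtype.dist_eq]
    rw [hΦd, Subtype.dist_eq]
    have h1 := hcpos (pr (e x) (e y))
    have h2 := hclt (pr (e x) (e y))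
    rw [abs_le]
    constructor <;> nlinarith
  have hgh : ghDist p.Rep (FinSpace n) ≤ ε/4 + (ε/2)/2 + 0 :=
    ghDist_le_of_approx_subsets Φ hs hs' hH
  refine ⟨toGHSpace (FinSpace n), ?_, ?_⟩
  · rw [Metric.mem_ball]
    have : dist (toGHSpace (FinSpace n)) p = ghDist p.Rep (FinSpace n) := by
      rw [dist_comm]
      conv_lhs => rw [← p.toGHSpace_rep]
      rfl
    rw [this]
    linarith
  · have hiso : Nonempty (FinSpace n ≃ᵢ (toGHSpace (FinSpace n)).Rep) := by
      rw [← toGHSpace_eq_toGHSpace_iff_isometryEquiv]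
      exact ((toGHSpace (FinSpace n)).toGHSpace_rep).symm
    obtain ⟨f⟩ := hiso
    exact ⟨totallyAnisometric_of_isometryEquiv f hTA,
      noCollinearTriple_of_isometryEquiv f hNC⟩
end

section
/- A generic compact metric space is totally disconnected; that is, the set of totally disconnected compact metric spaces is residual in the Gromov-Hausdorff space. -/
open GromovHausdorff Metric Set Relation

namespace ResidualTD

/-- The chain relation at scale `δ`. -/
def Chain {X : Type*} [MetricSpace X] (δ : ℝ) : X → X → Prop :=
  ReflTransGen (fun a b => dist a b ≤ δ)

/-- The quantitative open condition at scale `ε`. -/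
def O (ε : ℝ) : Set GHSpace :=
  {p | ∃ δ > 0, ∀ x y : p.Rep, Chain δ x y → dist x y ≤ ε - 4 * δ}

/-- Any connected set is δ-chain connected. -/
theorem chain_of_preconnected {X : Type*} [MetricSpace X] {s : Set X}
    (hs : IsPreconnected s) {x y : X} (hx : x ∈ s) (hy : y ∈ s) {δ : ℝ} (hδ : 0 < δ) :
    Chain δ x y := by
  set u : Set X := {w | Chain δ x w} with hu
  have hustep : ∀ w w', w ∈ u → dist w w' ≤ δ → w' ∈ u := fun w w' hw hd =>
    ReflTransGen.tail hw hd
  have huo : IsOpen u := by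
    rw [Metric.isOpen_iff]
    intro w hw
    exact ⟨δ, hδ, fun w' hw' => hustep w w' hw (le_of_lt (by rwa [mem_ball, dist_comm] at hw'))⟩
  have huco : IsOpen uᶜ := by
    rw [Metric.isOpen_iff]
    intro w hw
    refine ⟨δ, hδ, fun w' hw' => ?_⟩
    intro hw'u
    exact hw (hustep w' w hw'u (le_of_lt (by rwa [mem_ball] at hw')))
  by_contra hyu
  have hcov : s ⊆ u ∪ uᶜ := by simp
  rcases hs u uᶜ huo huco hcov ⟨x, hx, ReflTransGen.refl⟩ ⟨y, hy, hyu⟩ with ⟨z, _, hz1, hz2⟩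
  exact hz2 hz1

theorem isOpen_O (ε : ℝ) : IsOpen (O ε) := by
  rw [Metric.isOpen_iff]
  rintro q ⟨δ, hδ, hq⟩
  refine ⟨δ / 8, by linarith, fun z hz => ?_⟩
  rw [mem_ball, dist_comm, dist_ghDist] at hz
  set Y := q.Rep
  set Z := z.Rep
  -- the optimal coupling of Y and Z
  have hhd : hausdorffDist (range (optimalGHInjl Y Z)) (range (optimalGHInjr Y Z)) < δ / 4 := by
    rw [hausdorffDist_optimal]; linarith
  have hne : EMetric.hausdorffEdist (range (optimalGHInjl Y Z)) (range (optimalGHInjr Y Z)) ≠ ⊤ := by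
    apply Metric.hausdorffEdist_ne_top_of_nonempty_of_bounded (range_nonempty _) (range_nonempty _)
    · exact (isCompact_range (isometry_optimalGHInjl Y Z).continuous).isBounded
    · exact (isCompact_range (isometry_optimalGHInjr Y Z).continuous).isBounded
  have hf : ∀ w : Z, ∃ y : Y, dist (optimalGHInjl Y Z y) (optimalGHInjr Y Z w) ≤ δ / 4 := by
    intro w
    obtain ⟨c, hc, hcd⟩ := exists_dist_lt_of_hausdorffDist_lt' (mem_range_self w) hhd hne
    obtain ⟨y, rfl⟩ := hc
    exact ⟨y, hcd.le⟩
  choose f hfd using hf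
  have key : ∀ w w' : Z, dist (f w) (f w') ≤ dist w w' + δ / 2 ∧
      dist w w' ≤ dist (f w) (f w') + δ / 2 := by
    intro w w'
    have h1 : dist (f w) (f w') = dist (optimalGHInjl Y Z (f w)) (optimalGHInjl Y Z (f w')) :=
      ((isometry_optimalGHInjl Y Z).dist_eq _ _).symm
    have h2 : dist w w' = dist (optimalGHInjr Y Z w) (optimalGHInjr Y Z w') :=
      ((isometry_optimalGHInjr Y Z).dist_eq _ _).symm
    have t1 := dist_triangle4 (optimalGHInjl Y Z (f w)) (optimalGHInjr Y Z w)
      (optimalGHInjr Y Z w') (optimalGHInjl Y Z (f w'))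
    have t2 := dist_triangle4 (optimalGHInjr Y Z w) (optimalGHInjl Y Z (f w))
      (optimalGHInjl Y Z (f w')) (optimalGHInjr Y Z w')
    have e1 := hfd w
    have e2 := hfd w'
    rw [dist_comm (optimalGHInjr Y Z w') (optimalGHInjl Y Z (f w'))] at t1
    rw [dist_comm (optimalGHInjr Y Z w) (optimalGHInjl Y Z (f w))] at t2
    constructor
    · linarith
    · linarith
  refine ⟨δ / 2, by linarith, fun w w' hchain => ?_⟩
  have hlift : Chain δ (f w) (f w') := by
    induction hchain with
    | refl => exact ReflTransGen.refl
    | @tail b c _ hbc ih =>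
      refine ReflTransGen.tail ih ?_
      have hk := (key b c).1
      linarith
  have := hq _ _ hlift
  have h2 := (key w w').2
  linarith

theorem finite_mem_O {p : GHSpace} (hfin : Finite p.Rep) {ε : ℝ} (hε : 0 < ε) : p ∈ O ε := by
  -- find δ below the minimal positive distance
  have : ∃ δ > 0, 8 * δ ≤ ε ∧ ∀ x y : p.Rep, dist x y ≤ δ → x = y := by
    by_cases hne : Nonempty {q : p.Rep × p.Rep // q.1 ≠ q.2}
    · have : Finite {q : p.Rep × p.Rep // q.1 ≠ q.2} := Subtype.finite
      obtain ⟨⟨⟨a, b⟩, hab⟩, hmin⟩ :=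
        Finite.exists_min (fun q : {q : p.Rep × p.Rep // q.1 ≠ q.2} => dist q.1.1 q.1.2)
      have hm : 0 < dist a b := dist_pos.2 hab
      refine ⟨min (dist a b / 2) (ε / 8), by positivity, ?_, ?_⟩
      · calc 8 * min (dist a b / 2) (ε / 8) ≤ 8 * (ε / 8) := by
              have := min_le_right (dist a b / 2) (ε / 8); linarith
          _ = ε := by ring
      · intro x y hxy
        by_contra hne'
        have := hmin ⟨⟨x, y⟩, hne'⟩
        have h2 := min_le_left (dist a b / 2) (ε / 8)
        simp only at this
        linarith
    · refine ⟨ε / 8, by positivity, by linarith, fun x y _ => ?_⟩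
      by_contra h
      exact hne ⟨⟨⟨x, y⟩, h⟩⟩
  obtain ⟨δ, hδ, hδε, hsep⟩ := this
  refine ⟨δ, hδ, fun x y hchain => ?_⟩
  have hxy : x = y := by
    induction hchain with
    | refl => rfl
    | tail _ hbc ih => exact ih.trans (hsep _ _ hbc)
  rw [hxy, dist_self]
  linarith

theorem dense_O {ε : ℝ} (hε : 0 < ε) : Dense (O ε) := by
  rw [Metric.dense_iff]
  intro p r hr
  -- take a finite (r/2)-net in p.Rep
  obtain ⟨s, hsfin, hscov⟩ := (Metric.totallyBounded_iff).1
    (isCompact_univ (X := p.Rep)).totallyBounded (r / 2) (by linarith)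
  have hsne : s.Nonempty := by
    rcases (univ_nonempty (α := p.Rep)) with ⟨x, -⟩
    have := hscov (mem_univ x)
    simp only [mem_iUnion] at this
    obtain ⟨y, hy, -⟩ := this
    exact ⟨y, hy⟩
  haveI : Nonempty s := hsne.to_subtype
  haveI : Finite s := hsfin
  haveI : CompactSpace s := Finite.compactSpace
  set q := toGHSpace s with hq
  refine ⟨q, mem_ball.2 ?_, ?_⟩
  · -- dist q p < r
    have h1 : ghDist (s : Set p.Rep) p.Rep = dist q p := by
      unfold ghDist
      rw [p.toGHSpace_rep]
    have h2 : ghDist (s : Set p.Rep) p.Rep ≤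
        hausdorffDist (range ((↑) : s → p.Rep)) (range (id : p.Rep → p.Rep)) :=
      ghDist_le_hausdorffDist isometry_subtype_coe isometry_id
    have h3 : hausdorffDist (range ((↑) : s → p.Rep)) (range (id : p.Rep → p.Rep)) ≤ r / 2 := by
      refine hausdorffDist_le_of_mem_dist (by linarith) ?_ ?_
      · rintro _ ⟨x, rfl⟩
        exact ⟨(x : p.Rep), mem_range_self _, by simp; linarith⟩
      · rintro _ ⟨x, rfl⟩
        have := hscov (mem_univ (id x))
        simp only [mem_iUnion] at this
        obtain ⟨y, hy, hxy⟩ := this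
        exact ⟨y, ⟨⟨y, hy⟩, rfl⟩, by rw [mem_ball] at hxy; simp only [id] at hxy ⊢; linarith [dist_comm x y]⟩
    rw [← h1]; linarith
  · -- q ∈ O ε : q.Rep is finite
    apply finite_mem_O _ hε
    have : toGHSpace q.Rep = toGHSpace s := by rw [q.toGHSpace_rep]
    obtain ⟨e⟩ := (toGHSpace_eq_toGHSpace_iff_isometryEquiv).1 this
    exact Finite.of_equiv s e.toEquiv.symm

end ResidualTD

/-- A generic compact metric space is totally disconnected. -/
theorem residual_totallyDisconnected :
    {p : GHSpace | TotallyDisconnectedSpace p.Rep} ∈ residual GHSpace := by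
  apply Filter.mem_of_superset
    ((countable_iInter_mem (l := residual GHSpace)).2 fun n : ℕ =>
      residual_of_dense_open (ResidualTD.isOpen_O (1 / (n + 1)))
        (ResidualTD.dense_O (by positivity)))
  intro p hp
  simp only [Set.mem_iInter] at hp
  simp only [Set.mem_setOf_eq]
  rw [totallyDisconnectedSpace_iff_connectedComponent_singleton]
  intro x
  apply Set.eq_singleton_iff_unique_mem.2 ⟨mem_connectedComponent, fun y hy => ?_⟩
  have hdist : ∀ n : ℕ, dist x y ≤ 1 / (n + 1) := by
    intro n
    obtain ⟨δ, hδ, hn⟩ := hp n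
    have hchain : ResidualTD.Chain δ x y :=
      ResidualTD.chain_of_preconnected isPreconnected_connectedComponent
        mem_connectedComponent hy hδ
    have := hn _ _ hchain
    linarith
  have : dist x y ≤ 0 := by
    by_contra h
    push_neg at h
    obtain ⟨n, hn⟩ := exists_nat_one_div_lt h
    exact absurd (hdist n) (by linarith)
  have := dist_nonneg (x := x) (y := y)
  have : dist x y = 0 := le_antisymm ‹dist x y ≤ 0› dist_nonneg
  exact (dist_eq_zero.1 this).symm
end

section
/- For each n ∈ ℕ, the set of compact metric spaces admitting a connected component of diameter at least 1/n is closed in the Gromov-Hausdorff space. -/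
open GromovHausdorff Metric Filter Topology Set

private lemma chain_of_preconnected {X : Type*} [PseudoMetricSpace X] {C : Set X}
    (hC : IsPreconnected C) {a b : X} (ha : a ∈ C) (hb : b ∈ C) {ε : ℝ} (hε : 0 < ε) :
    Relation.ReflTransGen (fun u v : X => dist u v ≤ ε) a b := by
  by_contra hab
  set R := Relation.ReflTransGen (fun u v : X => dist u v ≤ ε) with hR
  set S : Set X := {z | z ∈ C ∧ R a z} with hS
  set U : Set X := ⋃ z ∈ S, ball z ε with hU
  set V : Set X := ⋃ z ∈ C \ S, ball z ε with hV
  have hUo : IsOpen U := isOpen_biUnion fun _ _ => isOpen_ball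
  have hVo : IsOpen V := isOpen_biUnion fun _ _ => isOpen_ball
  have hcover : C ⊆ U ∪ V := by
    intro w hw
    by_cases h : R a w
    · exact Or.inl (mem_biUnion (show w ∈ S from ⟨hw, h⟩) (mem_ball_self hε))
    · exact Or.inr (mem_biUnion (show w ∈ C \ S from ⟨hw, fun hs => h hs.2⟩) (mem_ball_self hε))
  have h1 : (C ∩ U).Nonempty :=
    ⟨a, ha, mem_biUnion (show a ∈ S from ⟨ha, Relation.ReflTransGen.refl⟩) (mem_ball_self hε)⟩
  have h2 : (C ∩ V).Nonempty :=
    ⟨b, hb, mem_biUnion (show b ∈ C \ S from ⟨hb, fun hs => hab hs.2⟩) (mem_ball_self hε)⟩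
  obtain ⟨w, hwC, hwU, hwV⟩ := hC U V hUo hVo hcover h1 h2
  obtain ⟨z, hzS, hwz⟩ := mem_iUnion₂.1 hwU
  obtain ⟨z', hz'S, hwz'⟩ := mem_iUnion₂.1 hwV
  have hwzd : dist z w ≤ ε := by rw [dist_comm]; exact (mem_ball.1 hwz).le
  have hwz'd : dist w z' ≤ ε := (mem_ball.1 hwz').le
  exact hz'S.2 ⟨hz'S.1, (hzS.2.tail hwzd).tail hwz'd⟩

private lemma mem_connectedComponent_of_chains {Y : Type*} [MetricSpace Y] [CompactSpace Y]
    {y z : Y} (h : ∀ ε : ℝ, 0 < ε → Relation.ReflTransGen (fun u v : Y => dist u v ≤ ε) y z) :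
    z ∈ connectedComponent y := by
  rw [connectedComponent_eq_iInter_isClopen]
  refine mem_iInter.2 fun W => ?_
  obtain ⟨Z, hZ, hyZ⟩ := W
  obtain ⟨δ, hδ, hth⟩ := hZ.isClosed.isCompact.exists_thickening_subset_open hZ.isOpen subset_rfl
  have main : ∀ {u v : Y},
      Relation.ReflTransGen (fun u v : Y => dist u v ≤ δ / 2) u v → u ∈ Z → v ∈ Z := by
    intro u v huv hu
    induction huv with
    | refl => exact hu
    | tail _ hstep ih =>
      exact hth (Metric.mem_thickening_iff.2
        ⟨_, ih, by rw [dist_comm]; exact lt_of_le_of_lt hstep (by linarith)⟩)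
  exact main (h (δ / 2) (by linarith)) hyZ

private lemma chain_map {α β : Type*} [PseudoMetricSpace α] [PseudoMetricSpace β]
    (f : α → β) {D ε : ℝ} (hf : ∀ a b : α, dist (f a) (f b) ≤ dist a b + D)
    {x y : α} (h : Relation.ReflTransGen (fun u v : α => dist u v ≤ ε) x y) :
    Relation.ReflTransGen (fun u v : β => dist u v ≤ ε + D) (f x) (f y) := by
  induction h with
  | refl => exact Relation.ReflTransGen.refl
  | tail _ hstep ih => exact ih.tail (le_trans (hf _ _) (by linarith))

/-- For each `n`, the set of compact metric spaces admitting a connected component of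
diameter at least `1/n` is closed in the Gromov-Hausdorff space. -/
theorem isClosed_large_component (n : ℕ) :
    IsClosed {p : GHSpace | ∃ x : p.Rep, 1 / (n : ℝ) ≤ Metric.diam (connectedComponent x)} := by
  rcases Nat.eq_zero_or_pos n with rfl | hn
  · convert isClosed_univ
    ext p
    simp only [Set.mem_setOf_eq, Set.mem_univ, iff_true, Nat.cast_zero, div_zero]
    exact ⟨Classical.arbitrary _, Metric.diam_nonneg⟩
  set c : ℝ := 1 / (n : ℝ) with hcdef
  have hc : 0 < c := by
    have : (0 : ℝ) < n := by exact_mod_cast hn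
    positivity
  refine IsSeqClosed.isClosed fun p q hp hq => ?_
  set e : ℕ → ℝ := fun k => 1 / ((k : ℝ) + 1) + 2 * (dist (p k) q + 1 / ((k : ℝ) + 1)) with hedef
  have key : ∀ k : ℕ, ∃ y z : q.Rep,
      c - e k ≤ dist y z ∧ Relation.ReflTransGen (fun u v : q.Rep => dist u v ≤ e k) y z := by
    intro k
    set X := (p k).Rep
    set Y := q.Rep
    set ι := optimalGHInjl X Y with hι
    set κ := optimalGHInjr X Y with hκ
    obtain ⟨x, hx⟩ := hp k
    have hk1 : (0 : ℝ) < 1 / ((k : ℝ) + 1) := by positivity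
    -- two points far apart in the component
    have hab : ∃ a b : (p k).Rep, a ∈ connectedComponent x ∧ b ∈ connectedComponent x ∧
        c - 1 / ((k : ℝ) + 1) ≤ dist a b := by
      rcases le_or_gt (c - 1 / ((k : ℝ) + 1)) 0 with h | h
      · exact ⟨x, x, mem_connectedComponent, mem_connectedComponent, by simpa using h⟩
      · by_contra hcon
        push_neg at hcon
        have hdle : Metric.diam (connectedComponent x) ≤ c - 1 / ((k : ℝ) + 1) :=
          Metric.diam_le_of_forall_dist_le h.le fun a ha b hb => (hcon a b ha hb).le
        have : c ≤ c - 1 / ((k : ℝ) + 1) := le_trans hx hdle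
        linarith
    obtain ⟨a, b, haC, hbC, habd⟩ := hab
    have hD : hausdorffDist (range ι) (range κ) = dist (p k) q := by
      rw [hι, hκ, hausdorffDist_optimal, ← dist_ghDist]
    have hne : EMetric.hausdorffEdist (range ι) (range κ) ≠ ⊤ :=
      Metric.hausdorffEdist_ne_top_of_nonempty_of_bounded (range_nonempty _) (range_nonempty _)
        (isCompact_range (isometry_optimalGHInjl X Y).continuous).isBounded
        (isCompact_range (isometry_optimalGHInjr X Y).continuous).isBounded
    have hfex : ∀ u : X, ∃ v : Y, dist (ι u) (κ v) ≤ dist (p k) q + 1 / ((k : ℝ) + 1) := by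
      intro u
      obtain ⟨w, hw, hdw⟩ := Metric.exists_dist_lt_of_hausdorffDist_lt (mem_range_self u)
        (show hausdorffDist (range ι) (range κ) < dist (p k) q + 1 / ((k : ℝ) + 1) by
          rw [hD]; linarith) hne
      obtain ⟨v, rfl⟩ := hw
      exact ⟨v, hdw.le⟩
    choose f hfd using hfex
    have hlip : ∀ u v : X,
        dist (f u) (f v) ≤ dist u v + 2 * (dist (p k) q + 1 / ((k : ℝ) + 1)) := by
      intro u v
      have e1 : dist (f u) (f v) = dist (κ (f u)) (κ (f v)) :=
        ((isometry_optimalGHInjr X Y).dist_eq _ _).symm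
      have e2 : dist (ι u) (ι v) = dist u v := (isometry_optimalGHInjl X Y).dist_eq u v
      have t := dist_triangle4 (κ (f u)) (ι u) (ι v) (κ (f v))
      have c1 : dist (κ (f u)) (ι u) ≤ dist (p k) q + 1 / ((k : ℝ) + 1) := by
        rw [dist_comm]; exact hfd u
      have c2 := hfd v
      linarith
    have hlow : dist a b - 2 * (dist (p k) q + 1 / ((k : ℝ) + 1)) ≤ dist (f a) (f b) := by
      have e1 : dist (f a) (f b) = dist (κ (f a)) (κ (f b)) :=
        ((isometry_optimalGHInjr X Y).dist_eq _ _).symm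
      have e2 : dist (ι a) (ι b) = dist a b := (isometry_optimalGHInjl X Y).dist_eq a b
      have t := dist_triangle4 (ι a) (κ (f a)) (κ (f b)) (ι b)
      have c1 := hfd a
      have c2 : dist (κ (f b)) (ι b) ≤ dist (p k) q + 1 / ((k : ℝ) + 1) := by
        rw [dist_comm]; exact hfd b
      linarith
    refine ⟨f a, f b, by simp only [hedef]; linarith, ?_⟩
    have hch := chain_of_preconnected isPreconnected_connectedComponent haC hbC hk1
    exact chain_map f hlip hch
  choose y z h1 h2 using key
  obtain ⟨⟨Y₀, Z₀⟩, -, φ, hφ, hlim⟩ :=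
    isCompact_univ.tendsto_subseq (x := fun k => (y k, z k)) fun k => mem_univ _
  have hy : Tendsto (fun m => y (φ m)) atTop (𝓝 Y₀) := by
    exact (continuous_fst.tendsto (Y₀, Z₀)).comp hlim
  have hz : Tendsto (fun m => z (φ m)) atTop (𝓝 Z₀) := by
    exact (continuous_snd.tendsto (Y₀, Z₀)).comp hlim
  have hd0 : Tendsto (fun k => dist (p k) q) atTop (𝓝 0) :=
    tendsto_iff_dist_tendsto_zero.1 hq
  have h1k : Tendsto (fun k : ℕ => 1 / ((k : ℝ) + 1)) atTop (𝓝 0) :=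
    tendsto_one_div_add_atTop_nhds_zero_nat
  have he : Tendsto e atTop (𝓝 0) := by
    have h := h1k.add ((hd0.add h1k).const_mul 2)
    simp only [add_zero, mul_zero, zero_add] at h
    exact h
  have heφ : Tendsto (fun m => e (φ m)) atTop (𝓝 0) := he.comp hφ.tendsto_atTop
  have hdist : c ≤ dist Y₀ Z₀ := by
    have hA : Tendsto (fun m => dist (y (φ m)) (z (φ m))) atTop (𝓝 (dist Y₀ Z₀)) := hy.dist hz
    have hB : Tendsto (fun m => c - e (φ m)) atTop (𝓝 c) := by
      simpa using tendsto_const_nhds.sub heφ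
    exact le_of_tendsto_of_tendsto' hB hA fun m => h1 (φ m)
  have hchain : ∀ ε : ℝ, 0 < ε →
      Relation.ReflTransGen (fun u v : q.Rep => dist u v ≤ ε) Y₀ Z₀ := by
    intro ε hε
    have hyd : Tendsto (fun m => dist Y₀ (y (φ m))) atTop (𝓝 (dist Y₀ Y₀)) :=
      Tendsto.dist tendsto_const_nhds hy
    rw [dist_self] at hyd
    have hzd : Tendsto (fun m => dist (z (φ m)) Z₀) atTop (𝓝 (dist Z₀ Z₀)) :=
      Tendsto.dist hz tendsto_const_nhds
    rw [dist_self] at hzd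
    have E1 : ∀ᶠ m in atTop, e (φ m) ≤ ε := heφ.eventually (eventually_le_nhds hε)
    have E2 : ∀ᶠ m in atTop, dist Y₀ (y (φ m)) ≤ ε := hyd.eventually (eventually_le_nhds hε)
    have E3 : ∀ᶠ m in atTop, dist (z (φ m)) Z₀ ≤ ε := hzd.eventually (eventually_le_nhds hε)
    obtain ⟨m, hm1, hm2, hm3⟩ := (E1.and (E2.and E3)).exists
    exact Relation.ReflTransGen.head hm2
      ((Relation.ReflTransGen.mono (fun u v h => le_trans h hm1) _ _ (h2 (φ m))).tail hm3)
  have hZmem : Z₀ ∈ connectedComponent Y₀ := mem_connectedComponent_of_chains hchain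
  refine ⟨Y₀, le_trans hdist ?_⟩
  exact Metric.dist_le_diam_of_mem (isCompact_univ.isBounded.subset (subset_univ _))
    mem_connectedComponent hZmem
end

section
/- A generic compact metric space is totally anisometric; that is, the set of compact metric spaces in which two distinct pairs of points always have distinct distances is residual in the Gromov-Hausdorff space. -/
open GromovHausdorff

open Metric Set

/-- Quantitative anisometry at scale `a` with gap `ε`. -/
def GoodAt (X : Type*) [MetricSpace X] (a ε : ℝ) : Prop :=
  ∀ x y x' y' : X, a ≤ dist x y → a ≤ dist x x' + dist y y' → a ≤ dist x y' + dist y x' →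
    ε ≤ |dist x y - dist x' y'|

lemma GoodAt.of_isometryEquiv {X Y : Type*} [MetricSpace X] [MetricSpace Y] (e : X ≃ᵢ Y)
    {a ε : ℝ} (h : GoodAt X a ε) : GoodAt Y a ε := by
  intro x y x' y' h1 h2 h3
  have hd : ∀ u v : Y, dist (e.symm u) (e.symm v) = dist u v := fun u v => e.symm.dist_eq u v
  have := h (e.symm x) (e.symm y) (e.symm x') (e.symm y')
    (by rw [hd]; exact h1) (by rw [hd, hd]; exact h2) (by rw [hd, hd]; exact h3)
  rwa [hd, hd] at this

lemma exists_goodAt_of_finite (X : Type*) [MetricSpace X] [Fintype X]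
    (hX : ∀ x y x' y' : X, x ≠ y → dist x y = dist x' y' →
      (x = x' ∧ y = y') ∨ (x = y' ∧ y = x'))
    {a cap : ℝ} (ha : 0 < a) (hcap : 0 < cap) :
    ∃ ε : ℝ, 0 < ε ∧ ε ≤ cap ∧ GoodAt X a ε := by
  classical
  set F : Finset (X × X × X × X) := Finset.univ.filter
    (fun q => a ≤ dist q.1 q.2.1 ∧ a ≤ dist q.1 q.2.2.1 + dist q.2.1 q.2.2.2 ∧
      a ≤ dist q.1 q.2.2.2 + dist q.2.1 q.2.2.1) with hF
  set f : X × X × X × X → ℝ := fun q => |dist q.1 q.2.1 - dist q.2.2.1 q.2.2.2| with hf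
  have hpos : ∀ q ∈ F, 0 < f q := by
    intro q hq
    simp only [hF, Finset.mem_filter, Finset.mem_univ, true_and] at hq
    obtain ⟨h1, h2, h3⟩ := hq
    rw [hf]
    rw [abs_pos, sub_ne_zero]
    intro heq
    have hxy : q.1 ≠ q.2.1 := by
      intro h; rw [h, dist_self] at h1; linarith
    rcases hX q.1 q.2.1 q.2.2.1 q.2.2.2 hxy heq with ⟨h4, h5⟩ | ⟨h4, h5⟩
    · rw [← h4, ← h5, dist_self, dist_self] at h2; linarith
    · rw [← h4, ← h5, dist_self, dist_self] at h3; linarith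
  by_cases hne : F.Nonempty
  · refine ⟨min cap (F.inf' hne f), lt_min hcap ((Finset.lt_inf'_iff hne).2 hpos),
      min_le_left _ _, ?_⟩
    intro x y x' y' h1 h2 h3
    have hqF : (x, y, x', y') ∈ F := by
      simp only [hF, Finset.mem_filter, Finset.mem_univ, true_and]
      exact ⟨h1, h2, h3⟩
    exact le_trans (min_le_right _ _) (Finset.inf'_le f hqF)
  · refine ⟨cap, hcap, le_refl _, ?_⟩
    intro x y x' y' h1 h2 h3
    exact absurd ⟨(x, y, x', y'), by
      simp only [hF, Finset.mem_filter, Finset.mem_univ, true_and]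
      exact ⟨h1, h2, h3⟩⟩ hne

lemma two_pow_add_lt {i j i' j' : ℕ} (hij : i < j) (hj : j < j') :
    2 ^ i + 2 ^ j < 2 ^ i' + 2 ^ j' := by
  have h1 : 2 ^ i < 2 ^ j := Nat.pow_lt_pow_right (by norm_num) hij
  have h2 : 2 ^ j + 2 ^ j ≤ 2 ^ j' := by
    have h : 2 ^ j + 2 ^ j = 2 ^ (j + 1) := by ring
    rw [h]
    exact Nat.pow_le_pow_right (by norm_num) hj
  have h3 : 0 < 2 ^ i' := Nat.pow_pos (by norm_num)
  omega

lemma two_pow_add_inj_lt {i j i' j' : ℕ} (hij : i < j) (h' : i' < j')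
    (h : 2 ^ i + 2 ^ j = 2 ^ i' + 2 ^ j') : i = i' ∧ j = j' := by
  have hjj : j = j' := by
    rcases lt_trichotomy j j' with hlt | heq | hgt
    · exact absurd h (Nat.ne_of_lt (two_pow_add_lt hij hlt))
    · exact heq
    · exact absurd h.symm (Nat.ne_of_lt (two_pow_add_lt h' hgt))
  subst hjj
  have h2 : 2 ^ i = 2 ^ i' := by omega
  exact ⟨Nat.pow_right_injective (by norm_num) h2, rfl⟩

lemma two_pow_add_inj {i j i' j' : ℕ} (hij : i ≠ j) (h' : i' ≠ j')
    (h : 2 ^ i + 2 ^ j = 2 ^ i' + 2 ^ j') :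
    (i = i' ∧ j = j') ∨ (i = j' ∧ j = i') := by
  rcases hij.lt_or_gt with h1 | h1 <;> rcases h'.lt_or_gt with h2 | h2
  · exact Or.inl (two_pow_add_inj_lt h1 h2 h)
  · obtain ⟨ha, hb⟩ := two_pow_add_inj_lt h1 h2 (by omega)
    exact Or.inr ⟨ha, hb⟩
  · obtain ⟨ha, hb⟩ := two_pow_add_inj_lt h1 h2 (by omega)
    exact Or.inr ⟨hb, ha⟩
  · obtain ⟨ha, hb⟩ := two_pow_add_inj_lt h1 h2 (by omega)
    exact Or.inl ⟨hb, ha⟩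

lemma exists_perturb {k : ℕ} (d1 : Fin (k + 1) → Fin (k + 1) → ℝ)
    (h0 : ∀ i, d1 i i = 0) (hsymm : ∀ i j, d1 i j = d1 j i)
    (htri : ∀ i j m, d1 i m ≤ d1 i j + d1 j m)
    {δ : ℝ} (hδ : 0 < δ) :
    ∃ d' : Fin (k + 1) → Fin (k + 1) → ℝ,
      (∀ i, d' i i = 0) ∧ (∀ i j, d' i j = d' j i) ∧
      (∀ i j m, d' i m ≤ d' i j + d' j m) ∧
      (∀ i j, i ≠ j → 0 < d' i j) ∧
      (∀ i j, |d' i j - d1 i j| ≤ δ) ∧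
      (∀ i j i' j', i ≠ j → d' i j = d' i' j' → (i = i' ∧ j = j') ∨ (i = j' ∧ j = i')) := by
  classical
  have hnn : ∀ i j, 0 ≤ d1 i j := by
    intro i j
    have h := htri i j i
    rw [h0, hsymm j i] at h
    linarith
  set d0 : Fin (k + 1) → Fin (k + 1) → ℝ :=
    fun i j => if i = j then 0 else ((2 ^ (i : ℕ) + 2 ^ (j : ℕ) : ℕ) : ℝ) with hd0
  have hd0nn : ∀ i j, 0 ≤ d0 i j := by
    intro i j
    rw [hd0]
    dsimp only
    split
    · exact le_refl 0
    · positivity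
  have hd0pos : ∀ i j, i ≠ j → 0 < d0 i j := by
    intro i j hij
    rw [hd0]
    dsimp only
    rw [if_neg hij]
    positivity
  have hd0symm : ∀ i j, d0 i j = d0 j i := by
    intro i j
    rw [hd0]
    dsimp only
    by_cases h : i = j
    · rw [if_pos h, if_pos h.symm]
    · rw [if_neg h, if_neg (Ne.symm h)]
      push_cast
      ring
  have hd0tri : ∀ i j m, d0 i m ≤ d0 i j + d0 j m := by
    intro i j m
    by_cases him : i = m
    · subst him
      rw [hd0]
      dsimp only
      rw [if_pos rfl]
      exact add_nonneg (hd0nn i j) (hd0nn j i)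
    by_cases hij : i = j
    · subst hij
      rw [hd0]
      dsimp only
      rw [if_pos rfl]
      simp
    by_cases hjm : j = m
    · subst hjm
      rw [hd0]
      dsimp only
      rw [if_pos rfl]
      simp
    · rw [hd0]
      dsimp only
      rw [if_neg him, if_neg hij, if_neg hjm]
      push_cast
      have : (0:ℝ) < 2 ^ (j : ℕ) := by positivity
      linarith
  have hd0le : ∀ i j, d0 i j ≤ 2 ^ (k + 1) := by
    intro i j
    rw [hd0]
    dsimp only
    split
    · positivity
    · have hi : (i : ℕ) ≤ k := Nat.lt_succ_iff.1 i.isLt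
      have hj : (j : ℕ) ≤ k := Nat.lt_succ_iff.1 j.isLt
      have h2 : (2:ℝ) ^ (i : ℕ) ≤ 2 ^ k := by
        apply pow_le_pow_right₀ (by norm_num) hi
      have h3 : (2:ℝ) ^ (j : ℕ) ≤ 2 ^ k := by
        apply pow_le_pow_right₀ (by norm_num) hj
      push_cast
      rw [pow_succ]
      linarith
  have hd0inj : ∀ i j i' j', i ≠ j → i' ≠ j' → d0 i j = d0 i' j' →
      (i = i' ∧ j = j') ∨ (i = j' ∧ j = i') := by
    intro i j i' j' hij h' h
    rw [hd0] at h
    dsimp only at h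
    rw [if_neg hij, if_neg h'] at h
    have hn : 2 ^ (i : ℕ) + 2 ^ (j : ℕ) = 2 ^ ((i' : Fin (k+1)) : ℕ) + 2 ^ ((j' : Fin (k+1)) : ℕ) :=
      Nat.cast_injective h
    have hvi : (i : ℕ) ≠ (j : ℕ) := fun hc => hij (Fin.val_injective hc)
    have hvi' : (i' : ℕ) ≠ (j' : ℕ) := fun hc => h' (Fin.val_injective hc)
    rcases two_pow_add_inj hvi hvi' hn with ⟨ha, hb⟩ | ⟨ha, hb⟩
    · exact Or.inl ⟨Fin.val_injective ha, Fin.val_injective hb⟩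
    · exact Or.inr ⟨Fin.val_injective ha, Fin.val_injective hb⟩
  -- choose the perturbation parameter avoiding a finite bad set
  set g : Fin (k + 1) × Fin (k + 1) × Fin (k + 1) × Fin (k + 1) → ℝ :=
    fun q => (d1 q.2.2.1 q.2.2.2 - d1 q.1 q.2.1) / (d0 q.1 q.2.1 - d0 q.2.2.1 q.2.2.2) with hg
  have hio : (Set.Ioo (0:ℝ) (δ / 2 ^ (k + 2)) \ Set.range g).Nonempty := by
    apply Set.Infinite.nonempty
    apply Set.Infinite.diff
    · exact Set.Ioo_infinite (by positivity)
    · exact Set.finite_range g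
  obtain ⟨c, hcIoo, hcB⟩ := hio
  obtain ⟨hc0, hc1⟩ := hcIoo
  refine ⟨fun i j => d1 i j + c * d0 i j, ?_, ?_, ?_, ?_, ?_, ?_⟩
  · intro i
    dsimp only
    rw [h0]
    have : d0 i i = 0 := by rw [hd0]; dsimp only; rw [if_pos rfl]
    rw [this]
    ring
  · intro i j
    dsimp only
    rw [hsymm, hd0symm]
  · intro i j m
    dsimp only
    have := htri i j m
    have := hd0tri i j m
    nlinarith [hc0.le]
  · intro i j hij
    dsimp only
    have h1 := hnn i j
    have h2 := hd0pos i j hij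
    nlinarith
  · intro i j
    dsimp only
    have h1 : d1 i j + c * d0 i j - d1 i j = c * d0 i j := by ring
    rw [h1, abs_of_nonneg (mul_nonneg hc0.le (hd0nn i j))]
    have h2 : c * d0 i j ≤ c * 2 ^ (k + 1) :=
      mul_le_mul_of_nonneg_left (hd0le i j) hc0.le
    have h3 : c * 2 ^ (k + 1) ≤ (δ / 2 ^ (k + 2)) * 2 ^ (k + 1) :=
      mul_le_mul_of_nonneg_right hc1.le (by positivity)
    have h4 : (δ / 2 ^ (k + 2)) * 2 ^ (k + 1) = δ / 2 := by
      rw [pow_succ]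
      field_simp
    linarith
  · intro i j i' j' hij heq
    dsimp only at heq
    have h' : i' ≠ j' := by
      rintro rfl
      have h1 := hnn i j
      have h2 := hd0pos i j hij
      have h3 : d0 i' i' = 0 := by rw [hd0]; dsimp only; rw [if_pos rfl]
      rw [h3, h0] at heq
      nlinarith
    by_contra hne
    have hd0ne : d0 i j ≠ d0 i' j' := by
      intro hc
      exact hne (hd0inj i j i' j' hij h' hc)
    apply hcB
    refine ⟨(i, j, i', j'), ?_⟩
    rw [hg]
    dsimp only
    rw [div_eq_iff (sub_ne_zero.2 hd0ne)]
    linarith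

lemma exists_net (X : Type*) [MetricSpace X] [CompactSpace X] [Nonempty X] {δ : ℝ}
    (hδ : 0 < δ) :
    ∃ (k : ℕ) (F : Fin (k + 1) → X), Function.Injective F ∧ ∀ x, ∃ i, dist x (F i) ≤ δ := by
  obtain ⟨t, -, htfin, htcov⟩ := finite_cover_balls_of_compact (isCompact_univ (X := X)) hδ
  lift t to Finset X using htfin
  set l := t.toList with hl
  have hnd : l.Nodup := t.nodup_toList
  have hne : l ≠ [] := by
    intro h
    obtain ⟨x⟩ := ‹Nonempty X›
    have := htcov (mem_univ x)
    rw [mem_iUnion₂] at this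
    obtain ⟨y, hy, -⟩ := this
    rw [Finset.mem_coe, ← t.mem_toList, ← hl, h] at hy
    exact absurd hy List.not_mem_nil
  obtain ⟨m, hm⟩ := Nat.exists_eq_succ_of_ne_zero (fun h => hne (List.length_eq_zero_iff.1 h))
  refine ⟨m, fun i => l.get (Fin.cast hm.symm i), ?_, ?_⟩
  · intro i j hij
    have := List.nodup_iff_injective_get.1 hnd hij
    simpa [Fin.ext_iff] using this
  · intro x
    have := htcov (mem_univ x)
    rw [mem_iUnion₂] at this
    obtain ⟨y, hy, hxy⟩ := this
    rw [Finset.mem_coe, ← t.mem_toList, ← hl] at hy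
    obtain ⟨i, hi⟩ := List.mem_iff_get.1 hy
    refine ⟨Fin.cast hm i, ?_⟩
    dsimp only
    have hc : Fin.cast hm.symm (Fin.cast hm i) = i := rfl
    rw [hc, hi]
    exact le_of_lt (mem_ball.1 hxy)

/-- A wrapper around `Fin (k+1)` carrying no pre-existing topology. -/
def ModelSpace (k : ℕ) : Type := Fin (k + 1)

def ModelSpace.mk {k : ℕ} (i : Fin (k + 1)) : ModelSpace k := i

def ModelSpace.toFin {k : ℕ} (m : ModelSpace k) : Fin (k + 1) := m

instance {k : ℕ} : Nonempty (ModelSpace k) := inferInstanceAs (Nonempty (Fin (k + 1)))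

instance {k : ℕ} : Fintype (ModelSpace k) := inferInstanceAs (Fintype (Fin (k + 1)))

def modelMetric {k : ℕ} (d' : Fin (k + 1) → Fin (k + 1) → ℝ)
    (h0 : ∀ i, d' i i = 0) (hsymm : ∀ i j, d' i j = d' j i)
    (htri : ∀ i j m, d' i m ≤ d' i j + d' j m)
    (hpos : ∀ i j, i ≠ j → 0 < d' i j) : MetricSpace (ModelSpace k) where
  dist x y := d' x.toFin y.toFin
  dist_self x := h0 _
  dist_comm x y := hsymm _ _
  dist_triangle x y z := htri _ _ _
  eq_of_dist_eq_zero {x y} h := by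
    by_contra hne
    exact absurd h (ne_of_gt (hpos _ _ (fun hc => hne hc)))

lemma exists_model (q : GHSpace) {r : ℝ} (hr : 0 < r) :
    ∃ q' : GHSpace, dist q q' < r ∧
      ∀ a cap : ℝ, 0 < a → 0 < cap → ∃ ε, 0 < ε ∧ ε ≤ cap ∧ GoodAt q'.Rep a ε := by
  classical
  set δ := r / 4 with hδdef
  have hδ : 0 < δ := by positivity
  obtain ⟨k, F, hFinj, hFnet⟩ := exists_net q.Rep hδ
  obtain ⟨d', hd'0, hd'symm, hd'tri, hd'pos, hd'close, hd'ani⟩ :=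
    exists_perturb (fun i j => dist (F i) (F j)) (fun i => dist_self _)
      (fun i j => dist_comm _ _) (fun i j m => dist_triangle _ _ _) hδ
  letI : MetricSpace (ModelSpace k) := modelMetric d' hd'0 hd'symm hd'tri hd'pos
  haveI : CompactSpace (ModelSpace k) := Finite.compactSpace
  have hdistM : ∀ i j : Fin (k + 1), dist (ModelSpace.mk i) (ModelSpace.mk j) = d' i j :=
    fun i j => rfl
  set q' := toGHSpace (ModelSpace k) with hq'
  have hgh : ghDist q.Rep (ModelSpace k) ≤ δ + δ / 2 + 0 := by
    apply ghDist_le_of_approx_subsets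
      (fun x : Set.range F => ModelSpace.mk (Function.invFun F x.1))
    · intro x
      obtain ⟨i, hi⟩ := hFnet x
      exact ⟨F i, mem_range_self i, hi⟩
    · intro m
      refine ⟨⟨F m.toFin, mem_range_self _⟩, ?_⟩
      have h1 : Function.invFun F (F m.toFin) = m.toFin :=
        Function.leftInverse_invFun hFinj m.toFin
      dsimp only
      rw [h1]
      have h2 : ModelSpace.mk m.toFin = m := rfl
      rw [h2, dist_self]
    · intro x y
      have hx : F (Function.invFun F x.1) = x.1 := Function.invFun_eq x.2
      have hy : F (Function.invFun F y.1) = y.1 := Function.invFun_eq y.2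
      have h3 := hd'close (Function.invFun F x.1) (Function.invFun F y.1)
      rw [hx, hy, abs_sub_comm] at h3
      rw [Subtype.dist_eq, hdistM]
      exact h3
  have hdq : dist q q' = ghDist q.Rep (ModelSpace k) := by
    conv_lhs => rw [← GHSpace.toGHSpace_rep q]
    rfl
  have hani : ∀ x y x' y' : ModelSpace k, x ≠ y → dist x y = dist x' y' →
      (x = x' ∧ y = y') ∨ (x = y' ∧ y = x') := by
    intro x y x' y' hxy heq
    exact hd'ani x.toFin y.toFin x'.toFin y'.toFin (fun h => hxy h) heq
  have hiso : Nonempty (q'.Rep ≃ᵢ ModelSpace k) := by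
    apply toGHSpace_eq_toGHSpace_iff_isometryEquiv.1
    rw [GHSpace.toGHSpace_rep]
  obtain ⟨e⟩ := hiso
  refine ⟨q', ?_, ?_⟩
  · rw [hdq]
    have : δ + δ / 2 + 0 < r := by rw [hδdef]; linarith
    exact lt_of_le_of_lt hgh this
  · intro a cap ha hcap
    obtain ⟨ε, hε0, hεcap, hgood⟩ := exists_goodAt_of_finite (ModelSpace k) hani ha hcap
    exact ⟨ε, hε0, hεcap, hgood.of_isometryEquiv e.symm⟩

/-- A generic compact metric space is totally anisometric. -/
theorem residual_totallyAnisometric :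
    {p : GHSpace | TotallyAnisometric p.Rep} ∈ residual GHSpace := by
  classical
  set U : ℕ → Set GHSpace := fun n =>
    {q | ∃ p : GHSpace, ∃ ε : ℝ, 0 < ε ∧ ε ≤ 1 / (8 * ((n : ℝ) + 1)) ∧
      GoodAt p.Rep (1 / (2 * ((n : ℝ) + 1))) ε ∧ dist p q < ε / 100} with hU
  have hopen : ∀ n, IsOpen (U n) := by
    intro n
    rw [Metric.isOpen_iff]
    rintro q ⟨p, ε, hε0, hεcap, hgood, hdist⟩
    refine ⟨ε / 100 - dist p q, by linarith, ?_⟩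
    intro q' hq'
    rw [mem_ball] at hq'
    refine ⟨p, ε, hε0, hεcap, hgood, ?_⟩
    have := dist_triangle p q q'
    have hc : dist q q' = dist q' q := dist_comm _ _
    rw [dist_comm] at hq'
    linarith [dist_triangle p q q']
  have hdense : ∀ n, Dense (U n) := by
    intro n
    rw [Metric.dense_iff]
    intro q r hr
    obtain ⟨q', hq'dist, hq'good⟩ := exists_model q hr
    obtain ⟨ε, hε0, hεcap, hgood⟩ := hq'good (1 / (2 * ((n : ℝ) + 1))) (1 / (8 * ((n : ℝ) + 1)))
      (by positivity) (by positivity)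
    refine ⟨q', ?_, ⟨q', ε, hε0, hεcap, hgood, by rw [dist_self]; linarith⟩⟩
    rw [mem_ball, dist_comm]
    exact hq'dist
  have hsub : (⋂ n, U n) ⊆ {p : GHSpace | TotallyAnisometric p.Rep} := by
    intro q hq
    intro x y x' y' heq hpos
    by_contra hcon
    rw [not_or] at hcon
    have hs1 : 0 < dist x x' + dist y y' := by
      rcases not_and_or.1 hcon.1 with h | h
      · have := dist_pos.2 h
        linarith [dist_nonneg (x := y) (y := y')]
      · have := dist_pos.2 h
        linarith [dist_nonneg (x := x) (y := x')]
    have hs2 : 0 < dist x y' + dist y x' := by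
      rcases not_and_or.1 hcon.2 with h | h
      · have := dist_pos.2 h
        linarith [dist_nonneg (x := y) (y := x')]
      · have := dist_pos.2 h
        linarith [dist_nonneg (x := x) (y := y')]
    set m := min (dist x y) (min (dist x x' + dist y y') (dist x y' + dist y x')) with hm
    have hm0 : 0 < m := lt_min hpos (lt_min hs1 hs2)
    obtain ⟨n, hn⟩ := exists_nat_one_div_lt hm0
    have hqn := Set.mem_iInter.1 hq n
    obtain ⟨p, ε, hε0, hεcap, hgood, hdist⟩ := hqn
    -- couple the two spaces
    obtain ⟨Φ, Ψ, hΦ, hΨ, hdisteq⟩ := ghDist_eq_hausdorffDist p.Rep q.Rep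
    have hH : hausdorffDist (range Φ) (range Ψ) < ε / 100 := by
      rw [← hdisteq, ← dist_ghDist]
      exact hdist
    have hfin : EMetric.hausdorffEdist (range Φ) (range Ψ) ≠ ⊤ :=
      hausdorffEdist_ne_top_of_nonempty_of_bounded (range_nonempty _) (range_nonempty _)
        (isCompact_range hΦ.continuous).isBounded (isCompact_range hΨ.continuous).isBounded
    have lift : ∀ z : q.Rep, ∃ w : p.Rep, dist (Φ w) (Ψ z) < ε / 100 := by
      intro z
      obtain ⟨w', hw', hlt⟩ := exists_dist_lt_of_hausdorffDist_lt' (mem_range_self z) hH hfin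
      obtain ⟨w, rfl⟩ := hw'
      exact ⟨w, hlt⟩
    obtain ⟨x₀, hx₀⟩ := lift x
    obtain ⟨y₀, hy₀⟩ := lift y
    obtain ⟨x₀', hx₀'⟩ := lift x'
    obtain ⟨y₀', hy₀'⟩ := lift y'
    -- distortion estimates
    have key : ∀ (u v : p.Rep) (z w : q.Rep),
        |dist u v - dist z w| ≤ dist (Φ u) (Ψ z) + dist (Φ v) (Ψ w) := by
      intro u v z w
      have h := dist_dist_dist_le (Φ u) (Φ v) (Ψ z) (Ψ w)
      rwa [Real.dist_eq, hΦ.dist_eq, hΨ.dist_eq] at h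
    have k1 := key x₀ y₀ x y
    have k2 := key x₀' y₀' x' y'
    have k3 := key x₀ x₀' x x'
    have k4 := key y₀ y₀' y y'
    have k5 := key x₀ y₀' x y'
    have k6 := key y₀ x₀' y x'
    -- dist between points of p.Rep : images
    have hdxx' : dist (Φ x₀) (Ψ x) + dist (Φ x₀') (Ψ x') < ε / 50 := by linarith
    set b := ((n : ℝ) + 1) with hb
    have hb0 : (0 : ℝ) < b := by positivity
    have ha2 : 1 / (2 * b) + 1 / (2 * b) = 1 / b := by field_simp; norm_num
    have hcap' : ε ≤ 1 / (2 * b) / 4 := by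
      have : 1 / (8 * b) = 1 / (2 * b) / 4 := by
        rw [div_div]
        ring_nf
      rw [← this]
      exact hεcap
    have hmxy : 1 / b < dist x y := lt_of_lt_of_le hn (le_trans (min_le_left _ _) le_rfl)
    have hms1 : 1 / b < dist x x' + dist y y' :=
      lt_of_lt_of_le hn (le_trans (min_le_right _ _) (min_le_left _ _))
    have hms2 : 1 / b < dist x y' + dist y x' :=
      lt_of_lt_of_le hn (le_trans (min_le_right _ _) (min_le_right _ _))
    -- apply goodness
    have habs1 := abs_sub_le_iff.1 k1
    have habs2 := abs_sub_le_iff.1 k2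
    have habs3 := abs_sub_le_iff.1 k3
    have habs4 := abs_sub_le_iff.1 k4
    have habs5 := abs_sub_le_iff.1 k5
    have habs6 := abs_sub_le_iff.1 k6
    have hgap := hgood x₀ y₀ x₀' y₀' (by linarith [habs1.2]) (by linarith [habs3.2, habs4.2])
      (by linarith [habs5.2, habs6.2])
    have hgap2 : |dist x₀ y₀ - dist x₀' y₀'| ≤ ε / 25 := by
      have h1 : dist x₀ y₀ - dist x₀' y₀' ≤ ε / 25 := by linarith [habs1.1, habs2.2]
      have h2 : dist x₀' y₀' - dist x₀ y₀ ≤ ε / 25 := by linarith [habs1.2, habs2.1]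
      exact abs_sub_le_iff.2 ⟨h1, h2⟩
    linarith [le_trans hgap hgap2]
  refine Filter.mem_of_superset ?_ hsub
  exact countable_iInter_mem.2 fun n => residual_of_dense_open (hopen n) (hdense n)
end

section
/- For each ε > 0, the set of compact metric spaces X containing points x, y, x', y' with d(x,y) = d(x',y') ≥ ε, d(x,x') + d(y,y') ≥ ε, and d(x,y') + d(x',y) ≥ ε is closed in the Gromov-Hausdorff space. -/
open GromovHausdorff Metric Set

/-- For each `ε > 0`, the set of compact metric spaces containing a configuration of points
`x, y, x', y'` with `d(x,y) = d(x',y') ≥ ε`, `d(x,x') + d(y,y') ≥ ε` and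
`d(x,y') + d(x',y) ≥ ε` is closed in the Gromov-Hausdorff space. -/
theorem isClosed_anisometry_defect (ε : ℝ) (hε : 0 < ε) :
    IsClosed {p : GHSpace | ∃ x y x' y' : p.Rep,
      dist x y = dist x' y' ∧ ε ≤ dist x y ∧
      ε ≤ dist x x' + dist y y' ∧ ε ≤ dist x y' + dist x' y} := by
  rw [← closure_subset_iff_isClosed]
  intro p hp
  -- the defect functional on quadruples of points of `p.Rep`
  set F : p.Rep × p.Rep × p.Rep × p.Rep → ℝ := fun z =>
    |dist z.1 z.2.1 - dist z.2.2.1 z.2.2.2| + max (ε - dist z.1 z.2.1) 0 +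
      max (ε - (dist z.1 z.2.2.1 + dist z.2.1 z.2.2.2)) 0 +
      max (ε - (dist z.1 z.2.2.2 + dist z.2.2.1 z.2.1)) 0 with hF
  have hFc : Continuous F := by fun_prop
  obtain ⟨m, -, hm⟩ := isCompact_univ.exists_isMinOn univ_nonempty hFc.continuousOn
  have hmin : ∀ z, F m ≤ F z := fun z => hm (mem_univ z)
  have hFnonneg : ∀ z, 0 ≤ F z := by
    intro z
    have := abs_nonneg (dist z.1 z.2.1 - dist z.2.2.1 z.2.2.2)
    have := le_max_right (ε - dist z.1 z.2.1) 0
    positivity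
  -- the minimum is at most `4δ` for every `δ > 0`
  have key : ∀ δ : ℝ, 0 < δ → F m ≤ 16 * δ := by
    intro δ hδ
    obtain ⟨q, hq, hpq⟩ := Metric.mem_closure_iff.1 hp δ hδ
    obtain ⟨x, y, x', y', h1, h2, h3, h4⟩ := hq
    obtain ⟨Φ, Ψ, hΦ, hΨ, hd⟩ := ghDist_eq_hausdorffDist p.Rep q.Rep
    have hdist : hausdorffDist (range Φ) (range Ψ) < δ := by
      rw [← hd, ← dist_ghDist]; exact hpq
    have hfin : EMetric.hausdorffEdist (range Φ) (range Ψ) ≠ ⊤ := by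
      apply Metric.hausdorffEdist_ne_top_of_nonempty_of_bounded (range_nonempty _)
        (range_nonempty _)
      · exact (isCompact_range hΦ.continuous).isBounded
      · exact (isCompact_range hΨ.continuous).isBounded
    -- pull back each witness point from `q.Rep` to `p.Rep`
    have pull : ∀ u : q.Rep, ∃ a : p.Rep, dist (Ψ u) (Φ a) < δ := by
      intro u
      obtain ⟨b, ⟨a, rfl⟩, hb⟩ :=
        exists_dist_lt_of_hausdorffDist_lt' (mem_range_self u) hdist hfin
      exact ⟨a, by rwa [dist_comm]⟩
    obtain ⟨a, ha⟩ := pull x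
    obtain ⟨b, hb⟩ := pull y
    obtain ⟨a', ha'⟩ := pull x'
    obtain ⟨b', hb'⟩ := pull y'
    have est : ∀ (u v : q.Rep) (c d : p.Rep), dist (Ψ u) (Φ c) < δ → dist (Ψ v) (Φ d) < δ →
        |dist c d - dist u v| ≤ 2 * δ := by
      intro u v c d hc hd'
      rw [← hΦ.dist_eq c d, ← hΨ.dist_eq u v]
      have h1 : dist (Φ c) (Φ d) ≤ dist (Φ c) (Ψ u) + dist (Ψ u) (Ψ v) + dist (Ψ v) (Φ d) :=
        dist_triangle4 _ _ _ _
      have h2 : dist (Ψ u) (Ψ v) ≤ dist (Ψ u) (Φ c) + dist (Φ c) (Φ d) + dist (Φ d) (Ψ v) :=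
        dist_triangle4 _ _ _ _
      have c1 : dist (Φ c) (Ψ u) = dist (Ψ u) (Φ c) := dist_comm _ _
      have c2 : dist (Φ d) (Ψ v) = dist (Ψ v) (Φ d) := dist_comm _ _
      rw [abs_sub_le_iff]
      exact ⟨by linarith, by linarith⟩
    have e1 := est x y a b ha hb
    have e2 := est x' y' a' b' ha' hb'
    have e3 := est x x' a a' ha ha'
    have e4 := est y y' b b' hb hb'
    have e5 := est x y' a b' ha hb'
    have e6 := est x' y a' b ha' hb
    have := hmin (a, b, a', b')
    have r1 := abs_le.1 e1
    have r2 := abs_le.1 e2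
    have r3 := abs_le.1 e3
    have r4 := abs_le.1 e4
    have r5 := abs_le.1 e5
    have r6 := abs_le.1 e6
    have t1 : |dist a b - dist a' b'| ≤ 4 * δ := by
      rw [abs_le]; constructor <;> [nlinarith [r1.1, r2.2]; nlinarith [r1.2, r2.1]]
    have t2 : max (ε - dist a b) 0 ≤ 2 * δ := by
      apply max_le _ (by linarith); linarith [r1.1]
    have t3 : max (ε - (dist a a' + dist b b')) 0 ≤ 4 * δ := by
      apply max_le _ (by linarith); linarith [r3.1, r4.1]
    have t4 : max (ε - (dist a b' + dist a' b)) 0 ≤ 4 * δ := by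
      apply max_le _ (by linarith); linarith [r5.1, r6.1]
    calc F m ≤ F (a, b, a', b') := this
      _ ≤ 4 * δ + 2 * δ + 4 * δ + 4 * δ := by
          simp only [hF]; gcongr
      _ ≤ 16 * δ := by linarith
  -- hence the minimum is `0`, giving exact witnesses
  have hFm0 : F m = 0 := by
    have h0 := hFnonneg m
    refine le_antisymm ?_ h0
    obtain ⟨r, hr⟩ : ∃ r, F m = r := ⟨_, rfl⟩
    rw [hr] at key h0 ⊢
    by_contra h
    push_neg at h
    have := key (r / 32) (by linarith)
    linarith
  refine ⟨m.1, m.2.1, m.2.2.1, m.2.2.2, ?_, ?_, ?_, ?_⟩ <;>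
  · have h1 := abs_nonneg (dist m.1 m.2.1 - dist m.2.2.1 m.2.2.2)
    have h2 := le_max_right (ε - dist m.1 m.2.1) 0
    have h3 := le_max_right (ε - (dist m.1 m.2.2.1 + dist m.2.1 m.2.2.2)) 0
    have h4 := le_max_right (ε - (dist m.1 m.2.2.2 + dist m.2.2.1 m.2.1)) 0
    simp only [hF] at hFm0
    have e1 : |dist m.1 m.2.1 - dist m.2.2.1 m.2.2.2| = 0 := by linarith
    have e2 : max (ε - dist m.1 m.2.1) 0 = 0 := by linarith
    have e3 : max (ε - (dist m.1 m.2.2.1 + dist m.2.1 m.2.2.2)) 0 = 0 := by linarith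
    have e4 : max (ε - (dist m.1 m.2.2.2 + dist m.2.2.1 m.2.1)) 0 = 0 := by linarith
    rw [abs_eq_zero, sub_eq_zero] at e1
    rw [max_eq_right_iff] at e2 e3 e4
    first
      | exact e1
      | linarith
end

section
/- A generic compact metric space contains no three pairwise distinct collinear points; that is, the set of compact metric spaces X such that d(x,y) = d(x,z) + d(z,y) implies z ∈ {x,y} is residual in the Gromov-Hausdorff space. -/
open GromovHausdorff Metric Set

noncomputable section NoCollinearAux

/-- Type synonym for the `c`-perturbed metric: all distinct points pushed apart by `c`. -/
def PertAux (X : Type) (_c : ℝ) : Type := X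

namespace PertAux

variable {X : Type} {c : ℝ}

/-- identity map into the synonym -/
def up (c : ℝ) (x : X) : PertAux X c := x

/-- identity map out of the synonym -/
def down (x : PertAux X c) : X := x

@[simp] theorem up_down (x : PertAux X c) : up c x.down = x := rfl
@[simp] theorem down_up (x : X) : (up c x).down = x := rfl

theorem up_inj {x y : X} (h : up c x = up c y) : x = y := h

instance [h : Nonempty X] : Nonempty (PertAux X c) := h
instance [h : Finite X] : Finite (PertAux X c) := h
instance : TopologicalSpace (PertAux X c) := ⊥
instance : DiscreteTopology (PertAux X c) := ⟨rfl⟩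
instance [Finite X] : CompactSpace (PertAux X c) := Finite.compactSpace

open Classical in
/-- the perturbed distance -/
def pdist [MetricSpace X] (x y : PertAux X c) : ℝ :=
  if x = y then 0 else dist x.down y.down + c

theorem pdist_nonneg [MetricSpace X] (hc : 0 < c) (x y : PertAux X c) : 0 ≤ pdist x y := by
  unfold pdist; split_ifs
  · exact le_rfl
  · positivity

/-- the perturbed metric space structure -/
def metric [MetricSpace X] (hc : 0 < c) : MetricSpace (PertAux X c) := by
  apply MetricSpace.ofDistTopology pdist
  · intro x; simp [pdist]
  · intro x y; unfold pdist; rcases eq_or_ne x y with h | h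
    · simp [h]
    · rw [if_neg h, if_neg (Ne.symm h), dist_comm]
  · intro x y z
    have hc' := hc.le
    rcases eq_or_ne x z with hxz | hxz
    · rw [pdist, if_pos hxz]
      exact add_nonneg (pdist_nonneg hc x y) (pdist_nonneg hc y z)
    · unfold pdist
      rw [if_neg hxz]
      rcases eq_or_ne x y with hxy | hxy
      · rcases eq_or_ne y z with hyz | hyz
        · exact absurd (hxy.trans hyz) hxz
        · rw [if_pos hxy, if_neg hyz, hxy]; simp
      · rcases eq_or_ne y z with hyz | hyz
        · rw [if_neg hxy, if_pos hyz, hyz]; simp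
        · rw [if_neg hxy, if_neg hyz]
          have := dist_triangle x.down y.down z.down
          linarith
  · intro s
    constructor
    · intro _ x _
      refine ⟨c, hc, fun y hy => ?_⟩
      rcases eq_or_ne x y with h | h
      · rwa [← h]
      · exfalso
        rw [pdist, if_neg h] at hy
        have := dist_nonneg (x := x.down) (y := y.down)
        linarith
    · intro _; exact isOpen_discrete s
  · intro x y h
    by_contra hne
    rw [pdist, if_neg hne] at h
    have := dist_nonneg (x := x.down) (y := y.down)
    linarith

theorem dist_eq [MetricSpace X] (hc : 0 < c) :
    letI := PertAux.metric (X := X) hc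
    ∀ x y : PertAux X c, dist x y = pdist x y := fun _ _ => rfl

/-- In the perturbed space, any triple with the two `z`-distances at least `q/2 > 0`
has surplus at least `c`. -/
theorem good [MetricSpace X] (hc : 0 < c) {q : ℝ} (hq : 0 < q) :
    letI := PertAux.metric (X := X) hc
    ∀ x y z : PertAux X c, q / 2 ≤ dist x z → q / 2 ≤ dist z y →
      c ≤ dist x z + dist z y - dist x y := by
  letI := PertAux.metric (X := X) hc
  intro x y z hxz hzy
  have hd := PertAux.dist_eq (X := X) hc
  have hxz' : x ≠ z := by
    intro h; rw [hd, pdist, if_pos h] at hxz; linarith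
  have hzy' : z ≠ y := by
    intro h; rw [hd, pdist, if_pos h] at hzy; linarith
  rw [hd x z, hd z y, hd x y, pdist, pdist, pdist, if_neg hxz', if_neg hzy']
  rcases eq_or_ne x y with hxy | hxy
  · rw [if_pos hxy]
    have h1 := dist_nonneg (x := x.down) (y := z.down)
    have h2 := dist_nonneg (x := z.down) (y := y.down)
    linarith
  · rw [if_neg hxy]
    have := dist_triangle x.down z.down y.down
    linarith

end PertAux

/-- Gromov-Hausdorff approximation of a compact space by a perturbed finite net. -/
theorem ghDist_pert_le {X : Type} [MetricSpace X] [CompactSpace X] [Nonempty X]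
    {t : Set X} (htf : t.Finite) (htn : t.Nonempty) {ε c : ℝ} (hc : 0 < c)
    (hcov : ∀ x : X, ∃ y ∈ t, dist x y ≤ ε) :
    letI := PertAux.metric (X := ↥t) hc
    haveI : Finite ↥t := htf.to_subtype
    haveI : Nonempty ↥t := htn.to_subtype
    ghDist X (PertAux ↥t c) ≤ ε + c / 2 := by
  letI := PertAux.metric (X := ↥t) hc
  haveI : Finite ↥t := htf.to_subtype
  haveI : Nonempty ↥t := htn.to_subtype
  have hd := PertAux.dist_eq (X := ↥t) hc
  have key : ghDist X (PertAux ↥t c) ≤ ε + c / 2 + 0 := by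
    apply ghDist_le_of_approx_subsets (s := t) (PertAux.up c)
    · exact hcov
    · intro w
      exact ⟨w.down, by simp⟩
    · intro a b
      rw [hd]
      rcases eq_or_ne a b with h | h
      · rw [PertAux.pdist, if_pos (by rw [h]), h, dist_self, sub_zero, abs_zero]
        exact hc.le
      · have hne : PertAux.up c a ≠ PertAux.up c b := fun hh => h (PertAux.up_inj hh)
        rw [PertAux.pdist, if_neg hne]
        show |dist a b - (dist a b + c)| ≤ c
        rw [abs_sub_comm, abs_of_nonneg (by linarith)]
        simp
  linarith

/-- Stability: if `X` has quantitatively positive surplus and `Y` is GH-close to `X`,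
then `Y` has no collinear triple with both legs at least `q`. -/
theorem no_bad {q r : ℝ} (hq : 0 < q)
    (X : Type) [MetricSpace X] [CompactSpace X] [Nonempty X]
    (Y : Type) [MetricSpace Y] [CompactSpace Y] [Nonempty Y]
    (hX : ∀ x y z : X, q / 2 ≤ dist x z → q / 2 ≤ dist z y →
      r ≤ dist x z + dist z y - dist x y)
    (h : ghDist X Y < min (q / 4) (r / 6))
    (x y z : Y) (hxz : q ≤ dist x z) (hzy : q ≤ dist z y) :
    dist x y < dist x z + dist z y := by
  set η := min (q / 4) (r / 6) with hη
  have hηq : η ≤ q / 4 := min_le_left _ _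
  have hηr : η ≤ r / 6 := min_le_right _ _
  set il := optimalGHInjl X Y
  set ir := optimalGHInjr X Y
  have hil : Isometry il := isometry_optimalGHInjl X Y
  have hir : Isometry ir := isometry_optimalGHInjr X Y
  have hH : hausdorffDist (range il) (range ir) < η := by
    rw [hausdorffDist_optimal]; exact h
  have hfin : EMetric.hausdorffEdist (range il) (range ir) ≠ ⊤ :=
    hausdorffEdist_ne_top_of_nonempty_of_bounded (range_nonempty _) (range_nonempty _)
      (isCompact_range hil.continuous).isBounded (isCompact_range hir.continuous).isBounded
  have approx : ∀ w : Y, ∃ w' : X, dist (ir w) (il w') < η := by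
    intro w
    obtain ⟨p, hp, hdp⟩ := exists_dist_lt_of_hausdorffDist_lt' (mem_range_self w) hH hfin
    obtain ⟨w', rfl⟩ := hp
    exact ⟨w', by rwa [dist_comm]⟩
  obtain ⟨x', hx'⟩ := approx x
  obtain ⟨y', hy'⟩ := approx y
  obtain ⟨z', hz'⟩ := approx z
  have dxz : dist x z = dist (ir x) (ir z) := (hir.dist_eq x z).symm
  have dzy : dist z y = dist (ir z) (ir y) := (hir.dist_eq z y).symm
  have dxy : dist x y = dist (ir x) (ir y) := (hir.dist_eq x y).symm
  have dxz' : dist x' z' = dist (il x') (il z') := (hil.dist_eq x' z').symm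
  have dzy' : dist z' y' = dist (il z') (il y') := (hil.dist_eq z' y').symm
  have dxy' : dist x' y' = dist (il x') (il y') := (hil.dist_eq x' y').symm
  have t1 : dist (ir x) (ir z) ≤ dist (ir x) (il x') + dist (il x') (il z') + dist (il z') (ir z) :=
    dist_triangle4 _ _ _ _
  have t1' : dist (il x') (il z') ≤ dist (il x') (ir x) + dist (ir x) (ir z) + dist (ir z) (il z') :=
    dist_triangle4 _ _ _ _
  have t2 : dist (ir z) (ir y) ≤ dist (ir z) (il z') + dist (il z') (il y') + dist (il y') (ir y) :=
    dist_triangle4 _ _ _ _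
  have t2' : dist (il z') (il y') ≤ dist (il z') (ir z) + dist (ir z) (ir y) + dist (ir y) (il y') :=
    dist_triangle4 _ _ _ _
  have t3 : dist (ir x) (ir y) ≤ dist (ir x) (il x') + dist (il x') (il y') + dist (il y') (ir y) :=
    dist_triangle4 _ _ _ _
  have hcx := dist_comm (il x') (ir x)
  have hcz := dist_comm (il z') (ir z)
  have hcy := dist_comm (il y') (ir y)
  have hq1 : q / 2 ≤ dist x' z' := by linarith
  have hq2 : q / 2 ≤ dist z' y' := by linarith
  have := hX x' y' z' hq1 hq2
  linarith

/-- GH-spaces with quantitatively positive surplus at scale `q`. -/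
def Good (q r : ℝ) (p : GHSpace) : Prop :=
  ∀ x y z : p.Rep, q / 2 ≤ dist x z → q / 2 ≤ dist z y →
    r ≤ dist x z + dist z y - dist x y

/-- The open set of spaces close to a space with quantitatively positive surplus. -/
def goodSet (q : ℝ) : Set GHSpace :=
  ⋃ (r : ℝ) (_ : 0 < r) (cen : GHSpace) (_ : Good q r cen), ball cen (min (q / 4) (r / 6))

theorem isOpen_goodSet (q : ℝ) : IsOpen (goodSet q) := by
  refine isOpen_iUnion fun r => isOpen_iUnion fun _ => isOpen_iUnion fun cen =>
    isOpen_iUnion fun _ => isOpen_ball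

theorem dense_goodSet {q : ℝ} (hq : 0 < q) : Dense (goodSet q) := by
  rw [Metric.dense_iff]
  intro p ε hε
  have hc : (0 : ℝ) < ε / 3 := by linarith
  obtain ⟨t, htf, htcov⟩ := (Metric.totallyBounded_iff.1
    (isCompact_univ (X := p.Rep)).totallyBounded) (ε / 3) hc
  have htn : t.Nonempty := by
    obtain ⟨x⟩ := (inferInstance : Nonempty p.Rep)
    obtain ⟨y, hy, -⟩ := mem_iUnion₂.1 (htcov (mem_univ x))
    exact ⟨y, hy⟩
  letI := PertAux.metric (X := ↥t) hc
  haveI : Finite ↥t := htf.to_subtype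
  haveI : Nonempty ↥t := htn.to_subtype
  have hcov : ∀ x : p.Rep, ∃ y ∈ t, dist x y ≤ ε / 3 := by
    intro x
    obtain ⟨y, hy, hxy⟩ := mem_iUnion₂.1 (htcov (mem_univ x))
    exact ⟨y, hy, (mem_ball.1 hxy).le⟩
  have hgh : ghDist p.Rep (PertAux ↥t (ε / 3)) ≤ ε / 3 + (ε / 3) / 2 :=
    ghDist_pert_le htf htn hc hcov
  set Y := toGHSpace (PertAux ↥t (ε / 3)) with hY
  refine ⟨Y, mem_ball.2 ?_, ?_⟩
  · have : dist Y p = ghDist p.Rep (PertAux ↥t (ε / 3)) := by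
      rw [dist_comm, ghDist, p.toGHSpace_rep]
    rw [this]; linarith
  · have hGood : Good q (ε / 3) Y := by
      have hrep : toGHSpace Y.Rep = toGHSpace (PertAux ↥t (ε / 3)) := by
        rw [← hY, Y.toGHSpace_rep]
      obtain ⟨e⟩ := (toGHSpace_eq_toGHSpace_iff_isometryEquiv.1 hrep)
      intro x y z hxz hzy
      have := PertAux.good (X := ↥t) hc hq (e x) (e y) (e z)
        (by rwa [e.dist_eq]) (by rwa [e.dist_eq])
      rwa [e.dist_eq, e.dist_eq, e.dist_eq] at this
    refine mem_iUnion.2 ⟨ε / 3, mem_iUnion.2 ⟨hc, mem_iUnion.2 ⟨Y, mem_iUnion.2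
      ⟨hGood, mem_ball.2 ?_⟩⟩⟩⟩
    rw [dist_self]
    exact lt_min (by linarith) (by linarith)

end NoCollinearAux

/-- In a generic compact metric space, three pairwise distinct points are never collinear. -/
theorem residual_noCollinear :
    {p : GHSpace | ∀ x y z : p.Rep, dist x y = dist x z + dist z y → z = x ∨ z = y} ∈
      residual GHSpace := by
  have hmem : (⋂ n : ℕ, goodSet (1 / ((n : ℝ) + 1))) ∈ residual GHSpace :=
    countable_iInter_mem.2 fun n =>
      residual_of_dense_open (isOpen_goodSet _) (dense_goodSet (by positivity))
  refine Filter.mem_of_superset hmem ?_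
  intro p hp x y z hcol
  by_contra hcon
  push_neg at hcon
  obtain ⟨hzx, hzy⟩ := hcon
  have h1 : 0 < dist x z := dist_pos.2 fun h => hzx h.symm
  have h2 : 0 < dist z y := dist_pos.2 hzy
  obtain ⟨n, hn⟩ := exists_nat_one_div_lt (lt_min h1 h2)
  have hq : (0 : ℝ) < 1 / ((n : ℝ) + 1) := by positivity
  have hp' := mem_iInter.1 hp n
  rw [goodSet] at hp'
  simp only [Set.mem_iUnion] at hp'
  obtain ⟨r, hr, cen, hGood, hball⟩ := hp'
  have hgh : ghDist cen.Rep p.Rep < min ((1 / ((n : ℝ) + 1)) / 4) (r / 6) := by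
    rw [← dist_ghDist, dist_comm]
    exact Metric.mem_ball.1 hball
  have := no_bad hq cen.Rep p.Rep hGood hgh x y z
    (le_of_lt (lt_of_lt_of_le hn (min_le_left _ _)))
    (le_of_lt (lt_of_lt_of_le hn (min_le_right _ _)))
  linarith [hcol]
end

section
/- A generic compact metric space is perfect; that is, the set of compact metric spaces without isolated points is residual in the Gromov-Hausdorff space. -/
open GromovHausdorff Metric Set

/-- Every point has a distinct point within distance `ε`. -/
private def GHPp (ε : ℝ) (X : Type*) [MetricSpace X] : Prop :=
  ∀ x : X, ∃ y : X, 0 < dist x y ∧ dist x y < ε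

private lemma GHPp_of_isometryEquiv {ε : ℝ} {A B : Type*} [MetricSpace A] [MetricSpace B]
    (e : A ≃ᵢ B) (h : GHPp ε B) : GHPp ε A := by
  intro x
  obtain ⟨y, hy0, hyε⟩ := h (e x)
  refine ⟨e.symm y, ?_, ?_⟩ <;>
    · have : dist x (e.symm y) = dist (e x) y := by
        rw [← e.dist_eq x (e.symm y), e.apply_symm_apply]
      rw [this]; assumption

private def GHUU (ε : ℝ) : Set GHSpace := {p | GHPp ε p.Rep}

private lemma GHUU_open {ε : ℝ} (hε : 0 < ε) : IsOpen (GHUU ε) := by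
  rw [Metric.isOpen_iff]
  intro p hp
  choose y hy0 hyε using hp
  set d : p.Rep → ℝ := fun x => dist x (y x) with hd
  -- cover by small balls
  have hcov : (univ : Set p.Rep) ⊆ ⋃ x : p.Rep, ball x (min (d x / 2) ((ε - d x) / 2)) := by
    intro x _
    refine mem_iUnion.2 ⟨x, ?_⟩
    have h1 : 0 < d x := hy0 x
    have h2 : d x < ε := hyε x
    rw [mem_ball, dist_self]
    exact lt_min (by linarith) (by linarith)
  obtain ⟨t, ht⟩ := isCompact_univ.elim_finite_subcover _ (fun x => isOpen_ball) hcov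
  have htne : t.Nonempty := by
    by_contra h
    rw [Finset.not_nonempty_iff_eq_empty] at h
    obtain ⟨x⟩ := (inferInstance : Nonempty p.Rep)
    have := ht (mem_univ x)
    simp [h] at this
  set a := t.inf' htne (fun x => d x / 2) with ha
  set b := t.sup' htne (fun x => (d x + ε) / 2) with hb
  have ha0 : 0 < a := by
    rw [ha, Finset.lt_inf'_iff]
    intro x _
    have := hy0 x
    linarith
  have hbε : b < ε := by
    rw [hb, Finset.sup'_lt_iff]
    intro x _
    have := hyε x
    linarith
  -- uniform version
  have key : ∀ x' : p.Rep, ∃ y', a ≤ dist x' y' ∧ dist x' y' ≤ b := by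
    intro x'
    have hx' := ht (mem_univ x')
    rw [mem_iUnion₂] at hx'
    obtain ⟨x, hxt, hx⟩ := hx'
    rw [mem_ball, lt_min_iff] at hx
    refine ⟨y x, ?_, ?_⟩
    · have h1 : a ≤ d x / 2 := Finset.inf'_le _ hxt
      have h2 : d x ≤ dist x x' + dist x' (y x) := dist_triangle x x' (y x)
      have h3 : dist x x' = dist x' x := dist_comm _ _
      linarith [hx.1]
    · have h1 : (d x + ε) / 2 ≤ b := Finset.le_sup' (fun x => (d x + ε) / 2) hxt
      have h2 : dist x' (y x) ≤ dist x' x + dist x (y x) := dist_triangle _ _ _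
      linarith [hx.2]
  refine ⟨min (a / 3) ((ε - b) / 3), lt_min (by linarith) (by linarith), ?_⟩
  intro q hq
  rw [mem_ball, dist_comm, dist_ghDist] at hq
  obtain ⟨Φ, Ψ, hΦ, hΨ, hD⟩ := ghDist_eq_hausdorffDist p.Rep q.Rep
  rw [hD] at hq
  have fin : EMetric.hausdorffEdist (range Φ) (range Ψ) ≠ ⊤ :=
    hausdorffEdist_ne_top_of_nonempty_of_bounded (range_nonempty _) (range_nonempty _)
      (isCompact_range hΦ.continuous).isBounded (isCompact_range hΨ.continuous).isBounded
  set δ := min (a / 3) ((ε - b) / 3) with hδ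
  have hδa : δ ≤ a / 3 := min_le_left _ _
  have hδb : δ ≤ (ε - b) / 3 := min_le_right _ _
  intro x'
  obtain ⟨_, ⟨x, rfl⟩, hx⟩ :=
    exists_dist_lt_of_hausdorffDist_lt' (mem_range_self x') hq fin
  obtain ⟨y', hy'1, hy'2⟩ := key x
  obtain ⟨_, ⟨w, rfl⟩, hw⟩ :=
    exists_dist_lt_of_hausdorffDist_lt (mem_range_self y') hq fin
  refine ⟨w, ?_, ?_⟩
  · have h1 : dist x y' = dist (Φ x) (Φ y') := (hΦ.dist_eq _ _).symm
    have h2 : dist x' w = dist (Ψ x') (Ψ w) := (hΨ.dist_eq _ _).symm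
    have h3 : dist (Φ x) (Φ y') ≤ dist (Φ x) (Ψ x') + dist (Ψ x') (Ψ w) + dist (Ψ w) (Φ y') :=
      dist_triangle4 _ _ _ _
    have h4 : dist (Φ x) (Ψ x') = dist (Ψ x') (Φ x) := dist_comm _ _
    have h5 : dist (Ψ w) (Φ y') = dist (Φ y') (Ψ w) := dist_comm _ _
    linarith
  · have h1 : dist x y' = dist (Φ x) (Φ y') := (hΦ.dist_eq _ _).symm
    have h2 : dist x' w = dist (Ψ x') (Ψ w) := (hΨ.dist_eq _ _).symm
    have h3 : dist (Ψ x') (Ψ w) ≤ dist (Ψ x') (Φ x) + dist (Φ x) (Φ y') + dist (Φ y') (Ψ w) :=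
      dist_triangle4 _ _ _ _
    have h4 : dist (Ψ x') (Φ x) = dist (Φ x) (Ψ x') := dist_comm _ _
    linarith

private lemma GHUU_dense {ε : ℝ} (hε : 0 < ε) : Dense (GHUU ε) := by
  rw [Metric.dense_iff]
  intro p r hr
  set η : ℝ := min r ε / 2 with hη
  have hη0 : 0 < η := by positivity
  have hηr : η < r := by
    have : min r ε ≤ r := min_le_left _ _
    rw [hη]; linarith
  have hηε : η < ε := by
    have : min r ε ≤ ε := min_le_right _ _
    rw [hη]; linarith
  -- two-point space
  haveI hTc : CompactSpace ({0, η} : Set ℝ) :=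
    isCompact_iff_compactSpace.mp (Set.toFinite _).isCompact
  haveI hTn : Nonempty ({0, η} : Set ℝ) := ⟨⟨0, by simp⟩⟩
  set Y := p.Rep × ({0, η} : Set ℝ) with hY
  have distY : ∀ u v : Y, dist u v = max (dist u.1 v.1) |((u.2 : ℝ)) - (v.2 : ℝ)| := by
    intro u v
    rcases u with ⟨u1, u2⟩
    rcases v with ⟨v1, v2⟩
    rw [Prod.dist_eq]
    have h2 : dist u2 v2 = |(u2 : ℝ) - (v2 : ℝ)| := by
      rw [Subtype.dist_eq, Real.dist_eq]
    rw [h2]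
  -- the embedding
  set Φ : p.Rep → Y := fun x => (x, ⟨0, by simp⟩) with hΦdef
  have hΦ : Isometry Φ := Isometry.of_dist_eq fun x₁ x₂ => by
    rw [distY]
    show max (dist x₁ x₂) |((0 : ℝ)) - (0 : ℝ)| = dist x₁ x₂
    simp [max_eq_left dist_nonneg]
  have hGH : ghDist p.Rep Y ≤ η := by
    refine le_trans (ghDist_le_hausdorffDist hΦ (isometry_id (α := Y))) ?_
    have hr2 : range (id : Y → Y) = univ := range_id
    rw [hr2]
    refine hausdorffDist_le_of_mem_dist hη0.le ?_ ?_
    · intro z _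
      exact ⟨z, mem_univ _, by rw [dist_self]; exact hη0.le⟩
    · rintro ⟨x, t⟩ _
      refine ⟨Φ x, mem_range_self _, ?_⟩
      have ht2 : (t : ℝ) = 0 ∨ (t : ℝ) = η := by
        have h2 := t.2
        simp only [Set.mem_insert_iff, Set.mem_singleton_iff] at h2
        exact h2
      rw [distY]
      rcases ht2 with h | h <;>
        simp [hΦdef, h, dist_self, abs_of_nonneg hη0.le, hη0.le, max_le_iff]
  -- Y has the property
  have hYP : GHPp ε Y := by
    rintro ⟨x, t⟩
    have ht2 : (t : ℝ) = 0 ∨ (t : ℝ) = η := by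
      have h2 := t.2
      simp only [Set.mem_insert_iff, Set.mem_singleton_iff] at h2
      exact h2
    rcases ht2 with h | h
    · refine ⟨(x, ⟨η, by simp⟩), ?_⟩
      have hdd : dist ((x, t) : Y) (x, ⟨η, by simp⟩) = η := by
        rw [distY]
        simp [h, dist_self, zero_sub, abs_neg, abs_of_nonneg hη0.le,
          max_eq_right hη0.le]
      rw [hdd]
      exact ⟨hη0, hηε⟩
    · refine ⟨(x, ⟨0, by simp⟩), ?_⟩
      have hdd : dist ((x, t) : Y) (x, ⟨0, by simp⟩) = η := by
        rw [distY]
        simp [h, dist_self, sub_zero, abs_of_nonneg hη0.le,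
          max_eq_right hη0.le]
      rw [hdd]
      exact ⟨hη0, hηε⟩
  refine ⟨toGHSpace Y, ?_, ?_⟩
  · rw [mem_ball']
    have : dist p (toGHSpace Y) = ghDist p.Rep Y := by
      rw [ghDist, p.toGHSpace_rep]
    rw [this]
    exact lt_of_le_of_lt hGH hηr
  · have heq : toGHSpace ((toGHSpace Y).Rep) = toGHSpace Y := (toGHSpace Y).toGHSpace_rep
    obtain ⟨e⟩ := (toGHSpace_eq_toGHSpace_iff_isometryEquiv).mp heq
    exact GHPp_of_isometryEquiv e hYP

/-- A generic compact metric space is perfect (has no isolated point). -/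
theorem residual_perfect :
    {p : GHSpace | Perfect (Set.univ : Set p.Rep)} ∈ residual GHSpace := by
  have H : (⋂ n : ℕ, GHUU (1 / (n + 1))) ∈ residual GHSpace := by
    rw [countable_iInter_mem]
    intro n
    have hpos : (0 : ℝ) < 1 / (n + 1) := by positivity
    exact residual_of_dense_open (GHUU_open hpos) (GHUU_dense hpos)
  refine Filter.mem_of_superset H ?_
  intro p hp
  refine ⟨isClosed_univ, ?_⟩
  intro x _
  rw [accPt_iff_nhds]
  intro U hU
  obtain ⟨ε, hε, hball⟩ := Metric.mem_nhds_iff.mp hU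
  obtain ⟨n, hn⟩ := exists_nat_one_div_lt hε
  obtain ⟨y, hy0, hyε⟩ := Set.mem_iInter.mp hp n x
  refine ⟨y, ⟨hball ?_, mem_univ _⟩, ?_⟩
  · rw [mem_ball']
    exact hyε.trans hn
  · intro h
    rw [h, dist_self] at hy0
    exact lt_irrefl _ hy0
end

section
/- Perfect compact metric spaces are dense in the Gromov-Hausdorff space: for every finite metric space F with codiameter greater than ε > 0, the space F × [0,ε] with distance d((a,s),(b,t)) = d_F(a,b) + s + t if a ≠ b and |s − t| if a = b is a perfect compact metric space at Gromov-Hausdorff distance at most ε from F. -/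
open GromovHausdorff

private lemma ghDist_le_aux {F : Type*} [MetricSpace F] [Nonempty F] [CompactSpace F]
    {X : Type*} [MetricSpace X] [Nonempty X] [CompactSpace X] {ε : ℝ} (hε : 0 ≤ ε)
    (Φ : F → X) (hΦ : Isometry Φ) (hcov : ∀ x : X, ∃ a : F, dist x (Φ a) ≤ ε) :
    ghDist F X ≤ ε := by
  have h1 : ghDist F X ≤ Metric.hausdorffDist (Set.range Φ) (Set.range (id : X → X)) :=
    ghDist_le_hausdorffDist hΦ isometry_id
  rw [Set.range_id] at h1
  refine h1.trans (Metric.hausdorffDist_le_of_mem_dist hε ?_ ?_)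
  · rintro x ⟨a, rfl⟩
    exact ⟨Φ a, trivial, by simpa using hε⟩
  · rintro x -
    obtain ⟨a, ha⟩ := hcov x
    exact ⟨Φ a, ⟨a, rfl⟩, ha⟩

/-- Density of perfect spaces: for a finite metric space `F` and `0 < ε` less than the
codiameter of `F`, the set `F × [0, ε]` can be endowed with the metric
`d((a,s),(b,t)) = d_F(a,b) + s + t` if `a ≠ b` and `|s - t|` if `a = b`, and with this metric
it is a perfect compact metric space at Gromov-Hausdorff distance at most `ε` from `F`. -/
theorem perfect_approximation_of_finite (F : Type*) [MetricSpace F] [Fintype F] [Nonempty F]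
    [DecidableEq F] (ε : ℝ) (hε : 0 < ε) (hcdm : ∀ a b : F, a ≠ b → ε < dist a b) :
    ∃ m : MetricSpace (F × Set.Icc (0 : ℝ) ε),
      (∀ p q : F × Set.Icc (0 : ℝ) ε,
        m.dist p q = if p.1 = q.1 then |(p.2 : ℝ) - (q.2 : ℝ)|
          else dist p.1 q.1 + (p.2 : ℝ) + (q.2 : ℝ)) ∧
      ∃ (hc : @CompactSpace _ m.toUniformSpace.toTopologicalSpace)
        (hne : Nonempty (F × Set.Icc (0 : ℝ) ε)),
        @Perfect _ m.toUniformSpace.toTopologicalSpace Set.univ ∧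
        @ghDist F (F × Set.Icc (0 : ℝ) ε) _ _ _ m hne hc ≤ ε := by
  set X := F × Set.Icc (0 : ℝ) ε with hXdef
  have hnonneg : ∀ p : X, (0 : ℝ) ≤ (p.2 : ℝ) := fun p => p.2.2.1
  have hle : ∀ p : X, (p.2 : ℝ) ≤ ε := fun p => p.2.2.2
  let d : X → X → ℝ := fun p q =>
    if p.1 = q.1 then |(p.2 : ℝ) - (q.2 : ℝ)| else dist p.1 q.1 + (p.2 : ℝ) + (q.2 : ℝ)
  have d_self : ∀ p : X, d p p = 0 := by intro p; simp [d]
  have d_comm : ∀ p q : X, d p q = d q p := by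
    intro p q
    by_cases h : p.1 = q.1
    · simp only [d, if_pos h, if_pos h.symm, abs_sub_comm]
    · simp only [d, if_neg h, if_neg (Ne.symm h), dist_comm]; ring
  have d_big : ∀ p q : X, p.1 ≠ q.1 → ε < d p q := by
    intro p q h
    simp only [d, if_neg h]
    have := hcdm _ _ h
    have := hnonneg p; have := hnonneg q
    linarith
  have d_triangle : ∀ p q r : X, d p r ≤ d p q + d q r := by
    intro p q r
    by_cases h1 : p.1 = q.1 <;> by_cases h2 : q.1 = r.1
    · have h3 : p.1 = r.1 := h1.trans h2
      simp only [d, if_pos h1, if_pos h2, if_pos h3]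
      exact abs_sub_le _ _ _
    · have h3 : p.1 ≠ r.1 := fun h => h2 (h1.symm.trans h)
      simp only [d, if_pos h1, if_neg h2, if_neg h3, h1]
      have := le_abs_self ((p.2 : ℝ) - (q.2 : ℝ))
      linarith
    · have h3 : p.1 ≠ r.1 := fun h => h1 (h.trans h2.symm)
      simp only [d, if_neg h1, if_pos h2, if_neg h3, h2]
      have := le_abs_self ((r.2 : ℝ) - (q.2 : ℝ))
      have := abs_sub_comm ((q.2 : ℝ)) ((r.2 : ℝ))
      linarith
    · by_cases h3 : p.1 = r.1
      · simp only [d, if_neg h1, if_neg h2, if_pos h3]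
        have hd1 : (0 : ℝ) ≤ dist p.1 q.1 := dist_nonneg
        have hd2 : (0 : ℝ) ≤ dist q.1 r.1 := dist_nonneg
        have h4 : |(p.2 : ℝ) - (r.2 : ℝ)| ≤ (p.2 : ℝ) + (r.2 : ℝ) := by
          have := hnonneg p; have := hnonneg r
          rw [abs_le]; constructor <;> linarith
        have := hnonneg q
        linarith
      · simp only [d, if_neg h1, if_neg h2, if_neg h3]
        have := dist_triangle p.1 q.1 r.1
        have := hnonneg q
        linarith
  have d_eq : ∀ p q : X, d p q = 0 → p = q := by
    intro p q h
    by_cases h1 : p.1 = q.1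
    · simp only [d, if_pos h1] at h
      have h2 : (p.2 : ℝ) = (q.2 : ℝ) := by
        have := abs_eq_zero.1 h; linarith
      exact Prod.ext h1 (Subtype.ext h2)
    · exact absurd h (by have := d_big p q h1; intro h'; linarith)
  -- topology compatibility
  have H : ∀ s : Set X, IsOpen s ↔ ∀ x ∈ s, ∃ δ > 0, ∀ y, d x y < δ → y ∈ s := by
    intro s
    constructor
    · intro hs x hx
      let ι : Set.Icc (0 : ℝ) ε → X := fun t => (x.1, t)
      have hι : Continuous ι := continuous_const.prodMk continuous_id
      have hop : IsOpen (ι ⁻¹' s) := hs.preimage hι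
      have hx2 : x.2 ∈ ι ⁻¹' s := by
        show (x.1, x.2) ∈ s
        simpa using hx
      obtain ⟨δ₁, hδ₁, hball⟩ := Metric.isOpen_iff.1 hop x.2 hx2
      refine ⟨min δ₁ ε, lt_min hδ₁ hε, fun y hy => ?_⟩
      by_cases h1 : x.1 = y.1
      · have hyd : d x y = |(x.2 : ℝ) - (y.2 : ℝ)| := if_pos h1
        have hmem : y.2 ∈ Metric.ball x.2 δ₁ := by
          rw [Metric.mem_ball, Subtype.dist_eq, Real.dist_eq]
          rw [hyd] at hy
          calc |(y.2 : ℝ) - (x.2 : ℝ)| = |(x.2 : ℝ) - (y.2 : ℝ)| := abs_sub_comm _ _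
            _ < min δ₁ ε := hy
            _ ≤ δ₁ := min_le_left _ _
        have := hball hmem
        have : (x.1, y.2) ∈ s := this
        rwa [show (x.1, y.2) = y from Prod.ext h1 rfl] at this
      · exact absurd hy (by have := d_big x y h1; push_neg; exact le_trans (min_le_right _ _) this.le)
    · intro h
      rw [isOpen_iff_mem_nhds]
      intro x hx
      obtain ⟨δ, hδ, hball⟩ := h x hx
      have hN : {y : X | y.1 = x.1 ∧ |(y.2 : ℝ) - (x.2 : ℝ)| < δ} ∈ nhds x := by
        have h1 : IsOpen {y : X | y.1 = x.1} :=
          (isOpen_discrete {x.1}).preimage continuous_fst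
        have h2 : IsOpen {y : X | |(y.2 : ℝ) - (x.2 : ℝ)| < δ} := by
          have : Continuous fun y : X => |(y.2 : ℝ) - (x.2 : ℝ)| :=
            ((continuous_subtype_val.comp continuous_snd).sub continuous_const).abs
          exact isOpen_lt this continuous_const
        have := (h1.inter h2).mem_nhds (by simp [hδ] : x ∈ _)
        simpa [Set.setOf_and] using this
      refine Filter.mem_of_superset hN ?_
      rintro y ⟨hy1, hy2⟩
      apply hball
      have : d x y = |(x.2 : ℝ) - (y.2 : ℝ)| := if_pos hy1.symm
      rw [this, abs_sub_comm]
      exact hy2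
  let m : MetricSpace X := MetricSpace.ofDistTopology d d_self d_comm d_triangle H d_eq
  have hdist_eq : ∀ p q : X, m.dist p q = d p q := fun p q => rfl
  have hc : @CompactSpace X m.toUniformSpace.toTopologicalSpace :=
    inferInstanceAs (CompactSpace X)
  have hne : Nonempty X := ⟨⟨Classical.arbitrary F, ⟨0, le_refl 0, hε.le⟩⟩⟩
  refine ⟨m, fun p q => rfl, hc, hne, ?_, ?_⟩
  · -- Perfect
    show Perfect (Set.univ : Set X)
    refine ⟨isClosed_univ, preperfect_iff_nhds.2 fun x _ U hU => ?_⟩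
    obtain ⟨V, hVU, hV, hxV⟩ := mem_nhds_iff.1 hU
    let ι : Set.Icc (0 : ℝ) ε → X := fun t => (x.1, t)
    have hι : Continuous ι := continuous_const.prodMk continuous_id
    have hop : IsOpen (ι ⁻¹' V) := hV.preimage hι
    have hx2 : x.2 ∈ ι ⁻¹' V := by show (x.1, x.2) ∈ V; simpa using hxV
    obtain ⟨δ, hδ, hball⟩ := Metric.isOpen_iff.1 hop x.2 hx2
    set t : ℝ := (x.2 : ℝ) with ht
    set c : ℝ := min (δ / 2) (ε / 2) with hcdef
    have hc0 : 0 < c := lt_min (by linarith) (by linarith)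
    have hcδ : c < δ := lt_of_le_of_lt (min_le_left _ _) (by linarith)
    have hcε : c ≤ ε / 2 := min_le_right _ _
    have ht0 : 0 ≤ t := x.2.2.1
    have htε : t ≤ ε := x.2.2.2
    by_cases hcase : t ≤ ε / 2
    · have hmem : t + c ∈ Set.Icc (0 : ℝ) ε := ⟨by linarith, by linarith⟩
      have hballmem : (⟨t + c, hmem⟩ : Set.Icc (0 : ℝ) ε) ∈ Metric.ball x.2 δ := by
        rw [Metric.mem_ball, Subtype.dist_eq, Real.dist_eq]
        simp only
        rw [show t + c - t = c by ring, abs_of_pos hc0]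
        exact hcδ
      refine ⟨(x.1, ⟨t + c, hmem⟩), ⟨hVU (hball hballmem), trivial⟩, ?_⟩
      intro heq
      have : (⟨t + c, hmem⟩ : Set.Icc (0 : ℝ) ε) = x.2 := congrArg Prod.snd heq
      have : t + c = t := congrArg Subtype.val this
      linarith
    · push_neg at hcase
      have hmem : t - c ∈ Set.Icc (0 : ℝ) ε := ⟨by linarith, by linarith⟩
      have hballmem : (⟨t - c, hmem⟩ : Set.Icc (0 : ℝ) ε) ∈ Metric.ball x.2 δ := by
        rw [Metric.mem_ball, Subtype.dist_eq, Real.dist_eq]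
        simp only
        rw [show t - c - t = -c by ring, abs_neg, abs_of_pos hc0]
        exact hcδ
      refine ⟨(x.1, ⟨t - c, hmem⟩), ⟨hVU (hball hballmem), trivial⟩, ?_⟩
      intro heq
      have : (⟨t - c, hmem⟩ : Set.Icc (0 : ℝ) ε) = x.2 := congrArg Prod.snd heq
      have : t - c = t := congrArg Subtype.val this
      linarith
  · -- ghDist
    let z : Set.Icc (0 : ℝ) ε := ⟨0, le_refl 0, hε.le⟩
    refine @ghDist_le_aux F _ _ _ X m hne hc ε hε.le (fun a => (a, z)) ?_ ?_
    · refine @Isometry.of_dist_eq F X _ m.toPseudoMetricSpace _ fun a b => ?_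
      show d (a, z) (b, z) = dist a b
      by_cases h : a = b
      · subst h; simp [d]
      · simp only [d, if_neg h]
        show dist a b + ((0 : ℝ)) + ((0 : ℝ)) = dist a b
        ring
    · intro x
      refine ⟨x.1, ?_⟩
      show d x (x.1, z) ≤ ε
      have h1 : d x (x.1, z) = |(x.2 : ℝ) - ((0 : ℝ))| := if_pos rfl
      rw [h1, sub_zero, abs_of_nonneg (hnonneg x)]
      exact hle x
end

section
/- A generic compact metric space is homeomorphic to the Cantor set; that is, the set of compact metric spaces homeomorphic to the Cantor set is residual in the Gromov-Hausdorff space. -/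
open GromovHausdorff

section CantorGenericHelpers
open Metric Set

open Metric Set

section Lists
variable {X : Type*}

/-- Union of a list of sets. -/
def lUnion (l : List (Set X)) : Set X := l.foldr (· ∪ ·) ∅

@[simp] lemma lUnion_nil : lUnion ([] : List (Set X)) = ∅ := rfl
@[simp] lemma lUnion_cons (A : Set X) (l : List (Set X)) :
    lUnion (A :: l) = A ∪ lUnion l := rfl

lemma mem_lUnion {l : List (Set X)} {x : X} : x ∈ lUnion l ↔ ∃ A ∈ l, x ∈ A := by
  induction l with
  | nil => simp
  | cons A l ih => simp [ih]

lemma lUnion_subset {l : List (Set X)} {K : Set X} (h : ∀ A ∈ l, A ⊆ K) :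
    lUnion l ⊆ K := by
  intro x hx
  rcases mem_lUnion.1 hx with ⟨A, hA, hxA⟩
  exact h A hA hxA

lemma isClopen_lUnion [TopologicalSpace X] {l : List (Set X)} (h : ∀ A ∈ l, IsClopen A) :
    IsClopen (lUnion l) := by
  induction l with
  | nil => simpa using isClopen_empty
  | cons A l ih =>
    simp only [lUnion_cons]
    exact (h A (by simp)).union (ih fun B hB => h B (by simp [hB]))

/-- Disjointify a list of sets. -/
def disL : List (Set X) → List (Set X)
  | [] => []
  | A :: l => A :: (disL l).map (· \ A)

lemma lUnion_map_diff (l : List (Set X)) (A : Set X) :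
    lUnion (l.map (· \ A)) = lUnion l \ A := by
  induction l with
  | nil => simp
  | cons B l ih => simp [ih, union_diff_distrib]

lemma lUnion_disL (l : List (Set X)) : lUnion (disL l) = lUnion l := by
  induction l with
  | nil => rfl
  | cons A l ih =>
    simp only [disL, lUnion_cons, lUnion_map_diff, ih]
    rw [union_diff_self]

lemma disL_subset {l : List (Set X)} {B : Set X} (hB : B ∈ disL l) :
    ∃ A ∈ l, B ⊆ A := by
  induction l generalizing B with
  | nil => simp [disL] at hB
  | cons A l ih =>
    simp only [disL, List.mem_cons, List.mem_map] at hB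
    rcases hB with rfl | ⟨C, hC, rfl⟩
    · exact ⟨B, by simp, subset_rfl⟩
    · rcases ih hC with ⟨A', hA', hCA'⟩
      exact ⟨A', by simp [hA'], diff_subset.trans hCA'⟩

lemma disL_clopen [TopologicalSpace X] {l : List (Set X)} (h : ∀ A ∈ l, IsClopen A)
    {B : Set X} (hB : B ∈ disL l) : IsClopen B := by
  induction l generalizing B with
  | nil => simp [disL] at hB
  | cons A l ih =>
    simp only [disL, List.mem_cons, List.mem_map] at hB
    rcases hB with rfl | ⟨C, hC, rfl⟩
    · exact h B (by simp)
    · exact (ih (fun A' hA' => h A' (by simp [hA'])) hC).diff (h A (by simp))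

lemma disL_pairwise (l : List (Set X)) : (disL l).Pairwise Disjoint := by
  induction l with
  | nil => simp [disL]
  | cons A l ih =>
    refine List.Pairwise.cons ?_ ?_
    · intro B hB
      rcases List.mem_map.1 hB with ⟨C, _, rfl⟩
      exact disjoint_sdiff_self_right
    · exact ih.map _ (fun B C hBC => hBC.mono diff_subset diff_subset)

lemma lUnion_filter_nonempty (f : Set X → Bool) (hf : ∀ A, f A = true ↔ A.Nonempty)
    (l : List (Set X)) :
    lUnion (l.filter f) = lUnion l := by
  induction l with
  | nil => rfl
  | cons A l ih =>
    by_cases h : f A = true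
    · simp [List.filter_cons, h, ih]
    · simp only [List.filter_cons, h, if_false, Bool.false_eq_true, ih]
      have : A = ∅ := by
        rw [← not_nonempty_iff_eq_empty, ← hf]; simpa using h
      simp [this]

end Lists
open Metric Set

section Plan
variable {X : Type*} [MetricSpace X] [CompactSpace X] [TotallyDisconnectedSpace X]

/-- Specification of a partition step: a list of at least two pairwise-disjoint nonempty
clopen sets of diameter `< ε` whose union is `K`. -/
def PlanOk (K : Set X) (ε : ℝ) (P : List (Set X)) : Prop :=
  2 ≤ P.length ∧ P.Pairwise Disjoint ∧ lUnion P = K ∧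
    ∀ A ∈ P, A.Nonempty ∧ IsClopen A ∧ diam A < ε

lemma exists_plan (hp : ∀ (x : X) (r : ℝ), 0 < r → ∃ y, y ≠ x ∧ dist y x < r)
    {K : Set X} (hKne : K.Nonempty) (hK : IsClopen K) {ε : ℝ} (hε : 0 < ε) :
    ∃ P, PlanOk K ε P := by
  classical
  have hKc : IsCompact K := hK.isClosed.isCompact
  -- clopen neighborhoods of small diameter
  have hV : ∀ x : X, ∃ V : Set X, IsClopen V ∧ x ∈ V ∧ V ⊆ ball x (ε / 3) := fun x =>
    compact_exists_isClopen_in_isOpen isOpen_ball (mem_ball_self (by positivity))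
  choose V hVclopen hVmem hVsub using hV
  obtain ⟨t, ht⟩ := hKc.elim_finite_subcover V (fun x => (hVclopen x).2)
    (fun x hx => mem_iUnion.2 ⟨x, hVmem x⟩)
  -- disjointify the cover intersected with K, and drop empty pieces
  set l₀ : List (Set X) := t.toList.map (fun x => V x ∩ K) with hl₀
  set l₂ : List (Set X) := (disL l₀).filter (fun A => decide A.Nonempty) with hl₂
  have hl₀clopen : ∀ A ∈ l₀, IsClopen A := by
    intro A hA
    rcases List.mem_map.1 hA with ⟨x, _, rfl⟩
    exact (hVclopen x).inter hK
  have hl₀union : lUnion l₀ = K := by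
    ext z
    simp only [mem_lUnion, hl₀, List.mem_map, Finset.mem_toList]
    constructor
    · rintro ⟨A, ⟨x, _, rfl⟩, hz⟩; exact hz.2
    · intro hz
      rcases mem_iUnion₂.1 (ht hz) with ⟨x, hx, hzx⟩
      exact ⟨V x ∩ K, ⟨x, hx, rfl⟩, hzx, hz⟩
  have hl₂union : lUnion l₂ = K := by
    rw [hl₂, lUnion_filter_nonempty (fun A => decide A.Nonempty) (fun A => by simp),
      lUnion_disL, hl₀union]
  have hl₂pw : l₂.Pairwise Disjoint := (disL_pairwise l₀).sublist List.filter_sublist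
  have hl₂props : ∀ A ∈ l₂, A.Nonempty ∧ IsClopen A ∧ diam A < ε := by
    intro A hA
    rw [hl₂, List.mem_filter] at hA
    obtain ⟨hA₁, hA₂⟩ := hA
    refine ⟨by simpa using hA₂, disL_clopen hl₀clopen hA₁, ?_⟩
    rcases disL_subset hA₁ with ⟨B, hB, hAB⟩
    rcases List.mem_map.1 hB with ⟨x, _, rfl⟩
    calc diam A ≤ diam (ball x (ε / 3)) := by
          refine diam_mono (hAB.trans ?_) isBounded_ball
          exact inter_subset_left.trans (hVsub x)
      _ ≤ 2 * (ε / 3) := diam_ball (by positivity)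
      _ < ε := by linarith
  -- if there are at least two pieces, we are done
  rcases le_or_gt 2 l₂.length with h2 | h2
  · exact ⟨l₂, h2, hl₂pw, hl₂union, hl₂props⟩
  -- otherwise `K` itself has diameter `< ε`; split it in two by hand
  have hKdiam : diam K < ε := by
    obtain ⟨z, hz⟩ := hKne
    have hz' : z ∈ lUnion l₂ := hl₂union.symm ▸ hz
    rcases mem_lUnion.1 hz' with ⟨A, hA, _⟩
    have hpos := List.length_pos_iff.2 (List.ne_nil_of_mem hA)
    have hlen : l₂.length = 1 := by omega
    rcases List.length_eq_one_iff.1 hlen with ⟨B, hB⟩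
    have hKB : K = B := by rw [← hl₂union, hB]; simp
    rw [hKB]
    exact (hl₂props B (by simp [hB])).2.2
  obtain ⟨x, hx⟩ := hKne
  have hKopen : IsOpen K := hK.2
  rcases Metric.mem_nhds_iff.1 (hKopen.mem_nhds hx) with ⟨r, hr, hrK⟩
  obtain ⟨y, hyx, hyr⟩ := hp x r hr
  have hyK : y ∈ K := hrK (by simpa [mem_ball] using hyr)
  have hxU : x ∈ K ∩ {y}ᶜ := ⟨hx, by simp [hyx.symm]⟩
  obtain ⟨W, hWclopen, hxW, hWsub⟩ :=
    compact_exists_isClopen_in_isOpen (hKopen.inter isOpen_compl_singleton) hxU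
  have hWK : W ⊆ K := hWsub.trans inter_subset_left
  refine ⟨[W, K \ W], by simp, ?_, ?_, ?_⟩
  · refine List.pairwise_cons.2 ⟨?_, by simp⟩
    intro B hB
    rcases List.mem_singleton.1 hB with rfl
    exact disjoint_sdiff_self_right
  · simp only [lUnion_cons, lUnion_nil, union_empty]
    rw [union_diff_cancel hWK]
  · intro A hA
    have hKb : Bornology.IsBounded K := hKc.isBounded
    simp only [List.mem_cons, List.mem_singleton, List.not_mem_nil, or_false] at hA
    rcases hA with rfl | rfl
    · exact ⟨⟨x, hxW⟩, hWclopen, lt_of_le_of_lt (diam_mono hWK hKb) hKdiam⟩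
    · refine ⟨⟨y, hyK, fun hyW => (hWsub hyW).2 rfl⟩, ?_, ?_⟩
      · rw [diff_eq]
        exact hK.inter hWclopen.compl
      · exact lt_of_le_of_lt (diam_mono diff_subset hKb) hKdiam

end Plan

lemma two_le_cons {α : Type*} {l : List α} (h : 2 ≤ l.length) :
    ∃ A rest, l = A :: rest ∧ rest ≠ [] := by
  match l with
  | A :: B :: rest => exact ⟨A, B :: rest, rfl, by simp⟩
  | [] => simp at h
  | [A] => simp at h

section Tree
variable {X : Type*} [MetricSpace X] [CompactSpace X] [TotallyDisconnectedSpace X] [Nonempty X]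
variable (hp : ∀ (x : X) (r : ℝ), 0 < r → ∃ y, y ≠ x ∧ dist y x < r)

open Classical in
/-- A choice of partition plan for a clopen set at stage `n`. -/
noncomputable def planF (K : Set X) (n : ℕ) : List (Set X) :=
  if h : K.Nonempty ∧ IsClopen K then
    (exists_plan hp h.1 h.2 (by positivity : (0:ℝ) < 1 / (n + 1))).choose
  else []

lemma planF_ok {K : Set X} (h1 : K.Nonempty) (h2 : IsClopen K) (n : ℕ) :
    PlanOk K (1 / (n + 1)) (planF hp K n) := by
  rw [planF, dif_pos ⟨h1, h2⟩]
  exact (exists_plan hp h1 h2 (by positivity)).choose_spec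

/-- One step of the construction: the state is the current piece together with the queue of
pieces still to be split off; `b` chooses the child. -/
noncomputable def stepF (n : ℕ) (st : Set X × List (Set X)) (b : Bool) : Set X × List (Set X) :=
  match (if 2 ≤ st.2.length then st.2 else planF hp st.1 n) with
  | [] => (st.1, [])
  | A :: rest => if b then (lUnion rest, rest) else (A, [])

/-- The state at a node of the binary tree (the list is the reversed path from the root). -/
noncomputable def stateF : List Bool → Set X × List (Set X)
  | [] => (Set.univ, [])
  | b :: s => stepF hp s.length (stateF s) b

def InvSt (st : Set X × List (Set X)) : Prop :=
  st.1.Nonempty ∧ IsClopen st.1 ∧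
    (st.2 = [] ∨ (st.2.Pairwise Disjoint ∧ lUnion st.2 = st.1 ∧
      ∀ A ∈ st.2, A.Nonempty ∧ IsClopen A))

lemma inv_and_step : ∀ s : List Bool, InvSt (stateF hp s) ∧
    ∃ A rest, rest ≠ [] ∧
      stateF hp (false :: s) = (A, []) ∧ stateF hp (true :: s) = (lUnion rest, rest) ∧
      lUnion (A :: rest) = (stateF hp s).1 ∧ (A :: rest).Pairwise Disjoint ∧
      (∀ B ∈ A :: rest, B.Nonempty ∧ IsClopen B) ∧
      (2 ≤ (stateF hp s).2.length → A :: rest = (stateF hp s).2) ∧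
      (¬ 2 ≤ (stateF hp s).2.length → ∀ B ∈ A :: rest, diam B < 1 / (s.length + 1)) := by
  have key : ∀ s : List Bool, InvSt (stateF hp s) → ∃ A rest, rest ≠ [] ∧
      stateF hp (false :: s) = (A, []) ∧ stateF hp (true :: s) = (lUnion rest, rest) ∧
      lUnion (A :: rest) = (stateF hp s).1 ∧ (A :: rest).Pairwise Disjoint ∧
      (∀ B ∈ A :: rest, B.Nonempty ∧ IsClopen B) ∧
      (2 ≤ (stateF hp s).2.length → A :: rest = (stateF hp s).2) ∧
      (¬ 2 ≤ (stateF hp s).2.length → ∀ B ∈ A :: rest, diam B < 1 / (s.length + 1)) := by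
    intro s hinv
    obtain ⟨hne, hcl, hq⟩ := hinv
    set st := stateF hp s with hst
    -- the effective list used at this step
    have main : ∃ A rest, (if 2 ≤ st.2.length then st.2 else planF hp st.1 s.length)
        = A :: rest ∧ rest ≠ [] ∧ lUnion (A :: rest) = st.1 ∧
        (A :: rest).Pairwise Disjoint ∧ (∀ B ∈ A :: rest, B.Nonempty ∧ IsClopen B) ∧
        (¬ 2 ≤ st.2.length → ∀ B ∈ A :: rest, diam B < 1 / (s.length + 1)) := by
      by_cases h2 : 2 ≤ st.2.length
      · rcases hq with hq | ⟨hpw, hun, hprops⟩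
        · rw [hq] at h2; simp at h2
        obtain ⟨A, rest, hl, hrne⟩ := two_le_cons h2
        rw [hl] at hpw hun hprops
        exact ⟨A, rest, by rw [if_pos h2, hl], hrne, hun, hpw, hprops,
          fun h => absurd h2 h⟩
      · obtain ⟨hlen, hpw', hun', hprops'⟩ := planF_ok hp hne hcl s.length
        obtain ⟨A, rest, hl, hrne⟩ := two_le_cons hlen
        rw [hl] at hpw' hun' hprops'
        exact ⟨A, rest, by rw [if_neg h2, hl], hrne, hun', hpw',
          fun C hC => ⟨(hprops' C hC).1, (hprops' C hC).2.1⟩,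
          fun _ C hC => (hprops' C hC).2.2⟩
    obtain ⟨A, rest, heff, hrne, hun, hpw, hprops, hsmall⟩ := main
    have hfalse : stateF hp (false :: s) = (A, []) := by
      show stepF hp s.length st false = _
      rw [stepF, heff]; simp
    have htrue : stateF hp (true :: s) = (lUnion rest, rest) := by
      show stepF hp s.length st true = _
      rw [stepF, heff]; simp
    refine ⟨A, rest, hrne, hfalse, htrue, hun, hpw, hprops, ?_, hsmall⟩
    intro h2
    rw [if_pos h2] at heff
    exact heff.symm
  intro s
  induction s with
  | nil =>
    have h0 : InvSt (stateF hp ([] : List Bool)) :=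
      ⟨Set.univ_nonempty, isClopen_univ, Or.inl rfl⟩
    exact ⟨h0, key [] h0⟩
  | cons b s ih =>
    obtain ⟨A, rest, hrne, hfalse, htrue, hun, hpw, hprops, _, _⟩ := ih.2
    have hinv : InvSt (stateF hp (b :: s)) := by
      cases b
      · rw [hfalse]
        exact ⟨(hprops A (by simp)).1, (hprops A (by simp)).2, Or.inl rfl⟩
      · rw [htrue]
        obtain ⟨C, rest', hr⟩ := List.exists_cons_of_ne_nil hrne
        refine ⟨?_, ?_, Or.inr ⟨(List.pairwise_cons.1 hpw).2, rfl, ?_⟩⟩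
        · obtain ⟨z, hz⟩ := (hprops C (by simp [hr])).1
          exact ⟨z, mem_lUnion.2 ⟨C, by simp [hr], hz⟩⟩
        · exact isClopen_lUnion fun B hB => (hprops B (by simp [hB])).2
        · exact fun B hB => hprops B (by simp [hB])
    exact ⟨hinv, key _ hinv⟩

lemma inv_stateF (s : List Bool) : InvSt (stateF hp s) := (inv_and_step hp s).1

lemma step_full (s : List Bool) :
    ∃ A rest, rest ≠ [] ∧
      stateF hp (false :: s) = (A, []) ∧ stateF hp (true :: s) = (lUnion rest, rest) ∧
      lUnion (A :: rest) = (stateF hp s).1 ∧ (A :: rest).Pairwise Disjoint ∧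
      (∀ B ∈ A :: rest, B.Nonempty ∧ IsClopen B) ∧
      (2 ≤ (stateF hp s).2.length → A :: rest = (stateF hp s).2) ∧
      (¬ 2 ≤ (stateF hp s).2.length → ∀ B ∈ A :: rest, diam B < 1 / (s.length + 1)) :=
  (inv_and_step hp s).2

lemma child_subset (s : List Bool) (b : Bool) :
    (stateF hp (b :: s)).1 ⊆ (stateF hp s).1 := by
  obtain ⟨A, rest, _, hfalse, htrue, hun, _, _, _, _⟩ := step_full hp s
  cases b
  · rw [hfalse, ← hun]; exact fun x hx => mem_lUnion.2 ⟨A, by simp, hx⟩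
  · rw [htrue, ← hun]
    intro x hx
    rcases mem_lUnion.1 hx with ⟨B, hB, hxB⟩
    exact mem_lUnion.2 ⟨B, by simp [hB], hxB⟩

lemma child_union (s : List Bool) :
    (stateF hp (false :: s)).1 ∪ (stateF hp (true :: s)).1 = (stateF hp s).1 := by
  obtain ⟨A, rest, _, hfalse, htrue, hun, _, _, _, _⟩ := step_full hp s
  rw [hfalse, htrue, ← hun]
  simp [lUnion_cons]

lemma child_disjoint (s : List Bool) :
    Disjoint (stateF hp (false :: s)).1 (stateF hp (true :: s)).1 := by
  obtain ⟨A, rest, _, hfalse, htrue, _, hpw, _, _, _⟩ := step_full hp s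
  rw [hfalse, htrue]
  rw [Set.disjoint_left]
  intro x hxA hxr
  rcases mem_lUnion.1 hxr with ⟨B, hB, hxB⟩
  exact Set.disjoint_left.1 ((List.pairwise_cons.1 hpw).1 B hB) hxA hxB

end Tree

section Mesh
variable {X : Type*} [MetricSpace X] [CompactSpace X] [TotallyDisconnectedSpace X] [Nonempty X]
variable (hp : ∀ (x : X) (r : ℝ), 0 < r → ∃ y, y ≠ x ∧ dist y x < r)

/-- Reversed prefix of a branch. -/
def pre (σ : ℕ → Bool) : ℕ → List Bool
  | 0 => []
  | n + 1 => σ n :: pre σ n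

@[simp] lemma pre_length (σ : ℕ → Bool) (n : ℕ) : (pre σ n).length = n := by
  induction n with
  | zero => rfl
  | succ n ih => simp [pre, ih]

lemma pre_congr {σ τ : ℕ → Bool} {n : ℕ} (h : ∀ i < n, σ i = τ i) :
    pre σ n = pre τ n := by
  induction n with
  | zero => rfl
  | succ n ih =>
    simp only [pre]
    rw [h n (by omega), ih fun i hi => h i (by omega)]

/-- The piece of the branch `σ` at level `n`. -/
noncomputable def KK (σ : ℕ → Bool) (n : ℕ) : Set X := (stateF hp (pre σ n)).1

lemma KK_nonempty (σ : ℕ → Bool) (n : ℕ) : (KK hp σ n).Nonempty :=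
  (inv_stateF hp (pre σ n)).1

lemma KK_clopen (σ : ℕ → Bool) (n : ℕ) : IsClopen (KK hp σ n) :=
  (inv_stateF hp (pre σ n)).2.1

lemma KK_succ_subset (σ : ℕ → Bool) (n : ℕ) : KK hp σ (n + 1) ⊆ KK hp σ n :=
  child_subset hp (pre σ n) (σ n)

lemma KK_subset {σ : ℕ → Bool} {n m : ℕ} (h : n ≤ m) : KK hp σ m ⊆ KK hp σ n := by
  induction m with
  | zero => rw [Nat.le_zero.1 h]
  | succ m ih =>
    rcases Nat.lt_or_ge n (m + 1) with h' | h'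
    · exact (KK_succ_subset hp σ m).trans (ih (by omega))
    · rw [le_antisymm h h']

lemma diam_KK_mono {σ : ℕ → Bool} {n m : ℕ} (h : n ≤ m) :
    diam (KK hp σ m) ≤ diam (KK hp σ n) :=
  diam_mono (KK_subset hp h) (KK_clopen hp σ n).isClosed.isCompact.isBounded

lemma reach_replan (σ : ℕ → Bool) :
    ∀ q n, (stateF hp (pre σ n)).2.length ≤ q →
      ∃ m, n ≤ m ∧ (stateF hp (pre σ m)).2.length ≤ 1 := by
  intro q
  induction q with
  | zero => exact fun n h => ⟨n, le_rfl, by omega⟩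
  | succ q ih =>
    intro n h
    by_cases h1 : (stateF hp (pre σ n)).2.length ≤ 1
    · exact ⟨n, le_rfl, h1⟩
    obtain ⟨A, rest, hrne, hfalse, htrue, _, _, _, heq, _⟩ := step_full hp (pre σ n)
    have h2 : 2 ≤ (stateF hp (pre σ n)).2.length := by omega
    have hAr := heq h2
    have hpre : pre σ (n + 1) = σ n :: pre σ n := rfl
    cases hb : σ n with
    | false =>
      have : (stateF hp (pre σ (n + 1))).2 = [] := by rw [hpre, hb, hfalse]
      obtain ⟨m, hm, hm1⟩ := ih (n + 1) (by rw [this]; simp)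
      exact ⟨m, by omega, hm1⟩
    | true =>
      have : (stateF hp (pre σ (n + 1))).2 = rest := by rw [hpre, hb, htrue]
      have hlen : rest.length ≤ q := by
        have : (A :: rest).length = (stateF hp (pre σ n)).2.length := by rw [hAr]
        simp only [List.length_cons] at this
        omega
      obtain ⟨m, hm, hm1⟩ := ih (n + 1) (by rw [this]; exact hlen)
      exact ⟨m, by omega, hm1⟩

lemma small_exit (σ : ℕ → Bool) (c : ℝ) :
    ∀ q n, 1 ≤ (stateF hp (pre σ n)).2.length → (stateF hp (pre σ n)).2.length ≤ q →
      (∀ B ∈ (stateF hp (pre σ n)).2, diam B < c) →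
      lUnion (stateF hp (pre σ n)).2 = KK hp σ n →
      ∃ m, n ≤ m ∧ diam (KK hp σ m) < c := by
  intro q
  induction q with
  | zero => intro n h1 h0; omega
  | succ q ih =>
    intro n h1 hq hsmall hun
    by_cases hone : (stateF hp (pre σ n)).2.length = 1
    · obtain ⟨B, hB⟩ := List.length_eq_one_iff.1 hone
      refine ⟨n, le_rfl, ?_⟩
      have : KK hp σ n = B := by rw [← hun, hB]; simp
      rw [this]
      exact hsmall B (by simp [hB])
    obtain ⟨A, rest, hrne, hfalse, htrue, _, _, _, heq, _⟩ := step_full hp (pre σ n)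
    have h2 : 2 ≤ (stateF hp (pre σ n)).2.length := by omega
    have hAr := heq h2
    have hpre : pre σ (n + 1) = σ n :: pre σ n := rfl
    cases hb : σ n with
    | false =>
      refine ⟨n + 1, by omega, ?_⟩
      have : KK hp σ (n + 1) = A := by
        show (stateF hp (pre σ (n+1))).1 = A
        rw [hpre, hb, hfalse]
      rw [this]
      exact hsmall A (by rw [← hAr]; simp)
    | true =>
      have hst : stateF hp (pre σ (n + 1)) = (lUnion rest, rest) := by rw [hpre, hb, htrue]
      have hlen : rest.length ≤ q := by
        have : (A :: rest).length = (stateF hp (pre σ n)).2.length := by rw [hAr]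
        simp only [List.length_cons] at this
        omega
      obtain ⟨m, hm, hmd⟩ := ih (n + 1)
        (by rw [hst]; exact List.length_pos_iff.2 hrne)
        (by rw [hst]; exact hlen)
        (by rw [hst]; intro B hB; exact hsmall B (by rw [← hAr]; simp [hB]))
        (by show lUnion (stateF hp (pre σ (n+1))).2 = (stateF hp (pre σ (n+1))).1
            rw [hst])
      exact ⟨m, by omega, hmd⟩

lemma replan_small (σ : ℕ → Bool) (n : ℕ) (h1 : (stateF hp (pre σ n)).2.length ≤ 1) :
    ∃ m, n ≤ m ∧ diam (KK hp σ m) < 1 / (n + 1) := by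
  obtain ⟨A, rest, hrne, hfalse, htrue, _, _, _, _, hsmall⟩ := step_full hp (pre σ n)
  have h2 : ¬ 2 ≤ (stateF hp (pre σ n)).2.length := by omega
  have hsm := hsmall h2
  rw [pre_length] at hsm
  have hpre : pre σ (n + 1) = σ n :: pre σ n := rfl
  cases hb : σ n with
  | false =>
    refine ⟨n + 1, by omega, ?_⟩
    have : KK hp σ (n + 1) = A := by
      show (stateF hp (pre σ (n+1))).1 = A
      rw [hpre, hb, hfalse]
    rw [this]
    exact hsm A (by simp)
  | true =>
    have hst : stateF hp (pre σ (n + 1)) = (lUnion rest, rest) := by rw [hpre, hb, htrue]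
    obtain ⟨m, hm, hmd⟩ := small_exit hp σ (1 / (n + 1)) rest.length (n + 1)
      (by rw [hst]; exact List.length_pos_iff.2 hrne)
      (by rw [hst])
      (by rw [hst]; intro B hB; exact hsm B (by simp [hB]))
      (by show lUnion (stateF hp (pre σ (n+1))).2 = (stateF hp (pre σ (n+1))).1
          rw [hst])
    exact ⟨m, by omega, hmd⟩

lemma mesh (σ : ℕ → Bool) {ε : ℝ} (hε : 0 < ε) :
    ∃ n₀, ∀ m, n₀ ≤ m → diam (KK hp σ m) < ε := by
  obtain ⟨k, hk⟩ := exists_nat_one_div_lt hε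
  obtain ⟨m₁, hm₁, hm₁len⟩ := reach_replan hp σ (stateF hp (pre σ k)).2.length k le_rfl
  obtain ⟨m₂, hm₂, hm₂d⟩ := replan_small hp σ m₁ hm₁len
  refine ⟨m₂, fun m hm => lt_of_le_of_lt (diam_KK_mono hp hm) ?_⟩
  calc diam (KK hp σ m₂) < 1 / (m₁ + 1) := hm₂d
    _ ≤ 1 / (k + 1) := by
        apply one_div_le_one_div_of_le (by positivity)
        exact_mod_cast by omega
    _ < ε := hk

end Mesh

section Brouwer
variable {X : Type*} [MetricSpace X] [CompactSpace X] [TotallyDisconnectedSpace X] [Nonempty X]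
variable (hp : ∀ (x : X) (r : ℝ), 0 < r → ∃ y, y ≠ x ∧ dist y x < r)

lemma iInter_KK_nonempty (σ : ℕ → Bool) : (⋂ n, KK hp σ n).Nonempty :=
  IsCompact.nonempty_iInter_of_sequence_nonempty_isCompact_isClosed _
    (KK_succ_subset hp σ) (KK_nonempty hp σ)
    (KK_clopen hp σ 0).isClosed.isCompact (fun n => (KK_clopen hp σ n).isClosed)

/-- The canonical map from the Cantor space onto `X`. -/
noncomputable def ff (σ : ℕ → Bool) : X := (iInter_KK_nonempty hp σ).choose

lemma ff_mem (σ : ℕ → Bool) (n : ℕ) : ff hp σ ∈ KK hp σ n := by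
  have := (iInter_KK_nonempty hp σ).choose_spec
  exact Set.mem_iInter.1 this n

lemma dist_le_of_mem_KK {σ : ℕ → Bool} {n : ℕ} {x y : X}
    (hx : x ∈ KK hp σ n) (hy : y ∈ KK hp σ n) : dist x y ≤ diam (KK hp σ n) :=
  dist_le_diam_of_mem (KK_clopen hp σ n).isClosed.isCompact.isBounded hx hy

lemma ff_injective : Function.Injective (ff hp) := by
  intro σ τ h
  by_contra hne
  obtain ⟨n, hn, hmin⟩ : ∃ n, σ n ≠ τ n ∧ ∀ i < n, σ i = τ i := by
    have hex : ∃ n, σ n ≠ τ n := by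
      by_contra hc
      push_neg at hc
      exact hne (funext hc)
    exact ⟨Nat.find hex, Nat.find_spec hex, fun i hi => by
      have := Nat.find_min hex hi; simpa using this⟩
  have hpre : pre σ n = pre τ n := pre_congr hmin
  have hσ : ff hp σ ∈ (stateF hp (σ n :: pre σ n)).1 := ff_mem hp σ (n + 1)
  have hτ : ff hp τ ∈ (stateF hp (τ n :: pre σ n)).1 := by
    have h1 : ff hp τ ∈ (stateF hp (pre τ (n + 1))).1 := ff_mem hp τ (n + 1)
    rwa [show pre τ (n + 1) = τ n :: pre τ n from rfl, ← hpre] at h1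
  rw [h] at hσ
  have hdisj := child_disjoint hp (pre σ n)
  cases hbσ : σ n with
  | false =>
    have hbτ : τ n = true := by
      cases hbτ : τ n
      · rw [hbσ, hbτ] at hn; exact absurd rfl hn
      · rfl
    rw [hbσ] at hσ; rw [hbτ] at hτ
    exact Set.disjoint_left.1 hdisj hσ hτ
  | true =>
    have hbτ : τ n = false := by
      cases hbτ : τ n
      · rfl
      · rw [hbσ, hbτ] at hn; exact absurd rfl hn
    rw [hbσ] at hσ; rw [hbτ] at hτ
    exact Set.disjoint_left.1 hdisj hτ hσ

open Classical in
/-- The branch through a point. -/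
noncomputable def path (x : X) : ℕ → List Bool
  | 0 => []
  | n + 1 => (if x ∈ (stateF hp (false :: path x n)).1 then false else true) :: path x n

lemma path_mem (x : X) (n : ℕ) : x ∈ (stateF hp (path hp x n)).1 := by
  induction n with
  | zero => exact Set.mem_univ x
  | succ n ih =>
    classical
    show x ∈ (stateF hp ((if x ∈ (stateF hp (false :: path hp x n)).1 then false else true)
      :: path hp x n)).1
    by_cases hx : x ∈ (stateF hp (false :: path hp x n)).1
    · rwa [if_pos hx]
    · rw [if_neg hx]
      have := child_union hp (path hp x n)
      rw [← this] at ih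
      rcases ih with h | h
      · exact absurd h hx
      · exact h

lemma ff_surjective : Function.Surjective (ff hp) := by
  intro x
  classical
  set σ : ℕ → Bool := fun n => (path hp x (n + 1)).headI with hσ
  have hps : ∀ n, pre σ n = path hp x n := by
    intro n
    induction n with
    | zero => rfl
    | succ n ih =>
      show σ n :: pre σ n = path hp x (n + 1)
      rw [ih, hσ]
      show (path hp x (n + 1)).headI :: path hp x n = path hp x (n + 1)
      rfl
  refine ⟨σ, ?_⟩
  have hxin : ∀ n, x ∈ KK hp σ n := fun n => by
    rw [KK, hps n]; exact path_mem hp x n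
  have hdist : ∀ ε : ℝ, 0 < ε → dist (ff hp σ) x < ε := by
    intro ε hε
    obtain ⟨n₀, hn₀⟩ := mesh hp σ hε
    exact lt_of_le_of_lt (dist_le_of_mem_KK hp (ff_mem hp σ n₀) (hxin n₀)) (hn₀ n₀ le_rfl)
  have : dist (ff hp σ) x = 0 := by
    by_contra hc
    have hd : 0 < dist (ff hp σ) x := lt_of_le_of_ne dist_nonneg (Ne.symm hc)
    exact absurd (hdist _ hd) (lt_irrefl _)
  exact dist_eq_zero.1 this

lemma ff_continuous : Continuous (ff hp) := by
  rw [continuous_iff_continuousAt]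
  intro σ
  rw [ContinuousAt, Metric.tendsto_nhds]
  intro ε hε
  obtain ⟨n₀, hn₀⟩ := mesh hp σ (half_pos hε)
  have hU : {τ : ℕ → Bool | ∀ i < n₀, τ i = σ i} ∈ nhds σ := by
    have heq : {τ : ℕ → Bool | ∀ i < n₀, τ i = σ i}
        = ⋂ i ∈ Finset.range n₀, {τ : ℕ → Bool | τ i = σ i} := by
      ext τ
      simp [Finset.mem_range]
    rw [heq]
    rw [Filter.biInter_finset_mem]
    intro i _
    have heq2 : {τ : ℕ → Bool | τ i = σ i} = (fun τ : ℕ → Bool => τ i) ⁻¹' {σ i} := rfl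
    rw [heq2]
    exact (IsOpen.preimage (continuous_apply i) (isOpen_discrete _)).mem_nhds rfl
  refine Filter.eventually_of_mem hU ?_
  intro τ hτ
  have hpre : pre τ n₀ = pre σ n₀ := pre_congr hτ
  have hmem : ff hp τ ∈ KK hp σ n₀ := by
    have h1 : ff hp τ ∈ (stateF hp (pre τ n₀)).1 := ff_mem hp τ n₀
    rwa [hpre] at h1
  calc dist (ff hp τ) (ff hp σ)
      ≤ diam (KK hp σ n₀) := dist_le_of_mem_KK hp hmem (ff_mem hp σ n₀)
    _ < ε / 2 := hn₀ n₀ le_rfl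
    _ < ε := by linarith

/-- Brouwer's theorem: a nonempty compact metric space which is totally disconnected and has
no isolated points is homeomorphic to the Cantor space. -/
theorem brouwer_cantor (hp0 : ∀ (x : X) (r : ℝ), 0 < r → ∃ y, y ≠ x ∧ dist y x < r) :
    Nonempty (X ≃ₜ (ℕ → Bool)) := by
  have hbij : Function.Bijective (ff hp0) := ⟨ff_injective hp0, ff_surjective hp0⟩
  exact ⟨(Continuous.homeoOfEquivCompactToT2 (f := Equiv.ofBijective (ff hp0) hbij)
    (ff_continuous hp0)).symm⟩

end Brouwer

section GH
open GromovHausdorff Bornology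

abbrev LinftyR : Type := ↥(lp (fun _ : ℕ => ℝ) (⊤ : ENNReal))
local notation "ℓ_infty_ℝ" => LinftyR

/-- δ-chain reachability. -/
def chainRel (Z : Type*) [MetricSpace Z] (δ : ℝ) : Z → Z → Prop :=
  Relation.ReflTransGen (fun a b => dist a b ≤ δ)

/-- The (open) set of spaces where small chains move points less than `1/(n+1)`. -/
def USet (n : ℕ) : Set GHSpace :=
  {p | ∃ δ > 0, ∃ c : ℝ, 0 ≤ c ∧ c < 1 / ((n : ℝ) + 1) ∧
    ∀ x y : p.Rep, chainRel _ δ x y → dist x y ≤ c}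

/-- The (open) set of spaces where every point has a companion at distance within `(a, b)`,
`b < 1/(n+1)`. -/
def VSet (n : ℕ) : Set GHSpace :=
  {p | ∃ a b : ℝ, 0 < a ∧ a < b ∧ b < 1 / ((n : ℝ) + 1) ∧
    ∀ x : p.Rep, ∃ y : p.Rep, a < dist x y ∧ dist x y < b}

/-- An almost-optimal coupling realizing a bound on the GH distance. -/
lemma couple {p q : GHSpace} {r : ℝ} (h : dist p q < r) :
    ∃ Φ : p.Rep → ℓ_infty_ℝ, ∃ Ψ : q.Rep → ℓ_infty_ℝ, Isometry Φ ∧ Isometry Ψ ∧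
      (∀ x, ∃ x', dist (Φ x) (Ψ x') < r) ∧ (∀ x', ∃ x, dist (Φ x) (Ψ x') < r) := by
  obtain ⟨Φ, Ψ, hΦ, hΨ, hd⟩ := ghDist_eq_hausdorffDist p.Rep q.Rep
  rw [← dist_ghDist] at hd
  have hbΦ : IsBounded (Set.range Φ) := (isCompact_range hΦ.continuous).isBounded
  have hbΨ : IsBounded (Set.range Ψ) := (isCompact_range hΨ.continuous).isBounded
  have hne : EMetric.hausdorffEdist (Set.range Φ) (Set.range Ψ) ≠ ⊤ :=
    Metric.hausdorffEdist_ne_top_of_nonempty_of_bounded (Set.range_nonempty _)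
      (Set.range_nonempty _) hbΦ hbΨ
  have hlt : Metric.hausdorffDist (Set.range Φ) (Set.range Ψ) < r := by rw [← hd]; exact h
  refine ⟨Φ, Ψ, hΦ, hΨ, ?_, ?_⟩
  · intro x
    obtain ⟨z, hz, hzd⟩ :=
      Metric.exists_dist_lt_of_hausdorffDist_lt (Set.mem_range_self x) hlt hne
    obtain ⟨x', rfl⟩ := hz
    exact ⟨x', hzd⟩
  · intro x'
    obtain ⟨z, hz, hzd⟩ :=
      Metric.exists_dist_lt_of_hausdorffDist_lt' (Set.mem_range_self x') hlt hne
    obtain ⟨x, rfl⟩ := hz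
    exact ⟨x, hzd⟩

lemma USet_open (n : ℕ) : IsOpen (USet n) := by
  rw [Metric.isOpen_iff]
  rintro p ⟨δ, hδ, c, hc0, hc, hchain⟩
  have hgap : 0 < 1 / (n + 1 : ℝ) - c := by linarith
  set r : ℝ := min (δ / 4) ((1 / (n + 1) - c) / 8) with hr
  have hrpos : 0 < r := by
    apply lt_min (by linarith) (by linarith)
  refine ⟨r, hrpos, ?_⟩
  intro q hq
  rw [Metric.mem_ball, dist_comm] at hq
  obtain ⟨Φ, Ψ, hΦ, hΨ, _, hba⟩ := couple hq
  choose G hG using hba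
  refine ⟨δ / 2, by linarith, c + 2 * r, by linarith, ?_, ?_⟩
  · have : r ≤ (1 / (n + 1) - c) / 8 := min_le_right _ _
    linarith
  · intro x y hxy
    have hlift : chainRel _ δ (G x) (G y) := by
      refine Relation.ReflTransGen.lift G (fun a b hab => (?_ : dist (G a) (G b) ≤ δ)) _ _ hxy
      have h1 : dist (G a) (G b) = dist (Φ (G a)) (Φ (G b)) := (hΦ.dist_eq _ _).symm
      have h2 : dist (Φ (G a)) (Φ (G b)) ≤
          dist (Φ (G a)) (Ψ a) + dist (Ψ a) (Ψ b) + dist (Ψ b) (Φ (G b)) :=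
        dist_triangle4 _ _ _ _
      have h3 : dist (Ψ a) (Ψ b) = dist a b := hΨ.dist_eq _ _
      have h4 : dist (Φ (G a)) (Ψ a) < r := hG a
      have h5 : dist (Ψ b) (Φ (G b)) < r := by rw [dist_comm]; exact hG b
      have hr4 : r ≤ δ / 4 := min_le_left _ _
      rw [h1]
      linarith
    have hGc : dist (G x) (G y) ≤ c := hchain _ _ hlift
    have e1 : dist x y = dist (Ψ x) (Ψ y) := (hΨ.dist_eq _ _).symm
    have e2 : dist (Ψ x) (Ψ y) ≤ dist (Ψ x) (Φ (G x)) + dist (Φ (G x)) (Φ (G y))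
        + dist (Φ (G y)) (Ψ y) := dist_triangle4 _ _ _ _
    have e3 : dist (Φ (G x)) (Φ (G y)) = dist (G x) (G y) := hΦ.dist_eq _ _
    have e4 : dist (Ψ x) (Φ (G x)) < r := by rw [dist_comm]; exact hG x
    have e5 : dist (Φ (G y)) (Ψ y) < r := hG y
    linarith

lemma VSet_open (n : ℕ) : IsOpen (VSet n) := by
  rw [Metric.isOpen_iff]
  rintro p ⟨a, b, ha, hab, hb, hV⟩
  have hgap : 0 < 1 / (n + 1 : ℝ) - b := by linarith
  set η : ℝ := min (a / 4) ((1 / (n + 1) - b) / 4) with hη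
  have hηpos : 0 < η := lt_min (by linarith) (by linarith)
  refine ⟨η, hηpos, ?_⟩
  intro q hq
  rw [Metric.mem_ball, dist_comm] at hq
  obtain ⟨Φ, Ψ, hΦ, hΨ, hab', hba'⟩ := couple hq
  have hηa : η ≤ a / 4 := min_le_left _ _
  have hηb : η ≤ (1 / (n + 1) - b) / 4 := min_le_right _ _
  refine ⟨a - 2 * η, b + 2 * η, by linarith, by linarith, by linarith, ?_⟩
  intro x'
  obtain ⟨x, hx⟩ := hba' x'
  obtain ⟨y, hay, hyb⟩ := hV x
  obtain ⟨y', hy'⟩ := hab' y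
  refine ⟨y', ?_, ?_⟩
  · have t1 : dist (Φ x) (Φ y) ≤ dist (Φ x) (Ψ x') + dist (Ψ x') (Ψ y') +
        dist (Ψ y') (Φ y) := dist_triangle4 _ _ _ _
    have e1 : dist (Φ x) (Φ y) = dist x y := hΦ.dist_eq _ _
    have e2 : dist (Ψ x') (Ψ y') = dist x' y' := hΨ.dist_eq _ _
    rw [dist_comm (Ψ y') (Φ y)] at t1
    linarith
  · have t1 : dist (Ψ x') (Ψ y') ≤ dist (Ψ x') (Φ x) + dist (Φ x) (Φ y) +
        dist (Φ y) (Ψ y') := dist_triangle4 _ _ _ _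
    have e1 : dist (Φ x) (Φ y) = dist x y := hΦ.dist_eq _ _
    have e2 : dist (Ψ x') (Ψ y') = dist x' y' := hΨ.dist_eq _ _
    rw [dist_comm (Ψ x') (Φ x)] at t1
    linarith

end GH

section Dense
open GromovHausdorff Bornology Metric

/-- In a finite metric space, sufficiently close points are equal. -/
lemma finite_sep (F : Type*) [MetricSpace F] [Finite F] :
    ∃ δ > 0, ∀ x y : F, dist x y ≤ δ → x = y := by
  classical
  set S : Set ℝ := Set.range (fun z : F × F => dist z.1 z.2) ∩ Set.Ioi 0 with hS
  have hSfin : S.Finite := (Set.finite_range _).inter_of_left _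
  by_cases hne : S.Nonempty
  · set m := hSfin.toFinset.min' (by rwa [hSfin.toFinset_nonempty]) with hm
    have hmS : m ∈ S := by
      rw [← hSfin.mem_toFinset]
      exact hSfin.toFinset.min'_mem _
    have hmpos : 0 < m := hmS.2
    refine ⟨m / 2, by linarith, ?_⟩
    intro x y hxy
    by_contra hxyne
    have hd : dist x y ∈ S := ⟨⟨(x, y), rfl⟩, dist_pos.2 hxyne⟩
    have := hSfin.toFinset.min'_le _ (hSfin.mem_toFinset.2 hd)
    rw [← hm] at this
    linarith
  · refine ⟨1, one_pos, ?_⟩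
    intro x y _
    by_contra hxyne
    exact hne ⟨dist x y, ⟨⟨(x, y), rfl⟩, dist_pos.2 hxyne⟩⟩

lemma rep_iso (Z : Type) [MetricSpace Z] [CompactSpace Z] [Nonempty Z] :
    Nonempty (Z ≃ᵢ (toGHSpace Z).Rep) :=
  toGHSpace_eq_toGHSpace_iff_isometryEquiv.1 (GHSpace.toGHSpace_rep (toGHSpace Z)).symm

lemma net_approx (p : GHSpace) {ε : ℝ} (hε : 0 < ε) :
    ∃ t : Set p.Rep, t.Finite ∧ t.Nonempty ∧
      ∀ (_ : Finite ↥t) (_ : Nonempty ↥t), dist p (toGHSpace ↥t) ≤ ε := by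
  obtain ⟨t, -, htfin, hcov⟩ :=
    finite_cover_balls_of_compact (isCompact_univ : IsCompact (Set.univ : Set p.Rep)) hε
  have htne : t.Nonempty := by
    obtain ⟨x⟩ := (inferInstance : Nonempty p.Rep)
    rcases Set.mem_iUnion₂.1 (hcov (Set.mem_univ x)) with ⟨y, hy, -⟩
    exact ⟨y, hy⟩
  refine ⟨t, htfin, htne, ?_⟩
  intro h1 h2
  have hdist : dist p (toGHSpace ↥t) = ghDist p.Rep ↥t := by
    rw [ghDist, GHSpace.toGHSpace_rep]
  rw [hdist]
  have hH : Metric.hausdorffDist (Set.range (id : p.Rep → p.Rep))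
      (Set.range (Subtype.val : ↥t → p.Rep)) ≤ ε := by
    rw [Set.range_id, Subtype.range_coe]
    apply Metric.hausdorffDist_le_of_mem_dist hε.le
    · intro x _
      rcases Set.mem_iUnion₂.1 (hcov (Set.mem_univ x)) with ⟨y, hy, hxy⟩
      exact ⟨y, hy, (Metric.mem_ball.1 hxy).le⟩
    · intro y hy
      exact ⟨y, Set.mem_univ y, by simpa using hε.le⟩
  exact le_trans (ghDist_le_hausdorffDist isometry_id isometry_subtype_coe) hH

lemma USet_dense (n : ℕ) : Dense (USet n) := by
  rw [Metric.dense_iff]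
  intro p ε hε
  obtain ⟨t, htfin, htne, hd⟩ := net_approx p (half_pos hε)
  haveI h1 : Finite ↥t := htfin.to_subtype
  haveI h2 : Nonempty ↥t := htne.to_subtype
  set q := toGHSpace ↥t with hq
  haveI : Finite q.Rep := by
    obtain ⟨e⟩ := rep_iso ↥t
    exact Finite.of_equiv _ e.toEquiv
  obtain ⟨δ, hδ, hsep⟩ := finite_sep q.Rep
  refine ⟨q, ?_, δ, hδ, 0, le_rfl, by positivity, ?_⟩
  · rw [Metric.mem_ball, dist_comm]
    exact lt_of_le_of_lt (hd h1 h2) (by linarith)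
  · intro x y hxy
    have : x = y := by
      induction hxy with
      | refl => rfl
      | tail _ hstep ih => exact ih.trans (hsep _ _ hstep)
    rw [this, dist_self]

lemma VSet_dense (n : ℕ) : Dense (VSet n) := by
  classical
  rw [Metric.dense_iff]
  intro p ε hε
  obtain ⟨t, htfin, htne, hd⟩ := net_approx p (by positivity : (0:ℝ) < ε / 4)
  haveI h1 : Finite ↥t := htfin.to_subtype
  haveI h2 : Nonempty ↥t := htne.to_subtype
  set w : ℝ := min (ε / 4) (1 / (2 * (n + 1))) with hw
  have hwpos : 0 < w := lt_min (by positivity) (by positivity)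
  have hwlt : w < 1 / ((n : ℝ) + 1) := by
    have h2n : (1 : ℝ) / (2 * (n + 1)) < 1 / (n + 1) := by
      apply div_lt_div_of_pos_left one_pos (by positivity)
      nlinarith [Nat.cast_nonneg (α := ℝ) n]
    exact lt_of_le_of_lt (min_le_right _ _) h2n
  set T : Set (p.Rep × ℝ) := t ×ˢ ({0, w} : Set ℝ) with hT
  haveI hTfin : Finite ↥T := (htfin.prod (Set.toFinite _)).to_subtype
  haveI hTne : Nonempty ↥T := by
    obtain ⟨y₀, hy₀⟩ := htne
    exact ⟨⟨(y₀, 0), hy₀, by simp⟩⟩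
  set q' := toGHSpace ↥T with hq'
  -- distance from the net to the doubled net
  have hΦiso : Isometry (fun x : ↥t => ((x : p.Rep), (0 : ℝ))) := by
    apply Isometry.of_dist_eq
    intro a b
    rw [Prod.dist_eq]
    simp [Subtype.dist_eq, dist_nonneg]
  have hd2 : dist (toGHSpace ↥t) q' ≤ w := by
    have hdist : dist (toGHSpace ↥t) q' = ghDist ↥t ↥T := rfl
    rw [hdist]
    have hH : Metric.hausdorffDist (Set.range (fun x : ↥t => ((x : p.Rep), (0 : ℝ))))
        (Set.range (Subtype.val : ↥T → p.Rep × ℝ)) ≤ w := by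
      rw [Subtype.range_coe]
      apply Metric.hausdorffDist_le_of_mem_dist hwpos.le
      · rintro z ⟨a, rfl⟩
        refine ⟨((a : p.Rep), (0 : ℝ)), Set.mk_mem_prod a.2 (by simp), by simp [hwpos.le]⟩
      · rintro ⟨x, c⟩ ⟨hx, hc⟩
        refine ⟨(fun a : ↥t => ((a : p.Rep), (0 : ℝ))) ⟨x, hx⟩, ⟨⟨x, hx⟩, rfl⟩, ?_⟩
        rw [Prod.dist_eq]
        simp only [dist_self]
        rcases hc with rfl | hc
        · simp [hwpos.le]
        · rw [Set.mem_singleton_iff] at hc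
          subst hc
          simp [Real.dist_eq, abs_of_nonneg hwpos.le, hwpos.le]
    exact le_trans (ghDist_le_hausdorffDist hΦiso isometry_subtype_coe) hH
  refine ⟨q', ?_, w / 2, (w + 1 / (n + 1)) / 2, by positivity, by linarith, by linarith, ?_⟩
  · rw [Metric.mem_ball, dist_comm]
    calc dist p q' ≤ dist p (toGHSpace ↥t) + dist (toGHSpace ↥t) q' := dist_triangle _ _ _
      _ ≤ ε / 4 + w := add_le_add (hd h1 h2) hd2
      _ ≤ ε / 4 + ε / 4 := by
          have := min_le_left (ε / 4) (1 / (2 * ((n : ℝ) + 1)))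
          linarith
      _ < ε := by linarith
  · -- every point of the doubled space has a companion at distance exactly w
    obtain ⟨e⟩ := rep_iso ↥T
    intro x
    set z : ↥T := e.symm x with hz
    have hz1 : z.1.1 ∈ t := z.2.1
    have hz2 : z.1.2 ∈ ({0, w} : Set ℝ) := z.2.2
    set c' : ℝ := if z.1.2 = 0 then w else 0 with hc'
    have hz' : (z.1.1, c') ∈ T := by
      refine ⟨hz1, ?_⟩
      by_cases h0 : z.1.2 = 0
      · rw [hc', if_pos h0]; simp
      · rw [hc', if_neg h0]; simp
    set z' : ↥T := ⟨(z.1.1, c'), hz'⟩ with hz'def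
    have hdzz : dist z z' = w := by
      rw [Subtype.dist_eq, hz'def, Prod.dist_eq]
      simp only [dist_self]
      rcases hz2 with h0 | hw2
      · rw [hc', if_pos h0, h0]
        simp [Real.dist_eq, abs_of_nonneg hwpos.le, hwpos.le]
      · rw [Set.mem_singleton_iff] at hw2
        rw [hc', if_neg (hw2 ▸ hwpos.ne'), hw2]
        simp [Real.dist_eq, abs_of_nonneg hwpos.le, hwpos.le]
    refine ⟨e z', ?_, ?_⟩
    · have : dist x (e z') = dist z z' := by
        conv_lhs => rw [show x = e z by rw [hz, e.apply_symm_apply]]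
        exact e.isometry.dist_eq _ _
      rw [this, hdzz]
      linarith
    · have : dist x (e z') = dist z z' := by
        conv_lhs => rw [show x = e z by rw [hz, e.apply_symm_apply]]
        exact e.isometry.dist_eq _ _
      rw [this, hdzz]
      linarith [hwlt]

end Dense

end CantorGenericHelpers


/-- A generic compact metric space is homeomorphic to the Cantor set (here represented by
the Cantor space `ℕ → Bool`). -/
theorem residual_homeomorphic_cantor :
    {p : GHSpace | Nonempty (p.Rep ≃ₜ (ℕ → Bool))} ∈ residual GHSpace := by
  have key : (⋂ n : ℕ, USet n ∩ VSet n) ∈ residual GHSpace := by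
    rw [countable_iInter_mem]
    intro n
    exact Filter.inter_mem (residual_of_dense_open (USet_open n) (USet_dense n))
      (residual_of_dense_open (VSet_open n) (VSet_dense n))
  refine Filter.mem_of_superset key ?_
  intro p hmem
  simp only [Set.mem_iInter, Set.mem_inter_iff] at hmem
  have hp0 : ∀ (x : p.Rep) (r : ℝ), 0 < r → ∃ y, y ≠ x ∧ dist y x < r := by
    intro x r hr
    obtain ⟨n, hn⟩ := exists_nat_one_div_lt hr
    obtain ⟨a, b, ha, hab, hb, hV⟩ := (hmem n).2
    obtain ⟨y, hay, hyb⟩ := hV x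
    refine ⟨y, ?_, ?_⟩
    · intro hyx
      rw [hyx, dist_self] at hay
      linarith
    · rw [dist_comm]
      have : (1 : ℝ) / (n + 1) < r := by exact_mod_cast hn
      linarith
  haveI htd : TotallyDisconnectedSpace p.Rep := by
    rw [totallyDisconnectedSpace_iff_connectedComponent_singleton]
    intro x
    apply Set.eq_singleton_iff_unique_mem.2
    refine ⟨mem_connectedComponent, ?_⟩
    intro y hy
    have hdist : ∀ n : ℕ, dist x y < 1 / ((n : ℝ) + 1) := by
      intro n
      obtain ⟨δ, hδ, c, hc0, hc, hchain⟩ := (hmem n).1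
      set S := {z : p.Rep | chainRel p.Rep δ x z} with hS
      have hSopen : IsOpen S := by
        rw [Metric.isOpen_iff]
        intro z hz
        refine ⟨δ, hδ, ?_⟩
        intro z' hz'
        rw [Metric.mem_ball, dist_comm] at hz'
        exact Relation.ReflTransGen.tail hz hz'.le
      have hSclosed : IsClosed S := by
        rw [← isOpen_compl_iff, Metric.isOpen_iff]
        intro z hz
        refine ⟨δ, hδ, ?_⟩
        intro z' hz'
        intro hz'S
        rw [Metric.mem_ball] at hz'
        exact hz (Relation.ReflTransGen.tail hz'S hz'.le)
      have hsub : connectedComponent x ⊆ S :=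
        IsClopen.connectedComponent_subset ⟨hSclosed, hSopen⟩ Relation.ReflTransGen.refl
      exact lt_of_le_of_lt (hchain x y (hsub hy)) hc
    have hzero : dist x y = 0 := by
      by_contra hne
      have hpos : 0 < dist x y := lt_of_le_of_ne dist_nonneg (Ne.symm hne)
      obtain ⟨n, hn⟩ := exists_nat_one_div_lt hpos
      have : (1 : ℝ) / (n + 1) < dist x y := by exact_mod_cast hn
      exact absurd (hdist n) (by push_neg; linarith)
    rw [dist_comm] at hzero
    exact dist_eq_zero.1 hzero
  exact brouwer_cantor hp0
end

section
/- For a generic compact metric space X, the set of distance values d(X) = {d(x,y) : x,y ∈ X} ⊆ ℝ is homeomorphic to the Cantor set. -/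
open GromovHausdorff

namespace CantorDistProof
open Set Metric GromovHausdorff
open scoped ENNReal


/-- A "good piece": nonempty compact subset of ℝ with no isolated points and
containing no nontrivial interval. -/
structure Pc (K : Set ℝ) : Prop where
  ne : K.Nonempty
  cpt : IsCompact K
  acc : ∀ x ∈ K, ∀ ε > 0, ∃ y ∈ K, y ≠ x ∧ |y - x| < ε
  noi : ∀ a b : ℝ, a < b → ¬ Icc a b ⊆ K

namespace Pc

variable {K : Set ℝ}

theorem sInf_mem (h : Pc K) : sInf K ∈ K := h.cpt.sInf_mem h.ne
theorem sSup_mem (h : Pc K) : sSup K ∈ K := h.cpt.sSup_mem h.ne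

theorem le_sSup (h : Pc K) {x : ℝ} (hx : x ∈ K) : x ≤ sSup K :=
  le_csSup h.cpt.bddAbove hx
theorem sInf_le (h : Pc K) {x : ℝ} (hx : x ∈ K) : sInf K ≤ x :=
  csInf_le h.cpt.bddBelow hx

theorem sInf_lt_sSup (h : Pc K) : sInf K < sSup K := by
  rcases lt_or_eq_of_le (h.sInf_le h.sSup_mem) with hlt | heq
  · exact hlt
  · exfalso
    obtain ⟨y, hyK, hyne, -⟩ := h.acc (sInf K) h.sInf_mem 1 one_pos
    have h1 : sInf K ≤ y := h.sInf_le hyK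
    have h2 : y ≤ sSup K := h.le_sSup hyK
    apply hyne
    rw [← heq] at h2
    linarith

theorem exists_cut (h : Pc K) : ∃ c : ℝ, c ∉ K ∧ sInf K < c ∧ c < sSup K ∧
    c - sInf K ≤ 5/8 * (sSup K - sInf K) ∧ sSup K - c ≤ 5/8 * (sSup K - sInf K) := by
  set a := sInf K
  set b := sSup K
  have hab : a < b := h.sInf_lt_sSup
  have hI : a + 3/8*(b-a) < a + 5/8*(b-a) := by linarith
  obtain ⟨c, hcI, hcK⟩ := not_subset.1 (h.noi _ _ hI)
  rcases hcI with ⟨hc1, hc2⟩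
  exact ⟨c, hcK, by linarith, by linarith, by linarith, by linarith⟩

end Pc

open Classical in
/-- the chosen cut point of a piece -/
noncomputable def cut (K : Set ℝ) : ℝ :=
  if h : Pc K then h.exists_cut.choose else 0

theorem cut_spec {K : Set ℝ} (h : Pc K) : cut K ∉ K ∧ sInf K < cut K ∧ cut K < sSup K ∧
    cut K - sInf K ≤ 5/8 * (sSup K - sInf K) ∧ sSup K - cut K ≤ 5/8 * (sSup K - sInf K) := by
  classical
  rw [cut]
  rw [dif_pos h]
  exact h.exists_cut.choose_spec

/-- splitting a piece into two halves -/
noncomputable def piece (K : Set ℝ) (i : Bool) : Set ℝ :=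
  if i then K ∩ Ici (cut K) else K ∩ Iic (cut K)

theorem piece_subset {K : Set ℝ} {i : Bool} : piece K i ⊆ K := by
  cases i <;> exact fun x hx => hx.1

theorem Pc.piece {K : Set ℝ} (h : Pc K) (i : Bool) : Pc (piece K i) := by
  obtain ⟨hcK, hc1, hc2, -, -⟩ := cut_spec h
  cases i
  · refine ⟨⟨sInf K, h.sInf_mem, le_of_lt hc1⟩,
      h.cpt.inter_right isClosed_Iic, ?_, ?_⟩
    · rintro x ⟨hxK, hxc⟩ ε hε
      have hxc' : x < cut K := lt_of_le_of_ne hxc (fun hx => hcK (hx ▸ hxK))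
      obtain ⟨y, hyK, hyne, hye⟩ := h.acc x hxK (min ε (cut K - x)) (by
        apply lt_min hε; linarith)
      refine ⟨y, ⟨hyK, ?_⟩, hyne, lt_of_lt_of_le hye (min_le_left _ _)⟩
      have := abs_lt.1 (lt_of_lt_of_le hye (min_le_right _ _))
      simp only [mem_Iic]; linarith [this.2]
    · exact fun a b hab hsub => h.noi a b hab (hsub.trans inter_subset_left)
  · refine ⟨⟨sSup K, h.sSup_mem, le_of_lt hc2⟩,
      h.cpt.inter_right isClosed_Ici, ?_, ?_⟩
    · rintro x ⟨hxK, hxc⟩ ε hε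
      have hxc' : cut K < x := lt_of_le_of_ne hxc (fun hx => hcK (hx ▸ hxK))
      obtain ⟨y, hyK, hyne, hye⟩ := h.acc x hxK (min ε (x - cut K)) (by
        apply lt_min hε; linarith)
      refine ⟨y, ⟨hyK, ?_⟩, hyne, lt_of_lt_of_le hye (min_le_left _ _)⟩
      have := abs_lt.1 (lt_of_lt_of_le hye (min_le_right _ _))
      simp only [mem_Ici]; linarith [this.1]
    · exact fun a b hab hsub => h.noi a b hab (hsub.trans inter_subset_left)

theorem piece_disjoint {K : Set ℝ} (h : Pc K) :
    Disjoint (piece K false) (piece K true) := by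
  obtain ⟨hcK, -, -, -, -⟩ := cut_spec h
  rw [Set.disjoint_left]
  simp only [piece, if_true, if_false]
  rintro x ⟨hxK, hx1⟩ ⟨-, hx2⟩
  simp only [mem_Iic] at hx1
  simp only [mem_Ici] at hx2
  have : x = cut K := le_antisymm hx1 hx2
  exact hcK (this ▸ hxK)

theorem piece_union {K : Set ℝ} : piece K false ∪ piece K true = K := by
  ext x
  simp only [piece, if_true, if_false, mem_union, mem_inter_iff, mem_Iic, mem_Ici]
  constructor
  · rintro (⟨h, -⟩ | ⟨h, -⟩) <;> exact h
  · intro hx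
    rcases le_total x (cut K) with hc | hc
    · exact Or.inl ⟨hx, hc⟩
    · exact Or.inr ⟨hx, hc⟩

theorem piece_diam {K : Set ℝ} (h : Pc K) (i : Bool) {D : ℝ}
    (hD : ∀ u ∈ K, ∀ v ∈ K, |u - v| ≤ D) {u v : ℝ}
    (hu : u ∈ piece K i) (hv : v ∈ piece K i) : |u - v| ≤ 5/8 * D := by
  obtain ⟨-, hc1, hc2, hc3, hc4⟩ := cut_spec h
  have hKD : sSup K - sInf K ≤ D := by
    have := hD _ h.sSup_mem _ h.sInf_mem
    rw [abs_le] at this; linarith [this.2]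
  cases i
  · simp only [piece, if_false] at hu hv
    have h1 := h.sInf_le hu.1
    have h2 := h.sInf_le hv.1
    have h3 := hu.2
    have h4 := hv.2
    simp only [mem_Iic] at h3 h4
    rw [abs_le]; constructor <;> linarith
  · simp only [piece, if_true] at hu hv
    have h1 := h.le_sSup hu.1
    have h2 := h.le_sSup hv.1
    have h3 := hu.2
    have h4 := hv.2
    simp only [mem_Ici] at h3 h4
    rw [abs_le]; constructor <;> linarith



/-! ### The scheme -/

variable (K : Set ℝ)

/-- nested pieces along a branch of the Cantor tree -/
noncomputable def C (x : ℕ → Bool) : ℕ → Set ℝ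
  | 0 => K
  | n + 1 => piece (C x n) (x n)

theorem C_succ (x : ℕ → Bool) (n : ℕ) : C K x (n + 1) = piece (C K x n) (x n) := rfl

theorem C_subset_succ (x : ℕ → Bool) (n : ℕ) : C K x (n + 1) ⊆ C K x n := piece_subset

theorem C_subset (x : ℕ → Bool) (n : ℕ) : C K x n ⊆ K := by
  induction n with
  | zero => exact subset_rfl
  | succ n ih => exact (C_subset_succ K x n).trans ih

theorem Pc.C {K : Set ℝ} (hK : Pc K) (x : ℕ → Bool) (n : ℕ) : Pc (C K x n) := by
  induction n with
  | zero => exact hK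
  | succ n ih => exact ih.piece (x n)

theorem C_eq_of_agree {x y : ℕ → Bool} {n : ℕ} (h : ∀ i < n, x i = y i) :
    C K x n = C K y n := by
  induction n with
  | zero => rfl
  | succ n ih =>
    rw [C_succ, C_succ, ih (fun i hi => h i (hi.trans n.lt_succ_self)),
      h n n.lt_succ_self]

theorem C_diam {K : Set ℝ} (hK : Pc K) (x : ℕ → Bool) (n : ℕ) :
    ∀ u ∈ C K x n, ∀ v ∈ C K x n, |u - v| ≤ (5/8 : ℝ)^n * (sSup K - sInf K) := by
  induction n with
  | zero =>
    intro u hu v hv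
    have h1 := hK.sInf_le hu
    have h2 := hK.le_sSup hu
    have h3 := hK.sInf_le hv
    have h4 := hK.le_sSup hv
    rw [pow_zero, one_mul, abs_le]
    constructor <;> linarith
  | succ n ih =>
    intro u hu v hv
    rw [C_succ] at hu hv
    have := piece_diam (hK.C x n) (x n) ih hu hv
    calc |u - v| ≤ 5/8 * ((5/8:ℝ)^n * (sSup K - sInf K)) := this
    _ = (5/8:ℝ)^(n+1) * (sSup K - sInf K) := by ring

theorem C_nonempty_iInter {K : Set ℝ} (hK : Pc K) (x : ℕ → Bool) :
    (⋂ n, C K x n).Nonempty :=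
  IsCompact.nonempty_iInter_of_sequence_nonempty_isCompact_isClosed _
    (C_subset_succ K x) (fun n => (hK.C x n).ne) hK.cpt
    (fun n => (hK.C x n).cpt.isClosed)

open Classical in
/-- the limit point along a branch -/
noncomputable def brl (x : ℕ → Bool) : ℝ :=
  if h : Pc K then (C_nonempty_iInter h x).choose else 0

theorem brl_mem {K : Set ℝ} (hK : Pc K) (x : ℕ → Bool) (n : ℕ) :
    brl K x ∈ C K x n := by
  classical
  rw [brl, dif_pos hK]
  exact mem_iInter.1 (C_nonempty_iInter hK x).choose_spec n

theorem brl_mem_base {K : Set ℝ} (hK : Pc K) (x : ℕ → Bool) : brl K x ∈ K :=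
  brl_mem hK x 0

theorem eq_brl_of_mem {K : Set ℝ} (hK : Pc K) {x : ℕ → Bool} {t : ℝ}
    (ht : ∀ n, t ∈ C K x n) : t = brl K x := by
  have hb : ∀ n : ℕ, |t - brl K x| ≤ (5/8:ℝ)^n * (sSup K - sInf K) :=
    fun n => C_diam hK x n t (ht n) _ (brl_mem hK x n)
  have hlim : Filter.Tendsto (fun n : ℕ => (5/8:ℝ)^n * (sSup K - sInf K))
      Filter.atTop (nhds (0 * (sSup K - sInf K))) :=
    (tendsto_pow_atTop_nhds_zero_of_lt_one (by norm_num) (by norm_num)).mul_const _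
  rw [zero_mul] at hlim
  have : |t - brl K x| ≤ 0 := ge_of_tendsto' hlim hb
  have := abs_nonneg (t - brl K x)
  have : |t - brl K x| = 0 := le_antisymm ‹|t - brl K x| ≤ 0› this
  rw [abs_eq_zero, sub_eq_zero] at this
  exact this

theorem brl_injective {K : Set ℝ} (hK : Pc K) : Function.Injective (brl K) := by
  intro x y hxy
  by_contra hne
  have hex : ∃ n, x n ≠ y n := by
    by_contra h
    push_neg at h
    exact hne (funext h)
  classical
  let n := Nat.find hex
  have hn : x n ≠ y n := Nat.find_spec hex
  have hagree : ∀ i < n, x i = y i := fun i hi => by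
    by_contra hc
    exact absurd (Nat.find_le hc : n ≤ i) (not_le.2 hi)
  have hCeq : C K x n = C K y n := C_eq_of_agree K hagree
  have hx1 : brl K x ∈ piece (C K x n) (x n) := brl_mem hK x (n+1)
  have hy1 : brl K y ∈ piece (C K x n) (y n) := by
    rw [hCeq]; exact brl_mem hK y (n+1)
  have hdisj := piece_disjoint (hK.C x n)
  rw [hxy] at hx1
  cases hxn : x n <;> cases hyn : y n
  · exact hn (hxn.trans hyn.symm)
  · rw [hxn] at hx1; rw [hyn] at hy1
    exact hdisj.ne_of_mem hx1 hy1 rfl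
  · rw [hxn] at hx1; rw [hyn] at hy1
    exact hdisj.ne_of_mem hy1 hx1 rfl
  · exact hn (hxn.trans hyn.symm)

/-! surjectivity -/

/-- list-based version of the scheme -/
noncomputable def Tl : List Bool → Set ℝ
  | [] => K
  | b :: l => piece (Tl l) b

open Classical in
/-- branch selector -/
noncomputable def br (P : Set ℝ) (t : ℝ) : Bool :=
  if t ≤ cut P then false else true

theorem mem_piece_br {P : Set ℝ} {t : ℝ} (ht : t ∈ P) : t ∈ piece P (br P t) := by
  classical
  rw [br]
  split_ifs with h
  · exact ⟨ht, h⟩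
  · exact ⟨ht, le_of_lt (not_le.1 h)⟩

/-- iterated branch lists for a point -/
noncomputable def Lb (t : ℝ) : ℕ → List Bool
  | 0 => []
  | n + 1 => br (Tl K (Lb t n)) t :: Lb t n

theorem mem_Tl_Lb {K : Set ℝ} {t : ℝ} (ht : t ∈ K) (n : ℕ) : t ∈ Tl K (Lb K t n) := by
  induction n with
  | zero => exact ht
  | succ n ih => exact mem_piece_br ih

/-- list of the first `n` digits, most recent first -/
def listOf (x : ℕ → Bool) : ℕ → List Bool
  | 0 => []
  | n + 1 => x n :: listOf x n

theorem C_eq_Tl (x : ℕ → Bool) (n : ℕ) : C K x n = Tl K (listOf x n) := by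
  induction n with
  | zero => rfl
  | succ n ih => rw [C_succ, ih]; rfl

theorem brl_surjOn {K : Set ℝ} (hK : Pc K) {t : ℝ} (ht : t ∈ K) :
    ∃ x : ℕ → Bool, brl K x = t := by
  set x : ℕ → Bool := fun i => (Lb K t (i+1)).headI with hx
  have hlist : ∀ n, listOf x n = Lb K t n := by
    intro n
    induction n with
    | zero => rfl
    | succ n ih =>
      show x n :: listOf x n = Lb K t (n+1)
      rw [ih, hx]
      rfl
  refine ⟨x, (eq_brl_of_mem hK (fun n => ?_)).symm⟩
  rw [C_eq_Tl, hlist]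
  exact mem_Tl_Lb ht n

/-! continuity and the homeomorphism -/

theorem brl_continuous {K : Set ℝ} (hK : Pc K) : Continuous (brl K) := by
  rw [continuous_iff_continuousAt]
  intro x
  rw [ContinuousAt, Metric.tendsto_nhds]
  intro ε hε
  have hlim : Filter.Tendsto (fun n : ℕ => (5/8:ℝ)^n * (sSup K - sInf K))
      Filter.atTop (nhds 0) := by
    have := (tendsto_pow_atTop_nhds_zero_of_lt_one
      (by norm_num : (0:ℝ) ≤ 5/8) (by norm_num)).mul_const (sSup K - sInf K)
    rwa [zero_mul] at this
  obtain ⟨n, hn⟩ := (hlim.eventually (eventually_lt_nhds hε)).exists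
  have hV : {y : ℕ → Bool | ∀ i < n, y i = x i} ∈ nhds x := by
    have : {y : ℕ → Bool | ∀ i < n, y i = x i} =
        ⋂ i ∈ Finset.range n, {y : ℕ → Bool | y i = x i} := by
      ext y; simp [Finset.mem_range]
    rw [this]
    refine (Filter.biInter_finset_mem _).2 (fun i _ => ?_)
    have : IsOpen {y : ℕ → Bool | y i = x i} := by
      have : {y : ℕ → Bool | y i = x i} = (fun y : ℕ → Bool => y i) ⁻¹' {x i} := by
        ext y; simp
      rw [this]
      exact (isOpen_discrete {x i}).preimage (continuous_apply i)
    exact this.mem_nhds rfl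
  refine Filter.eventually_of_mem hV (fun y hy => ?_)
  have hCeq : C K y n = C K x n := C_eq_of_agree K hy
  have h1 : brl K y ∈ C K x n := hCeq ▸ brl_mem hK y n
  have h2 : brl K x ∈ C K x n := brl_mem hK x n
  calc dist (brl K y) (brl K x) = |brl K y - brl K x| := Real.dist_eq _ _
  _ ≤ (5/8:ℝ)^n * (sSup K - sInf K) := C_diam hK x n _ h1 _ h2
  _ < ε := hn

/-- Brouwer-type theorem for subsets of ℝ -/
theorem cantor_homeo {K : Set ℝ} (hK : Pc K) : Nonempty (↥K ≃ₜ (ℕ → Bool)) := by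
  have hbij : Function.Bijective (fun x : ℕ → Bool => (⟨brl K x, brl_mem_base hK x⟩ : ↥K)) := by
    constructor
    · intro x y hxy
      exact brl_injective hK (congrArg Subtype.val hxy)
    · rintro ⟨t, ht⟩
      obtain ⟨x, hx⟩ := brl_surjOn hK ht
      exact ⟨x, Subtype.ext hx⟩
  have hcont : Continuous (fun x : ℕ → Bool => (⟨brl K x, brl_mem_base hK x⟩ : ↥K)) :=
    (brl_continuous hK).subtype_mk _
  let e := Equiv.ofBijective _ hbij
  have : Continuous e := hcont
  exact ⟨(this.homeoOfEquivCompactToT2 (f := e)).symm⟩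



/-- distance set of (a representative of) a point of GH space -/
def D (p : GHSpace) : Set ℝ := {d : ℝ | ∃ x y : p.Rep, dist x y = d}

theorem D_eq_range (p : GHSpace) :
    D p = Set.range (fun z : p.Rep × p.Rep => dist z.1 z.2) := by
  ext d
  constructor
  · rintro ⟨x, y, h⟩; exact ⟨(x, y), h⟩
  · rintro ⟨⟨x, y⟩, h⟩; exact ⟨x, y, h⟩

theorem D_compact (p : GHSpace) : IsCompact (D p) := by
  rw [D_eq_range]
  exact isCompact_range (continuous_dist.comp
    (continuous_fst.prodMk continuous_snd))

theorem D_nonempty (p : GHSpace) : (D p).Nonempty := by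
  obtain ⟨x⟩ := (inferInstance : Nonempty p.Rep)
  exact ⟨0, x, x, dist_self x⟩

/-- distance set of an abstract compact metric space -/
def distSet (X : Type*) [MetricSpace X] : Set ℝ := {d : ℝ | ∃ x y : X, dist x y = d}

theorem D_toGHSpace (Y : Type*) [MetricSpace Y] [CompactSpace Y] [Nonempty Y] :
    D (toGHSpace Y) = distSet Y := by
  obtain ⟨e⟩ : Nonempty ((toGHSpace Y).Rep ≃ᵢ Y) :=
    toGHSpace_eq_toGHSpace_iff_isometryEquiv.1 (GHSpace.toGHSpace_rep (toGHSpace Y))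
  ext d
  constructor
  · rintro ⟨x, y, h⟩
    exact ⟨e x, e y, by rw [e.dist_eq, h]⟩
  · rintro ⟨x, y, h⟩
    exact ⟨e.symm x, e.symm y, by rw [e.symm.dist_eq, h]⟩

/-- transfer of distance values along close GH points -/
theorem D_approx {p q : GHSpace} {r : ℝ} (h : dist p q < r) :
    ∀ t ∈ D p, ∃ s ∈ D q, |t - s| < 2 * r := by
  rintro t ⟨x1, x2, rfl⟩
  let X := p.Rep
  let Y := q.Rep
  let Φ : X → OptimalGHCoupling X Y := optimalGHInjl X Y
  let Ψ : Y → OptimalGHCoupling X Y := optimalGHInjr X Y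
  have hiso1 : Isometry Φ := isometry_optimalGHInjl X Y
  have hiso2 : Isometry Ψ := isometry_optimalGHInjr X Y
  have hH : hausdorffDist (Set.range Φ) (Set.range Ψ) < r := by
    rw [hausdorffDist_optimal]
    rwa [dist_ghDist] at h
  have hfin : EMetric.hausdorffEdist (Set.range Φ) (Set.range Ψ) ≠ ⊤ :=
    hausdorffEdist_ne_top_of_nonempty_of_bounded (Set.range_nonempty _)
      (Set.range_nonempty _) (isCompact_range hiso1.continuous).isBounded
      (isCompact_range hiso2.continuous).isBounded
  obtain ⟨b1, ⟨y1, rfl⟩, hb1⟩ :=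
    exists_dist_lt_of_hausdorffDist_lt (Set.mem_range_self x1) hH hfin
  obtain ⟨b2, ⟨y2, rfl⟩, hb2⟩ :=
    exists_dist_lt_of_hausdorffDist_lt (Set.mem_range_self x2) hH hfin
  refine ⟨dist y1 y2, ⟨y1, y2, rfl⟩, ?_⟩
  have h1 : dist x1 x2 = dist (Φ x1) (Φ x2) := (hiso1.dist_eq _ _).symm
  have h2 : dist y1 y2 = dist (Ψ y1) (Ψ y2) := (hiso2.dist_eq _ _).symm
  have := dist_dist_dist_le (Φ x1) (Φ x2) (Ψ y1) (Ψ y2)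
  rw [Real.dist_eq] at this
  rw [h1, h2]
  calc |dist (Φ x1) (Φ x2) - dist (Ψ y1) (Ψ y2)| ≤ dist (Φ x1) (Ψ y1) + dist (Φ x2) (Ψ y2) := this
  _ < 2 * r := by linarith

/-- finite approximations in GH space -/
theorem exists_finite_close (p : GHSpace) {ε : ℝ} (hε : 0 < ε) :
    ∃ q : GHSpace, dist p q < ε ∧ (D q).Finite := by
  obtain ⟨t, -, htfin, htcov⟩ :=
    finite_cover_balls_of_compact (X := p.Rep) isCompact_univ (half_pos hε)
  have htne : t.Nonempty := by
    obtain ⟨x⟩ := (inferInstance : Nonempty p.Rep)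
    obtain ⟨y, hy, -⟩ := mem_iUnion₂.1 (htcov (mem_univ x))
    exact ⟨y, hy⟩
  haveI : Nonempty ↥t := htne.to_subtype
  haveI : Fintype ↥t := htfin.fintype
  haveI : CompactSpace ↥t := Finite.compactSpace
  refine ⟨toGHSpace ↥t, ?_, ?_⟩
  · obtain ⟨e⟩ : Nonempty ((toGHSpace ↥t).Rep ≃ᵢ ↥t) :=
      toGHSpace_eq_toGHSpace_iff_isometryEquiv.1 (GHSpace.toGHSpace_rep (toGHSpace ↥t))
    have hd : dist p (toGHSpace ↥t) = ghDist p.Rep ((toGHSpace ↥t).Rep) :=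
      dist_ghDist p (toGHSpace ↥t)
    have hle : ghDist p.Rep ((toGHSpace ↥t).Rep) ≤
        hausdorffDist (Set.range (id : p.Rep → p.Rep))
          (Set.range (((↑) : ↥t → p.Rep) ∘ e)) :=
      ghDist_le_hausdorffDist isometry_id (isometry_subtype_coe.comp e.isometry)
    have hrange1 : Set.range (id : p.Rep → p.Rep) = univ := Set.range_id
    have hrange2 : Set.range (((↑) : ↥t → p.Rep) ∘ e) = t := by
      rw [Set.range_comp, e.surjective.range_eq, image_univ, Subtype.range_coe]
    rw [hrange1, hrange2] at hle
    rw [hd]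
    have hHD : hausdorffDist (univ : Set p.Rep) t ≤ ε/2 := by
      apply hausdorffDist_le_of_mem_dist (le_of_lt (half_pos hε))
      · intro x _
        obtain ⟨y, hy, hxy⟩ := mem_iUnion₂.1 (htcov (mem_univ x))
        exact ⟨y, hy, le_of_lt (mem_ball.1 hxy)⟩
      · intro y hy
        refine ⟨y, mem_univ y, by rw [dist_self]; positivity⟩
    linarith
  · rw [D_toGHSpace]
    have : distSet ↥t = Set.range (fun z : ↥t × ↥t => dist z.1 z.2) := by
      ext d
      constructor
      · rintro ⟨x, y, h⟩; exact ⟨(x, y), h⟩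
      · rintro ⟨⟨x, y⟩, h⟩; exact ⟨x, y, h⟩
    rw [this]
    exact Set.finite_range _

/-! ### The open families -/

/-- approximate total-disconnectedness condition -/
def A (n k : ℕ) : Set GHSpace :=
  {p | ∀ t ∈ D p, ∃ c : ℝ, t ≤ c ∧ c ≤ t + 1/((n:ℝ)+1) ∧ ∀ s ∈ D p, 1/((k:ℝ)+1) < |c - s|}

/-- approximate perfectness condition -/
def B (n k : ℕ) : Set GHSpace :=
  {p | ∀ t ∈ D p, ∃ s ∈ D p, 1/((k:ℝ)+1) < |s - t| ∧ |s - t| < 1/((n:ℝ)+1) - 1/((k:ℝ)+1)}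

theorem A_ball {n k : ℕ} {p q : GHSpace} (hp : p ∈ A n k)
    (hq : dist q p < 1/(8*((k:ℝ)+1))) : q ∈ A n (2*k+2) := by
  intro t' ht'
  obtain ⟨t, ht, htt'⟩ := D_approx hq t' ht'
  obtain ⟨c, hc1, hc2, hc3⟩ := hp t ht
  refine ⟨c + (t' - t), by linarith, by linarith, ?_⟩
  intro s' hs'
  obtain ⟨s, hs, hss'⟩ := D_approx hq s' hs'
  have hgap := hc3 s hs
  have hnum : (1:ℝ)/((2*k+2:ℕ)+1) < 1/((k:ℝ)+1) - 4*(1/(8*((k:ℝ)+1))) := by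
    push_cast
    rw [show (1:ℝ)/((k:ℝ)+1) - 4*(1/(8*((k:ℝ)+1))) = 1/(2*((k:ℝ)+1)) by field_simp; ring]
    apply one_div_lt_one_div_of_lt
    · positivity
    · push_cast; linarith
  rw [abs_lt] at htt' hss'
  rcases lt_abs.1 hgap with hcase | hcase
  · exact lt_abs.2 (Or.inl (by linarith))
  · exact lt_abs.2 (Or.inr (by linarith))

theorem B_ball {n k : ℕ} {p q : GHSpace} (hp : p ∈ B n k)
    (hq : dist q p < 1/(16*((k:ℝ)+1))) : q ∈ B n (2*k+2) := by
  intro t' ht'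
  obtain ⟨t, ht, htt'⟩ := D_approx hq t' ht'
  obtain ⟨s, hs, hgap1, hgap2⟩ := hp t ht
  have hqp : dist p q < 1/(16*((k:ℝ)+1)) := by rwa [dist_comm] at hq
  obtain ⟨s', hs', hss'⟩ := D_approx hqp s hs
  refine ⟨s', hs', ?_, ?_⟩
  · have hnum : (1:ℝ)/((2*k+2:ℕ)+1) < 1/((k:ℝ)+1) - 8*(1/(16*((k:ℝ)+1))) := by
      push_cast
      rw [show (1:ℝ)/((k:ℝ)+1) - 8*(1/(16*((k:ℝ)+1))) = 1/(2*((k:ℝ)+1)) by field_simp; ring]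
      apply one_div_lt_one_div_of_lt
      · positivity
      · push_cast; linarith
    rw [abs_lt] at htt' hss'
    rcases lt_abs.1 hgap1 with hcase | hcase
    · exact lt_abs.2 (Or.inl (by linarith))
    · exact lt_abs.2 (Or.inr (by linarith))
  · have hnum : (1:ℝ)/((k:ℝ)+1) - 8*(1/(16*((k:ℝ)+1))) > 1/((2*k+2:ℕ)+1) := by
      push_cast
      rw [show (1:ℝ)/((k:ℝ)+1) - 8*(1/(16*((k:ℝ)+1))) = 1/(2*((k:ℝ)+1)) by field_simp; ring]
      apply one_div_lt_one_div_of_lt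
      · positivity
      · push_cast; linarith
    rw [abs_lt] at htt' hss' ⊢
    rw [abs_lt] at hgap2
    constructor <;> linarith

theorem isOpen_U (n : ℕ) : IsOpen (⋃ k, A n k) := by
  rw [Metric.isOpen_iff]
  intro p hp
  obtain ⟨k, hk⟩ := mem_iUnion.1 hp
  refine ⟨1/(8*((k:ℝ)+1)), by positivity, fun q hq => ?_⟩
  exact mem_iUnion.2 ⟨2*k+2, A_ball hk (mem_ball.1 hq)⟩

theorem isOpen_V (n : ℕ) : IsOpen (⋃ k, B n k) := by
  rw [Metric.isOpen_iff]
  intro p hp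
  obtain ⟨k, hk⟩ := mem_iUnion.1 hp
  refine ⟨1/(16*((k:ℝ)+1)), by positivity, fun q hq => ?_⟩
  exact mem_iUnion.2 ⟨2*k+2, B_ball hk (mem_ball.1 hq)⟩

/-- a finite set of reals cannot block all points of an interval -/
theorem finset_gap (F : Finset ℝ) {l : ℝ} (hl : 0 < l) (t : ℝ) :
    ∃ c : ℝ, t ≤ c ∧ c ≤ t + l ∧ ∀ s ∈ F, l/(4*((F.card:ℝ)+1)) < |c - s| := by
  by_contra h
  push_neg at h
  set γ := l/(4*((F.card:ℝ)+1)) with hγ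
  have hγpos : 0 < γ := by positivity
  have hsub : Icc t (t + l) ⊆ ⋃ s ∈ F, closedBall s γ := by
    intro c hc
    obtain ⟨s, hsF, hsc⟩ := h c hc.1 hc.2
    exact mem_biUnion hsF (by rwa [mem_closedBall, Real.dist_eq])
  have hm1 : MeasureTheory.volume (Icc t (t + l)) = ENNReal.ofReal l := by
    rw [Real.volume_Icc]; congr 1; ring
  have hm2 : MeasureTheory.volume (⋃ s ∈ F, closedBall s γ) ≤
      (F.card : ℝ≥0∞) * ENNReal.ofReal (2*γ) := by
    calc MeasureTheory.volume (⋃ s ∈ F, closedBall s γ)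
        ≤ ∑ s ∈ F, MeasureTheory.volume (closedBall s γ) :=
          MeasureTheory.measure_biUnion_finset_le F _
    _ = ∑ _s ∈ F, ENNReal.ofReal (2*γ) := by
          apply Finset.sum_congr rfl
          intro s _
          rw [Real.volume_closedBall]
    _ = (F.card : ℝ≥0∞) * ENNReal.ofReal (2*γ) := by
          rw [Finset.sum_const, nsmul_eq_mul]
  have hle : ENNReal.ofReal l ≤ (F.card : ℝ≥0∞) * ENNReal.ofReal (2*γ) :=
    hm1 ▸ (le_trans (MeasureTheory.measure_mono hsub) hm2)
  rw [← ENNReal.ofReal_natCast, ← ENNReal.ofReal_mul (by positivity)] at hle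
  have hreal : l ≤ (F.card : ℝ) * (2*γ) :=
    (ENNReal.ofReal_le_ofReal_iff (by positivity)).1 hle
  have hcard : (0:ℝ) ≤ (F.card : ℝ) := Nat.cast_nonneg _
  have heq : (F.card:ℝ) * (2*γ) = (l*(F.card:ℝ))/(2*((F.card:ℝ)+1)) := by
    rw [hγ]; field_simp; ring
  rw [heq] at hreal
  rw [le_div_iff₀ (by positivity : (0:ℝ) < 2*((F.card:ℝ)+1))] at hreal
  nlinarith

theorem dense_U (n : ℕ) : Dense (⋃ k, A n k) := by
  rw [Metric.dense_iff]
  intro p ε hε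
  obtain ⟨q, hqd, hqfin⟩ := exists_finite_close p hε
  refine ⟨q, mem_ball'.2 hqd, ?_⟩
  set F := hqfin.toFinset with hF
  have hl : (0:ℝ) < 1/((n:ℝ)+1) := by positivity
  set γ := (1/((n:ℝ)+1))/(4*((F.card:ℝ)+1)) with hγ
  have hγpos : 0 < γ := by positivity
  obtain ⟨k, hk⟩ := exists_nat_one_div_lt hγpos
  refine mem_iUnion.2 ⟨k, ?_⟩
  intro t ht
  obtain ⟨c, hc1, hc2, hc3⟩ := finset_gap F hl t
  refine ⟨c, hc1, hc2, fun s hs => ?_⟩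
  have hsF : s ∈ F := hqfin.mem_toFinset.2 hs
  refine lt_trans ?_ (hc3 s hsF)
  push_cast at hk ⊢
  convert hk using 2

theorem exists_blow_close (p : GHSpace) {η : ℝ} (hη : 0 < η) :
    ∃ q : GHSpace, dist p q ≤ η ∧ (∀ t ∈ D q, ∃ s ∈ D q, |s - t| = η/2) := by
  haveI : Fact ((1:ℝ≥0∞) ≤ 1) := ⟨le_refl 1⟩
  set X := p.Rep
  set I := ↥(Icc (0:ℝ) η) with hI
  haveI : CompactSpace I := isCompact_iff_compactSpace.1 isCompact_Icc
  have mem0 : (0:ℝ) ∈ Icc (0:ℝ) η := ⟨le_refl 0, hη.le⟩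
  haveI : Nonempty I := ⟨⟨0, mem0⟩⟩
  set Z := WithLp 1 (X × I) with hZ
  have he : Z ≃ₜ (X × I) :=
    { toEquiv := WithLp.equiv 1 (X × I)
      continuous_toFun := WithLp.prod_continuous_ofLp 1 X I
      continuous_invFun := WithLp.prod_continuous_toLp 1 X I }
  haveI : CompactSpace Z := he.symm.compactSpace
  haveI : Nonempty Z := ⟨(WithLp.equiv 1 (X × I)).symm (Classical.arbitrary X, ⟨0, mem0⟩)⟩
  have hdist : ∀ u v : Z, dist u v = dist u.fst v.fst + dist u.snd v.snd := by
    intro u v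
    rw [WithLp.prod_dist_eq_add (by norm_num : 0 < (1:ℝ≥0∞).toReal)]
    simp [ENNReal.toReal_one]
  have hIdist : ∀ a b : I, dist a b = |(a:ℝ) - (b:ℝ)| := by
    intro a b
    rw [Subtype.dist_eq, Real.dist_eq]
  refine ⟨toGHSpace Z, ?_, ?_⟩
  · obtain ⟨e⟩ : Nonempty ((toGHSpace Z).Rep ≃ᵢ Z) :=
      toGHSpace_eq_toGHSpace_iff_isometryEquiv.1 (GHSpace.toGHSpace_rep (toGHSpace Z))
    have hd : dist p (toGHSpace Z) = ghDist p.Rep ((toGHSpace Z).Rep) :=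
      dist_ghDist p (toGHSpace Z)
    set Φ : X → Z := fun x => (WithLp.equiv 1 (X × I)).symm (x, ⟨0, mem0⟩) with hΦdef
    have hΦ : Isometry Φ := by
      apply Isometry.of_dist_eq
      intro x y
      rw [hdist]
      simp only [hΦdef, WithLp.equiv_symm_apply, WithLp.toLp_fst, WithLp.toLp_snd]
      rw [dist_self]
      ring
    have hle : ghDist p.Rep ((toGHSpace Z).Rep) ≤
        hausdorffDist (Set.range Φ) (Set.range (e : (toGHSpace Z).Rep → Z)) :=
      ghDist_le_hausdorffDist hΦ e.isometry
    have hrange : Set.range (e : (toGHSpace Z).Rep → Z) = univ := e.surjective.range_eq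
    rw [hrange] at hle
    rw [hd]
    have hHD : hausdorffDist (Set.range Φ) (univ : Set Z) ≤ η := by
      apply hausdorffDist_le_of_mem_dist hη.le
      · intro a _
        exact ⟨a, mem_univ a, by rw [dist_self]; exact hη.le⟩
      · intro b _
        refine ⟨Φ b.fst, Set.mem_range_self _, ?_⟩
        rw [hdist]
        simp only [hΦdef, WithLp.equiv_symm_apply, WithLp.toLp_fst, WithLp.toLp_snd]
        rw [dist_self, hIdist]
        have h1 := b.snd.2.1
        have h2 := b.snd.2.2
        rw [abs_of_nonneg (by simpa using h1)]
        simpa using h2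
    linarith
  · rw [D_toGHSpace]
    rintro t ⟨u, v, rfl⟩
    set r := dist u.snd v.snd with hr
    have hr0 : 0 ≤ r := dist_nonneg
    have hrη : r ≤ η := by
      rw [hr, hIdist]
      have h1 := u.snd.2.1
      have h2 := u.snd.2.2
      have h3 := v.snd.2.1
      have h4 := v.snd.2.2
      rw [abs_le]
      constructor <;> linarith
    rcases le_or_gt r (η/2) with hc | hc
    · refine ⟨dist ((WithLp.equiv 1 (X × I)).symm (u.fst, ⟨0, mem0⟩))
        ((WithLp.equiv 1 (X × I)).symm (v.fst, ⟨r + η/2, ⟨by positivity, by linarith⟩⟩)),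
        ⟨_, _, rfl⟩, ?_⟩
      rw [hdist, hdist]
      simp only [WithLp.equiv_symm_apply, WithLp.toLp_fst, WithLp.toLp_snd]
      rw [hIdist]
      simp only []
      rw [show |(0:ℝ) - (r + η/2)| = r + η/2 by rw [abs_of_nonpos (by linarith)]; ring]
      rw [← hr]
      rw [show dist u.fst v.fst + (r + η/2) - (dist u.fst v.fst + r) = η/2 by ring]
      rw [abs_of_nonneg (by linarith)]
    · refine ⟨dist ((WithLp.equiv 1 (X × I)).symm (u.fst, ⟨0, mem0⟩))
        ((WithLp.equiv 1 (X × I)).symm (v.fst, ⟨r - η/2, ⟨by linarith, by linarith⟩⟩)),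
        ⟨_, _, rfl⟩, ?_⟩
      rw [hdist, hdist]
      simp only [WithLp.equiv_symm_apply, WithLp.toLp_fst, WithLp.toLp_snd]
      rw [hIdist]
      simp only []
      rw [show |(0:ℝ) - (r - η/2)| = r - η/2 by rw [abs_of_nonpos (by linarith)]; ring]
      rw [← hr]
      rw [show dist u.fst v.fst + (r - η/2) - (dist u.fst v.fst + r) = -(η/2) by ring]
      rw [abs_neg, abs_of_nonneg (by linarith)]

theorem dense_V (n : ℕ) : Dense (⋃ k, B n k) := by
  rw [Metric.dense_iff]
  intro p ε hε
  set η := min (ε/2) (1/((n:ℝ)+1)) with hη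
  have hηpos : 0 < η := lt_min (by positivity) (by positivity)
  obtain ⟨q, hqd, hqw⟩ := exists_blow_close p hηpos
  have hηn : η ≤ 1/((n:ℝ)+1) := min_le_right _ _
  have hgap : 0 < min (η/2) (1/((n:ℝ)+1) - η/2) := by
    apply lt_min (by positivity)
    have : 0 < 1/((n:ℝ)+1) := by positivity
    linarith
  obtain ⟨k, hk⟩ := exists_nat_one_div_lt hgap
  have hk' : 1/((k:ℝ)+1) < min (η/2) (1/((n:ℝ)+1) - η/2) := by
    push_cast at hk ⊢
    convert hk using 2
  rw [lt_min_iff] at hk'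
  refine ⟨q, mem_ball'.2 (lt_of_le_of_lt hqd ?_), mem_iUnion.2 ⟨k, ?_⟩⟩
  · calc η ≤ ε/2 := min_le_left _ _
    _ < ε := by linarith
  · intro t ht
    obtain ⟨s, hs, hseq⟩ := hqw t ht
    exact ⟨s, hs, by rw [hseq]; exact hk'.1, by rw [hseq]; linarith [hk'.2]⟩


end CantorDistProof

open CantorDistProof in
/-- For a generic compact metric space `X`, the set of distance values
`{d(x,y) | x, y ∈ X} ⊆ ℝ` is homeomorphic to the Cantor set (here represented by the
Cantor space `ℕ → Bool`). -/
theorem residual_distanceValues_cantor :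
    {p : GHSpace |
      Nonempty (({d : ℝ | ∃ x y : p.Rep, dist x y = d} : Set ℝ) ≃ₜ (ℕ → Bool))} ∈
      residual GHSpace := by
  have key : (⋂ n : ℕ, ((⋃ k, A n k) ∩ (⋃ k, B n k))) ⊆
      {p : GHSpace |
        Nonempty (({d : ℝ | ∃ x y : p.Rep, dist x y = d} : Set ℝ) ≃ₜ (ℕ → Bool))} := by
    intro p hp
    simp only [Set.mem_iInter, Set.mem_inter_iff] at hp
    have hPc : Pc (D p) := by
      refine ⟨D_nonempty p, D_compact p, ?_, ?_⟩
      · intro x hx ε hε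
        obtain ⟨n, hn⟩ := exists_nat_one_div_lt hε
        have hn' : 1/((n:ℝ)+1) < ε := by
          push_cast at hn ⊢
          convert hn using 2
        obtain ⟨k, hB⟩ := Set.mem_iUnion.1 (hp n).2
        obtain ⟨s, hs, h1, h2⟩ := hB x hx
        have hkpos : (0:ℝ) < 1/((k:ℝ)+1) := by positivity
        refine ⟨s, hs, ?_, ?_⟩
        · intro hsx
          rw [hsx, sub_self, abs_zero] at h1
          linarith
        · have hnpos : (0:ℝ) < 1/((n:ℝ)+1) := by positivity
          linarith
      · intro a b hab hsub
        obtain ⟨n, hn⟩ := exists_nat_one_div_lt (sub_pos.2 hab)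
        have hn' : 1/((n:ℝ)+1) < b - a := by
          push_cast at hn ⊢
          convert hn using 2
        obtain ⟨k, hA⟩ := Set.mem_iUnion.1 (hp n).1
        have ha : a ∈ D p := hsub ⟨le_refl a, hab.le⟩
        obtain ⟨c, hc1, hc2, hc3⟩ := hA a ha
        have hcK : c ∈ D p := hsub ⟨hc1, by linarith⟩
        have := hc3 c hcK
        rw [sub_self, abs_zero] at this
        have hkpos : (0:ℝ) < 1/((k:ℝ)+1) := by positivity
        linarith
    exact cantor_homeo hPc
  refine Filter.mem_of_superset ?_ key
  rw [countable_iInter_mem]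
  intro n
  exact Filter.inter_mem
    (residual_of_dense_open (isOpen_U n) (dense_U n))
    (residual_of_dense_open (isOpen_V n) (dense_V n))
end

section
/- For each a ≥ 0 and ε > 0, the set of compact metric spaces X whose set of distance values contains the whole interval [a, a+ε] is closed in the Gromov-Hausdorff space and has empty interior. -/
open GromovHausdorff Metric Set

/-- Distance values transfer approximately along the Gromov–Hausdorff distance. -/
lemma GH_dist_value_approx (p q : GHSpace) {t δ : ℝ}
    (ht : ∃ x y : q.Rep, dist x y = t) (hδ : dist p q < δ) :
    ∃ s : ℝ, (∃ x y : p.Rep, dist x y = s) ∧ |s - t| ≤ 2 * δ := by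
  obtain ⟨x, y, hxy⟩ := ht
  let X := p.Rep
  let Y := q.Rep
  have hd : hausdorffDist (range (optimalGHInjl X Y)) (range (optimalGHInjr X Y)) < δ := by
    rw [hausdorffDist_optimal, ← dist_ghDist]; exact hδ
  have hne : EMetric.hausdorffEdist (range (optimalGHInjl X Y)) (range (optimalGHInjr X Y)) ≠ ⊤ :=
    hausdorffEdist_ne_top_of_nonempty_of_bounded (range_nonempty _) (range_nonempty _)
      (isCompact_range (isometry_optimalGHInjl X Y).continuous).isBounded
      (isCompact_range (isometry_optimalGHInjr X Y).continuous).isBounded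
  obtain ⟨x', hx'mem, hx'⟩ :=
    exists_dist_lt_of_hausdorffDist_lt' (mem_range_self (f := optimalGHInjr X Y) x) hd hne
  obtain ⟨y', hy'mem, hy'⟩ :=
    exists_dist_lt_of_hausdorffDist_lt' (mem_range_self (f := optimalGHInjr X Y) y) hd hne
  obtain ⟨x₀, rfl⟩ := hx'mem
  obtain ⟨y₀, rfl⟩ := hy'mem
  refine ⟨dist x₀ y₀, ⟨x₀, y₀, rfl⟩, ?_⟩
  have h1 : dist x₀ y₀ = dist (optimalGHInjl X Y x₀) (optimalGHInjl X Y y₀) :=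
    ((isometry_optimalGHInjl X Y).dist_eq _ _).symm
  have h2 : t = dist (optimalGHInjr X Y x) (optimalGHInjr X Y y) := by
    rw [(isometry_optimalGHInjr X Y).dist_eq, hxy]
  have key := dist_dist_dist_le (optimalGHInjl X Y x₀) (optimalGHInjl X Y y₀)
    (optimalGHInjr X Y x) (optimalGHInjr X Y y)
  rw [Real.dist_eq] at key
  rw [h1, h2]
  have hx'' : dist (optimalGHInjl X Y x₀) (optimalGHInjr X Y x) < δ := by
    exact hx'
  have hy'' : dist (optimalGHInjl X Y y₀) (optimalGHInjr X Y y) < δ := by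
    exact hy'
  nlinarith [key]

/-- For each `a ≥ 0` and `ε > 0`, the set of compact metric spaces whose set of distance
values contains the whole interval `[a, a+ε]` is closed with empty interior in the
Gromov-Hausdorff space. -/
theorem isClosed_interior_empty_interval_distances (a ε : ℝ) (ha : 0 ≤ a) (hε : 0 < ε) :
    IsClosed {p : GHSpace | Set.Icc a (a + ε) ⊆ {d : ℝ | ∃ x y : p.Rep, dist x y = d}} ∧
    interior {p : GHSpace | Set.Icc a (a + ε) ⊆ {d : ℝ | ∃ x y : p.Rep, dist x y = d}} = ∅ := by
  set S := {p : GHSpace | Set.Icc a (a + ε) ⊆ {d : ℝ | ∃ x y : p.Rep, dist x y = d}} with hS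
  constructor
  · -- closedness
    refine isClosed_of_closure_subset ?_
    intro p hp t htt
    have hrange : {d : ℝ | ∃ x y : p.Rep, dist x y = d}
        = range (fun z : p.Rep × p.Rep => dist z.1 z.2) := by
      ext d
      simp [Prod.exists]
    have Kc : IsCompact {d : ℝ | ∃ x y : p.Rep, dist x y = d} := by
      rw [hrange]
      exact isCompact_range (continuous_fst.dist continuous_snd)
    have Kne : {d : ℝ | ∃ x y : p.Rep, dist x y = d}.Nonempty := by
      obtain ⟨x⟩ := (inferInstance : Nonempty p.Rep)
      exact ⟨dist x x, x, x, rfl⟩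
    -- show infDist t K = 0
    have hzero : infDist t {d : ℝ | ∃ x y : p.Rep, dist x y = d} = 0 := by
      by_contra h
      have hpos : 0 < infDist t {d : ℝ | ∃ x y : p.Rep, dist x y = d} :=
        lt_of_le_of_ne infDist_nonneg (Ne.symm h)
      obtain ⟨q, hqS, hq⟩ := Metric.mem_closure_iff.1 hp
        (infDist t {d : ℝ | ∃ x y : p.Rep, dist x y = d} / 4) (by linarith)
      obtain ⟨s, hs, hst⟩ := GH_dist_value_approx p q (hqS htt) hq
      have : infDist t {d : ℝ | ∃ x y : p.Rep, dist x y = d} ≤ dist t s := infDist_le_dist_of_mem hs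
      rw [Real.dist_eq, abs_sub_comm] at this
      linarith
    exact (Kc.isClosed.mem_iff_infDist_zero Kne).2 hzero
  · -- empty interior
    rw [eq_empty_iff_forall_notMem]
    intro p hp
    obtain ⟨δ, δpos, hball⟩ := Metric.isOpen_iff.1 isOpen_interior p hp
    -- finite (δ/3)-net of p.Rep
    obtain ⟨s, hsfin, hscov⟩ := (Metric.totallyBounded_iff.1
      (isCompact_univ (X := p.Rep)).totallyBounded) (δ/3) (by linarith)
    haveI : Finite ↥s := hsfin.to_subtype
    have hsne : s.Nonempty := by
      obtain ⟨x⟩ := (inferInstance : Nonempty p.Rep)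
      have := hscov (mem_univ x)
      simp only [mem_iUnion] at this
      obtain ⟨y, hy, _⟩ := this
      exact ⟨y, hy⟩
    haveI : Nonempty ↥s := hsne.to_subtype
    set q := toGHSpace ↥s with hq
    have hdistq : dist p q ≤ δ/3 := by
      have h1 : ghDist p.Rep ↥s = dist p q := by
        rw [hq, ghDist, p.toGHSpace_rep]
      rw [← h1]
      have h2 : ghDist p.Rep ↥s ≤ hausdorffDist (range (id : p.Rep → p.Rep))
          (range (Subtype.val : ↥s → p.Rep)) :=
        ghDist_le_hausdorffDist isometry_id isometry_subtype_coe
      rw [range_id, Subtype.range_coe] at h2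
      refine h2.trans (hausdorffDist_le_of_mem_dist (by linarith) ?_ ?_)
      · intro x _
        have := hscov (mem_univ x)
        simp only [mem_iUnion] at this
        obtain ⟨y, hy, hxy⟩ := this
        exact ⟨y, hy, (mem_ball.1 hxy).le⟩
      · intro y hy
        exact ⟨y, mem_univ y, by simp; positivity⟩
    have hqmem : q ∈ S := interior_subset (hball (by
      rw [mem_ball, dist_comm]
      linarith))
    -- but q has a finite distance set
    have hiso : Nonempty (q.Rep ≃ᵢ ↥s) := by
      refine toGHSpace_eq_toGHSpace_iff_isometryEquiv.1 ?_
      rw [q.toGHSpace_rep]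
    obtain ⟨e⟩ := hiso
    have hfin : {d : ℝ | ∃ x y : q.Rep, dist x y = d}.Finite := by
      have hsub : {d : ℝ | ∃ x y : q.Rep, dist x y = d}
          ⊆ (fun z : ↥s × ↥s => dist z.1 z.2) '' univ := by
        rintro d ⟨x, y, rfl⟩
        exact ⟨(e x, e y), mem_univ _, by simp [e.dist_eq]⟩
      exact (Set.finite_univ.image _).subset hsub
    have hinf : (Set.Icc a (a + ε)).Infinite := Set.Icc_infinite (by linarith)
    exact hinf (hfin.subset hqmem)
end
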